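/- arXiv:1608.04182 — 8 statements merged into one kernel-verified Lean document; each statement's English description precedes it below -/
import Mathlib

section
/- Let p be a prime, e > 0 an integer with p ∤ e, and g > 0 a multiple of the multiplicative order of p modulo e. Let n be a multiple of lcm(p-1, e), write n = d·e. Define b(i) = i + ⌊(i-1)/(p-1)⌋. Then the map from [1,n] × ℤ/gℤ to ℤ/eℤ sending (i, j) to b(i)·p^j mod e is surjective, and every fibre has exactly d·g elements. -/
open Finset

lemma one_period {e : ℕ} (he : 0 < e) (t : ℕ) (c : ZMod e) :
    ((Finset.Ioc t (t + e)).filter (fun m : ℕ => ((m : ℕ) : ZMod e) = c)).card = 1 := by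
  haveI : NeZero e := ⟨he.ne'⟩
  rw [Finset.card_eq_one]
  refine ⟨t + 1 + (c - ((t + 1 : ℕ) : ZMod e)).val, ?_⟩
  have hval : (c - ((t + 1 : ℕ) : ZMod e)).val < e := ZMod.val_lt _
  have hcast : ((t + 1 + (c - ((t + 1 : ℕ) : ZMod e)).val : ℕ) : ZMod e) = c := by
    push_cast [ZMod.natCast_val, ZMod.cast_id]
    ring
  ext m
  simp only [Finset.mem_filter, Finset.mem_Ioc, Finset.mem_singleton]
  constructor
  · rintro ⟨⟨h1, h2⟩, h3⟩
    have heq : (m : ZMod e) = ((t + 1 + (c - ((t+1:ℕ):ZMod e)).val : ℕ) : ZMod e) := by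
      rw [h3, hcast]
    have hmod := (ZMod.natCast_eq_natCast_iff _ _ _).mp heq
    rcases le_total m (t + 1 + (c - ((t+1:ℕ):ZMod e)).val) with h | h
    · have hdvd := (Nat.modEq_iff_dvd' h).mp hmod
      have := Nat.eq_zero_of_dvd_of_lt hdvd (by omega)
      omega
    · have hdvd := (Nat.modEq_iff_dvd' h).mp hmod.symm
      have := Nat.eq_zero_of_dvd_of_lt hdvd (by omega)
      omega
  · rintro rfl
    exact ⟨⟨by omega, by omega⟩, hcast⟩

lemma multi_period {e : ℕ} (he : 0 < e) (d : ℕ) (t : ℕ) (c : ZMod e) :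
    ((Finset.Ioc t (t + d * e)).filter (fun m : ℕ => ((m : ℕ) : ZMod e) = c)).card = d := by
  induction d with
  | zero => simp
  | succ k ih =>
    have h1 : t + (k + 1) * e = (t + k * e) + e := by ring
    rw [h1, ← Finset.Ioc_union_Ioc_eq_Ioc (by omega : t ≤ t + k * e)
        (by omega : t + k * e ≤ t + k * e + e), Finset.filter_union,
      Finset.card_union_of_disjoint
        (Finset.disjoint_filter_filter (by simp only [Finset.disjoint_left, Finset.mem_Ioc]; omega)),
      ih, one_period he]


lemma b_count (p : ℕ) (hp : 2 ≤ p) (u : ℕ) (P : ℕ → Prop) [DecidablePred P] :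
    ((Finset.Icc 1 (u * (p - 1))).filter (fun i => P (i + (i - 1) / (p - 1)))).card
      = ((Finset.Ioc 0 (u * p)).filter (fun m => ¬ p ∣ m ∧ P m)).card := by
  have hpm : 0 < p - 1 := by omega
  refine Finset.card_bij' (fun i _ => i + (i - 1) / (p - 1)) (fun m _ => m - m / p)
    ?_ ?_ ?_ ?_
  · -- maps into target
    intro i hi
    simp only [Finset.mem_filter, Finset.mem_Icc] at hi
    obtain ⟨⟨hi1, hi2⟩, hP⟩ := hi
    set q := (i - 1) / (p - 1) with hq
    set r := (i - 1) % (p - 1) with hr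
    have hqr : (p - 1) * q + r = i - 1 := Nat.div_add_mod (i - 1) (p - 1)
    have hrlt : r < p - 1 := Nat.mod_lt _ hpm
    have hb : i + q = q * p + (r + 1) := by
      have h1 : q * (p - 1) + q = q * p := by
        rw [← Nat.mul_succ]; congr 1; omega
      have h2 : (p - 1) * q = q * (p - 1) := Nat.mul_comm _ _
      omega
    have hqu : q < u := by
      rw [hq]
      rw [Nat.div_lt_iff_lt_mul hpm]
      have : 1 ≤ u * (p - 1) := le_trans hi1 hi2
      calc i - 1 < i := by omega
        _ ≤ u * (p - 1) := hi2
    have hle : i + q ≤ u * p := by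
      rw [hb]
      calc q * p + (r + 1) ≤ q * p + p := by omega
        _ = (q + 1) * p := by ring
        _ ≤ u * p := Nat.mul_le_mul_right p hqu
    have hnd : ¬ p ∣ (i + q) := by
      rw [hb]
      intro hdvd
      have h1 : p ∣ q * p := dvd_mul_left p q
      have h2 : p ∣ r + 1 := (Nat.dvd_add_right h1).mp hdvd
      have := Nat.le_of_dvd (by omega) h2
      omega
    simp only [Finset.mem_filter, Finset.mem_Ioc]
    exact ⟨⟨by omega, hle⟩, hnd, hP⟩
  · -- reverse maps into source
    intro m hm
    simp only [Finset.mem_filter, Finset.mem_Ioc] at hm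
    obtain ⟨⟨hm1, hm2⟩, hnd, hP⟩ := hm
    set q := m / p with hq
    set s := m % p with hs
    have hqs : p * q + s = m := Nat.div_add_mod m p
    have hslt : s < p := Nat.mod_lt _ (by omega)
    have hs0 : s ≠ 0 := fun h => hnd (Nat.dvd_of_mod_eq_zero h)
    have hqu : q < u := by
      by_contra h
      push_neg at h
      have : p * u ≤ p * q := Nat.mul_le_mul_left p h
      have : u * p = p * u := Nat.mul_comm _ _
      omega
    have him : m - q = q * (p - 1) + s := by
      have h1 : q * (p - 1) + q = q * p := by
        rw [← Nat.mul_succ]; congr 1; omega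
      have h2 : p * q = q * p := Nat.mul_comm _ _
      omega
    have hd2 : (m - q - 1) / (p - 1) = q := by
      have h3 : m - q - 1 = q * (p - 1) + (s - 1) := by omega
      rw [h3, Nat.mul_comm, Nat.mul_add_div hpm, Nat.div_eq_of_lt (by omega)]
      omega
    simp only [Finset.mem_filter, Finset.mem_Icc]
    refine ⟨⟨by omega, ?_⟩, ?_⟩
    · rw [him]
      calc q * (p - 1) + s ≤ q * (p - 1) + (p - 1) := by omega
        _ = (q + 1) * (p - 1) := by ring
        _ ≤ u * (p - 1) := Nat.mul_le_mul_right _ hqu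
    · have : m - m / p + (m - m / p - 1) / (p - 1) = m := by rw [← hq, hd2]; omega
      rw [this]; exact hP
  · -- left inverse
    intro i hi
    simp only [Finset.mem_filter, Finset.mem_Icc] at hi
    obtain ⟨⟨hi1, hi2⟩, hP⟩ := hi
    set q := (i - 1) / (p - 1) with hq
    set r := (i - 1) % (p - 1) with hr
    have hqr : (p - 1) * q + r = i - 1 := Nat.div_add_mod (i - 1) (p - 1)
    have hrlt : r < p - 1 := Nat.mod_lt _ hpm
    have hb : i + q = q * p + (r + 1) := by
      have h1 : q * (p - 1) + q = q * p := by
        rw [← Nat.mul_succ]; congr 1; omega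
      have h2 : (p - 1) * q = q * (p - 1) := Nat.mul_comm _ _
      omega
    have hdiv : (i + q) / p = q := by
      rw [hb, Nat.mul_comm]
      rw [Nat.mul_add_div (by omega : 0 < p)]
      rw [Nat.div_eq_of_lt (by omega)]
      omega
    show i + (i - 1) / (p - 1) - (i + (i - 1) / (p - 1)) / p = i
    rw [← hq, hdiv]
    omega
  · -- right inverse
    intro m hm
    simp only [Finset.mem_filter, Finset.mem_Ioc] at hm
    obtain ⟨⟨hm1, hm2⟩, hnd, hP⟩ := hm
    set q := m / p with hq
    set s := m % p with hs
    have hqs : p * q + s = m := Nat.div_add_mod m p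
    have hslt : s < p := Nat.mod_lt _ (by omega)
    have hs0 : s ≠ 0 := fun h => hnd (Nat.dvd_of_mod_eq_zero h)
    have him : m - q = q * (p - 1) + s := by
      have h1 : q * (p - 1) + q = q * p := by
        rw [← Nat.mul_succ]; congr 1; omega
      have h2 : p * q = q * p := Nat.mul_comm _ _
      omega
    have hd2 : (m - q - 1) / (p - 1) = q := by
      have : m - q - 1 = q * (p - 1) + (s - 1) := by omega
      rw [this, Nat.mul_comm, Nat.mul_add_div hpm, Nat.div_eq_of_lt (by omega)]
      omega
    show m - m / p + (m - m / p - 1) / (p - 1) = m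
    rw [← hq, hd2]
    omega


/-- The map `[1,n] × ℤ/gℤ → ℤ/eℤ`, `(i,j) ↦ b(i)·p^j mod e`, is surjective and
every fibre has exactly `d·g` elements. -/
theorem stmt_1 (p e g n d : ℕ) (hp : p.Prime) (he : 0 < e) (hpe : ¬ p ∣ e)
    (hg : 0 < g) (hpg : p ^ g ≡ 1 [MOD e])
    (hn : 0 < n) (hn1 : (p - 1) ∣ n) (hnd : n = d * e) :
    (∀ x : ZMod e, ∃ i ∈ Finset.Icc 1 n, ∃ j ∈ Finset.range g,
        ((i + (i - 1) / (p - 1) : ℕ) : ZMod e) * (p : ZMod e) ^ j = x) ∧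
    ∀ x : ZMod e,
      ((Finset.Icc 1 n ×ˢ Finset.range g).filter
        (fun ij => ((ij.1 + (ij.1 - 1) / (p - 1) : ℕ) : ZMod e) * (p : ZMod e) ^ ij.2 = x)).card
        = d * g := by
  haveI : NeZero e := ⟨he.ne'⟩
  have hp2 : 2 ≤ p := hp.two_le
  have hd : 0 < d := by
    rcases Nat.eq_zero_or_pos d with h | h
    · subst h; simp at hnd; omega
    · exact h
  obtain ⟨u, hu⟩ := hn1
  have hu' : n = u * (p - 1) := by rw [hu, Nat.mul_comm]
  have hupe : u * p = u + d * e := by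
    have h1 : u * p = u * (p - 1) + u := by
      rw [← Nat.mul_succ]; congr 1; omega
    omega
  -- p is a unit mod e
  have hpe1 : ((p : ZMod e)) ^ g = 1 := by
    have := (ZMod.natCast_eq_natCast_iff (p ^ g) 1 e).mpr hpg
    push_cast at this
    exact this
  have hw1 : (p : ZMod e) * ((p : ZMod e)) ^ (g - 1) = 1 := by
    rw [← pow_succ']
    have hgg : g - 1 + 1 = g := by omega
    rw [hgg]; exact hpe1
  set w : (ZMod e)ˣ := ⟨(p : ZMod e), ((p : ZMod e)) ^ (g - 1), hw1,
    by rw [mul_comm]; exact hw1⟩ with hwdef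
  have hwg : w ^ g = 1 := by
    ext
    push_cast
    exact hpe1
  set v : ZMod e := ((w⁻¹ : (ZMod e)ˣ) : ZMod e) with hvdef
  have hpv : (p : ZMod e) * v = 1 := Units.mul_inv w
  have hvg : v ^ g = 1 := by
    rw [hvdef, ← Units.val_pow_eq_pow_val, inv_pow, hwg, inv_one, Units.val_one]
  -- the key count
  have key : ∀ x : ZMod e,
      ((Finset.Icc 1 n ×ˢ Finset.range g).filter
        (fun ij => ((ij.1 + (ij.1 - 1) / (p - 1) : ℕ) : ZMod e) * (p : ZMod e) ^ ij.2 = x)).card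
        = d * g := by
    intro x
    have hiff : ∀ (a : ZMod e) (j : ℕ), (a * (p : ZMod e) ^ j = x) ↔ a = x * v ^ j := by
      intro a j
      have h1 : (p : ZMod e) ^ j = ((w ^ j : (ZMod e)ˣ) : ZMod e) := by
        rw [Units.val_pow_eq_pow_val]
      have h2 : (v ^ j : ZMod e) = (((w ^ j)⁻¹ : (ZMod e)ˣ) : ZMod e) := by
        rw [hvdef, ← Units.val_pow_eq_pow_val, inv_pow]
      rw [h1, h2]
      exact (Units.eq_mul_inv_iff_mul_eq (w ^ j)).symm
    set A : ℕ → ℕ := fun j =>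
      ((Finset.Ioc 0 u).filter (fun k : ℕ => ((k : ℕ) : ZMod e) = x * v ^ j)).card with hAdef
    set N : ℕ → ℕ := fun j =>
      ((Finset.Icc 1 n).filter
        (fun i : ℕ => ((i + (i - 1) / (p - 1) : ℕ) : ZMod e) * (p : ZMod e) ^ j = x)).card
      with hNdef
    -- step 1 : N j in terms of interval counts
    have step1 : ∀ j, N j =
        ((Finset.Ioc 0 (u * p)).filter
          (fun m : ℕ => ¬ p ∣ m ∧ ((m : ℕ) : ZMod e) = x * v ^ j)).card := by
      intro j
      rw [hNdef]
      simp only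
      rw [hu']
      rw [Finset.filter_congr (fun i _ => by
        rw [hiff] : ∀ i ∈ Finset.Icc 1 (u * (p-1)),
          (((i + (i - 1) / (p - 1) : ℕ) : ZMod e) * (p : ZMod e) ^ j = x) ↔
          (((i + (i - 1) / (p - 1) : ℕ) : ZMod e) = x * v ^ j))]
      exact b_count p hp2 u (fun m => ((m : ℕ) : ZMod e) = x * v ^ j)
    -- step 2 : multiples of p count
    have step2 : ∀ j, A (j + 1) =
        ((Finset.Ioc 0 (u * p)).filter
          (fun m : ℕ => p ∣ m ∧ ((m : ℕ) : ZMod e) = x * v ^ j)).card := by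
      intro j
      rw [hAdef]
      simp only
      refine Finset.card_bij' (fun k _ => p * k) (fun m _ => m / p) ?_ ?_ ?_ ?_
      · intro k hk
        simp only [Finset.mem_filter, Finset.mem_Ioc] at hk ⊢
        obtain ⟨⟨hk1, hk2⟩, hk3⟩ := hk
        refine ⟨⟨by positivity, ?_⟩, ⟨k, rfl⟩, ?_⟩
        · calc p * k ≤ p * u := Nat.mul_le_mul_left p hk2
            _ = u * p := Nat.mul_comm _ _
        · push_cast
          rw [hk3]
          calc (p : ZMod e) * (x * v ^ (j + 1)) = x * v ^ j * ((p : ZMod e) * v) := by ring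
            _ = x * v ^ j := by rw [hpv, mul_one]
      · intro m hm
        simp only [Finset.mem_filter, Finset.mem_Ioc] at hm ⊢
        obtain ⟨⟨hm1, hm2⟩, hdvd, hcond⟩ := hm
        obtain ⟨k, rfl⟩ := hdvd
        have hk : p * k / p = k := Nat.mul_div_cancel_left k (by omega)
        rw [hk]
        push_cast at hcond
        refine ⟨⟨?_, ?_⟩, ?_⟩
        · have hk0 : k ≠ 0 := by rintro rfl; simp at hm1
          omega
        · by_contra h
          push_neg at h
          have h1 : p * (u + 1) ≤ p * k := Nat.mul_le_mul_left p h
          have h2 : u * p = p * u := Nat.mul_comm _ _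
          have h3 : p * (u + 1) = p * u + p := by ring
          omega
        · have h6 : v * ((p : ZMod e) * (k : ZMod e)) = v * (x * v ^ j) := by rw [hcond]
          have h7 : v * ((p : ZMod e) * (k : ZMod e)) = (k : ZMod e) := by
            rw [← mul_assoc, mul_comm v ((p : ZMod e)), hpv, one_mul]
          rw [← h7, h6]; ring
      · intro k hk
        show p * k / p = k
        exact Nat.mul_div_cancel_left k (by omega)
      · intro m hm
        simp only [Finset.mem_filter, Finset.mem_Ioc] at hm
        show p * (m / p) = m
        exact Nat.mul_div_cancel' hm.2.1
    -- step 3 : total split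
    have step3 : ∀ j, N j + A (j + 1) = A j + d := by
      intro j
      have hT : ((Finset.Ioc 0 (u * p)).filter
          (fun m : ℕ => ((m : ℕ) : ZMod e) = x * v ^ j)).card = A j + d := by
        rw [hupe, ← Finset.Ioc_union_Ioc_eq_Ioc (Nat.zero_le u) (by omega : u ≤ u + d * e),
          Finset.filter_union,
          Finset.card_union_of_disjoint (Finset.disjoint_filter_filter
            (by simp only [Finset.disjoint_left, Finset.mem_Ioc]; omega)),
          multi_period he]
      have hsplit : ((Finset.Ioc 0 (u * p)).filter
            (fun m : ℕ => p ∣ m ∧ ((m : ℕ) : ZMod e) = x * v ^ j)).card +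
          ((Finset.Ioc 0 (u * p)).filter
            (fun m : ℕ => ¬ p ∣ m ∧ ((m : ℕ) : ZMod e) = x * v ^ j)).card =
          ((Finset.Ioc 0 (u * p)).filter
            (fun m : ℕ => ((m : ℕ) : ZMod e) = x * v ^ j)).card := by
        have h0 := Finset.card_filter_add_card_filter_not
          (s := (Finset.Ioc 0 (u * p)).filter (fun m : ℕ => ((m : ℕ) : ZMod e) = x * v ^ j))
          (p := fun m => p ∣ m)
        rw [Finset.filter_filter, Finset.filter_filter] at h0
        have e1 : (Finset.Ioc 0 (u * p)).filter
              (fun a : ℕ => ((a : ℕ) : ZMod e) = x * v ^ j ∧ p ∣ a)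
            = (Finset.Ioc 0 (u * p)).filter
              (fun m : ℕ => p ∣ m ∧ ((m : ℕ) : ZMod e) = x * v ^ j) :=
          Finset.filter_congr (fun m _ => and_comm)
        have e2 : (Finset.Ioc 0 (u * p)).filter
              (fun a : ℕ => ((a : ℕ) : ZMod e) = x * v ^ j ∧ ¬ p ∣ a)
            = (Finset.Ioc 0 (u * p)).filter
              (fun m : ℕ => ¬ p ∣ m ∧ ((m : ℕ) : ZMod e) = x * v ^ j) :=
          Finset.filter_congr (fun m _ => and_comm)
        rw [e1, e2] at h0
        exact h0
      rw [step1, step2]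
      omega
    -- cyclic shift
    have hAg : A g = A 0 := by
      rw [hAdef]; simp only [hvg, pow_zero]
    have hshift : ∑ j ∈ Finset.range g, A (j + 1) = ∑ j ∈ Finset.range g, A j := by
      have h1 := Finset.sum_range_succ' A g
      have h2 := Finset.sum_range_succ A g
      omega
    -- the total count
    have hcard : ((Finset.Icc 1 n ×ˢ Finset.range g).filter
        (fun ij => ((ij.1 + (ij.1 - 1) / (p - 1) : ℕ) : ZMod e) * (p : ZMod e) ^ ij.2 = x)).card
        = ∑ j ∈ Finset.range g, N j := by
      rw [Finset.card_filter, Finset.sum_product, Finset.sum_comm]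
      refine Finset.sum_congr rfl fun j _ => ?_
      rw [hNdef]
      exact (Finset.card_filter _ _).symm
    have hsum : ∑ j ∈ Finset.range g, (N j + A (j + 1))
        = ∑ j ∈ Finset.range g, (A j + d) := Finset.sum_congr rfl fun j _ => step3 j
    rw [Finset.sum_add_distrib, Finset.sum_add_distrib, Finset.sum_const,
      Finset.card_range, smul_eq_mul] at hsum
    rw [hcard]
    have hdg : g * d = d * g := Nat.mul_comm g d
    omega
  refine ⟨?_, key⟩
  intro x
  have hpos : 0 < ((Finset.Icc 1 n ×ˢ Finset.range g).filter
      (fun ij => ((ij.1 + (ij.1 - 1) / (p - 1) : ℕ) : ZMod e) * (p : ZMod e) ^ ij.2 = x)).card := by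
    rw [key x]; positivity
  obtain ⟨⟨i, j⟩, hmem⟩ := Finset.card_pos.mp hpos
  rw [Finset.mem_filter, Finset.mem_product] at hmem
  exact ⟨i, hmem.1.1, j, hmem.1.2, hmem.2⟩
end

section
/- Let p be a prime, e > 0 with p ∤ e, g a positive multiple of the order of p mod e, and c > 0. Then the multiset of residues (r·p^j mod e) for r ranging over [1, c·p] and j over ℤ/gℤ equals the multiset union of the residues (b(i)·p^j mod e) for i ∈ [1, c(p-1)], j ∈ ℤ/gℤ, and the residues (i·p^{j+1} mod e) for i ∈ [1,c], j ∈ ℤ/gℤ, where b(i) = i + ⌊(i-1)/(p-1)⌋. -/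
private theorem stmt3_inj1 (P : ℕ) : Function.Injective (fun i : ℕ => i + (i - 1) / (P + 1)) := by
  have : StrictMono (fun i : ℕ => i + (i - 1) / (P + 1)) := by
    intro a b hab
    have h := Nat.div_le_div_right (c := P + 1) (Nat.sub_le_sub_right hab.le 1)
    simp only
    omega
  exact this.injective

private theorem stmt3_inj2 (P : ℕ) : Function.Injective (fun i : ℕ => i * (P + 2)) := by
  intro a b h
  exact Nat.eq_of_mul_eq_mul_right (by omega) h

private theorem stmt3_key (P c : ℕ) (hc : 0 < c) :
    (Finset.Icc 1 (c * (P + 2))).val =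
      ((Finset.Icc 1 (c * (P + 1))).val.map (fun i => i + (i - 1) / (P + 1))) +
      ((Finset.Icc 1 c).val.map (fun i => i * (P + 2))) := by
  have hdisj : Disjoint ((Finset.Icc 1 (c * (P + 1))).map ⟨_, stmt3_inj1 P⟩)
      ((Finset.Icc 1 c).map ⟨_, stmt3_inj2 P⟩) := by
    rw [Finset.disjoint_left]
    rintro x hx hx'
    simp only [Finset.mem_map, Finset.mem_Icc, Function.Embedding.coeFn_mk] at hx hx'
    obtain ⟨i, ⟨hi1, hi2⟩, rfl⟩ := hx
    obtain ⟨k, ⟨hk1, hk2⟩, hk⟩ := hx'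
    obtain ⟨q, s, hdm, hslt⟩ : ∃ q s, (P + 1) * q + s = i - 1 ∧ s < P + 1 :=
      ⟨_, _, Nat.div_add_mod _ _, Nat.mod_lt _ (by omega)⟩
    have hq : (P + 2) * ((i - 1) / (P + 1)) = (P + 1) * ((i - 1) / (P + 1)) + (i - 1) / (P + 1) :=
      by ring
    have hqq : (i - 1) / (P + 1) = q := by
      rw [← hdm, Nat.mul_add_div (by omega : 0 < P + 1), Nat.div_eq_of_lt hslt]
      omega
    rw [hqq] at hq hk
    have hbi : i + q = (P + 2) * q + (s + 1) := by omega
    have hmod : (k * (P + 2)) % (P + 2) = ((P + 2) * q + (s + 1)) % (P + 2) := by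
      rw [hk, hbi]
    rw [Nat.mul_mod_left, Nat.mul_add_mod, Nat.mod_eq_of_lt (by omega)] at hmod
    omega
  have hmain : Finset.Icc 1 (c * (P + 2)) =
      ((Finset.Icc 1 (c * (P + 1))).map ⟨_, stmt3_inj1 P⟩).disjUnion
        ((Finset.Icc 1 c).map ⟨_, stmt3_inj2 P⟩) hdisj := by
    ext n
    simp only [Finset.mem_disjUnion, Finset.mem_map, Finset.mem_Icc,
      Function.Embedding.coeFn_mk]
    constructor
    · rintro ⟨h1, h2⟩
      by_cases hdvd : (P + 2) ∣ n
      · right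
        obtain ⟨k, hk⟩ := hdvd
        have hkc : k * (P + 2) = (P + 2) * k := mul_comm _ _
        have hcc : c * (P + 2) = (P + 2) * c := mul_comm _ _
        have hk1 : 1 ≤ k := by
          rcases k with _ | k
          · simp at hk; omega
          · omega
        have hk2 : (P + 2) * k ≤ (P + 2) * c := by omega
        exact ⟨k, ⟨hk1, Nat.le_of_mul_le_mul_left hk2 (by omega)⟩, by omega⟩
      · left
        obtain ⟨q, s, hdm, hslt⟩ : ∃ q s, (P + 2) * q + s = n ∧ s < P + 2 :=
          ⟨_, _, Nat.div_add_mod _ _, Nat.mod_lt _ (by omega)⟩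
        have hs0 : s ≠ 0 := fun h => hdvd ⟨q, by omega⟩
        have hq : (P + 2) * q = (P + 1) * q + q := by ring
        have hqc : q < c := by
          by_contra hqc
          push_neg at hqc
          have h3 : (P + 2) * c ≤ (P + 2) * q := Nat.mul_le_mul_left _ hqc
          have hcc : c * (P + 2) = (P + 2) * c := mul_comm _ _
          omega
        refine ⟨n - q, ⟨by omega, ?_⟩, ?_⟩
        · have h4 : (q + 1) * (P + 1) ≤ c * (P + 1) := Nat.mul_le_mul_right _ (by omega)
          have h5 : (q + 1) * (P + 1) = (P + 1) * q + (P + 1) := by ring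
          omega
        · have hieq : n - q - 1 = (P + 1) * q + (s - 1) := by omega
          have hdiv : ((P + 1) * q + (s - 1)) / (P + 1) = q + (s - 1) / (P + 1) :=
            Nat.mul_add_div (by omega) _ _
          have hz : (s - 1) / (P + 1) = 0 := Nat.div_eq_of_lt (by omega)
          rw [hieq, hdiv, hz]
          omega
    · rintro (⟨i, ⟨hi1, hi2⟩, rfl⟩ | ⟨i, ⟨hi1, hi2⟩, rfl⟩)
      · obtain ⟨q, s, hdm, hslt⟩ : ∃ q s, (P + 1) * q + s = i - 1 ∧ s < P + 1 :=
          ⟨_, _, Nat.div_add_mod _ _, Nat.mod_lt _ (by omega)⟩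
        have hqq : (i - 1) / (P + 1) = q := by
          rw [← hdm, Nat.mul_add_div (by omega : 0 < P + 1), Nat.div_eq_of_lt hslt]
          omega
        rw [hqq]
        have hqc : q < c := by
          by_contra hqc
          push_neg at hqc
          have h3 : (P + 1) * c ≤ (P + 1) * q := Nat.mul_le_mul_left _ hqc
          have hcc : c * (P + 1) = (P + 1) * c := mul_comm _ _
          omega
        have hq : (P + 2) * q = (P + 1) * q + q := by ring
        have h1 : (P + 2) * (q + 1) ≤ (P + 2) * c := Nat.mul_le_mul_left _ (by omega)
        have h2 : (P + 2) * (q + 1) = (P + 2) * q + (P + 2) := by ring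
        have hcc : c * (P + 2) = (P + 2) * c := mul_comm _ _
        omega
      · constructor
        · have : 1 * (P + 2) ≤ i * (P + 2) := Nat.mul_le_mul_right _ hi1
          omega
        · exact Nat.mul_le_mul_right _ hi2
  rw [hmain]
  rfl

/-- The multiset of residues `r·p^j mod e` for `r ∈ [1, cp]`, `j ∈ ℤ/gℤ` is the
multiset union of the residues `b(i)·p^j mod e` for `i ∈ [1, c(p-1)]` and
`i·p^{j+1} mod e` for `i ∈ [1, c]`. -/
theorem stmt_3 (p e g c : ℕ) (hp : p.Prime) (he : 0 < e) (hpe : ¬ p ∣ e)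
    (hg : 0 < g) (hpg : p ^ g ≡ 1 [MOD e]) (hc : 0 < c) :
    ((Finset.Icc 1 (c * p) ×ˢ Finset.range g).val.map
        (fun rj => ((rj.1 : ZMod e) * (p : ZMod e) ^ rj.2))) =
    ((Finset.Icc 1 (c * (p - 1)) ×ˢ Finset.range g).val.map
        (fun ij => ((ij.1 + (ij.1 - 1) / (p - 1) : ℕ) : ZMod e) * (p : ZMod e) ^ ij.2)) +
    ((Finset.Icc 1 c ×ˢ Finset.range g).val.map
        (fun ij => ((ij.1 : ZMod e)) * (p : ZMod e) ^ (ij.2 + 1))) := by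
  have hp2 := hp.two_le
  obtain ⟨P, rfl⟩ : ∃ P, p = P + 2 := ⟨p - 2, by omega⟩
  have hprod : ∀ (s : Finset ℕ) (f : ℕ × ℕ → ZMod e),
      ((s ×ˢ Finset.range g).val.map f) =
        s.val.bind (fun a => (Finset.range g).val.map fun b => f (a, b)) := by
    intro s f
    rw [Finset.product_val]
    simp [SProd.sprod, Multiset.product, Multiset.map_bind]
  rw [hprod, hprod, hprod, stmt3_key P c hc, Multiset.add_bind,
    Multiset.bind_map, Multiset.bind_map]
  congr 1
  all_goals
    refine Multiset.bind_congr fun i _ => Multiset.map_congr rfl fun j _ => ?_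
    first
    | rfl
    | (push_cast; ring)
end

section
/- With k, l, T, G = T ⋊ Σ as above, define for each r ∈ ℤ the k[G]-module l(r) with underlying k-vector space l, where σ acts by x ↦ x^q and t ∈ T acts by multiplication by θ(t)^r, θ: T → lˣ being the inclusion. Then the direct sum ⊕_{i ∈ ℤ/eℤ} l(i) is a free k[G]-module of rank 1. -/
open Polynomial

section NB
variable (k l : Type) [Field k] [Fintype k] [Field l] [Fintype l] [Algebra k l]

/-- The `q`-power Frobenius of `l` as a `k`-linear endomorphism. -/
noncomputable def frobT : l →ₗ[k] l where
  toFun x := x ^ Fintype.card k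
  map_add' x y := by
    obtain ⟨n, hp, hn⟩ := FiniteField.card k (ringChar k)
    haveI : Fact (ringChar k).Prime := ⟨hp⟩
    haveI : CharP l (ringChar k) :=
      charP_of_injective_algebraMap (algebraMap k l).injective (ringChar k)
    show (x + y) ^ Fintype.card k = x ^ Fintype.card k + y ^ Fintype.card k
    rw [hn, add_pow_char_pow]
  map_smul' c x := by
    simp only [RingHom.id_apply, Algebra.smul_def, mul_pow, ← map_pow,
      FiniteField.pow_card]

variable {k l}

lemma frobT_apply (x : l) : frobT k l x = x ^ Fintype.card k := rfl

lemma frobT_pow (b : ℕ) (x : l) :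
    ((frobT k l ^ b) x) = x ^ (Fintype.card k) ^ b := by
  induction b with
  | zero => simp
  | succ b ih =>
    rw [pow_succ', Module.End.mul_apply, ih, frobT_apply, ← pow_mul, ← pow_succ]

lemma powfun_li :
    LinearIndependent l
      (fun b : Fin (Module.finrank k l) => fun x : l => x ^ (Fintype.card k) ^ (b : ℕ)) := by
  have hinj : Function.Injective
      (fun b : Fin (Module.finrank k l) => powMonoidHom ((Fintype.card k) ^ (b : ℕ)) : _ → (l →* l)) := by
    intro b b' h
    classical
    by_cases hf1 : Module.finrank k l ≤ 1
    · exact Fin.ext (by omega)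
    obtain ⟨ζ, hζ⟩ := IsCyclic.exists_generator (α := lˣ)
    have hord : orderOf ζ = Fintype.card l - 1 := by
      rw [orderOf_eq_card_of_forall_mem_zpowers hζ, Nat.card_eq_fintype_card,
        Fintype.card_units]
    have hq2 : 2 ≤ Fintype.card k := Fintype.one_lt_card
    have hcl : Fintype.card l = Fintype.card k ^ Module.finrank k l := Module.card_eq_pow_finrank
    have hval : ((ζ : l)) ^ (Fintype.card k) ^ (b : ℕ) = ((ζ : l)) ^ (Fintype.card k) ^ (b' : ℕ) :=
      DFunLike.congr_fun h (ζ : l)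
    have hu : ζ ^ (Fintype.card k) ^ (b : ℕ) = ζ ^ (Fintype.card k) ^ (b' : ℕ) :=
      Units.ext (by simpa using hval)
    rw [pow_eq_pow_iff_modEq, hord, hcl] at hu
    have hlt : ∀ c : Fin (Module.finrank k l), (Fintype.card k) ^ (c : ℕ) <
        Fintype.card k ^ Module.finrank k l - 1 := by
      intro c
      have h1 : (Fintype.card k) ^ (c : ℕ) ≤ Fintype.card k ^ (Module.finrank k l - 1) :=
        Nat.pow_le_pow_right (by omega) (by omega)
      have h2 : Fintype.card k ^ (Module.finrank k l - 1) * 2 ≤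
          Fintype.card k ^ (Module.finrank k l - 1) * Fintype.card k :=
        Nat.mul_le_mul_left _ hq2
      have h3 : Fintype.card k ^ (Module.finrank k l - 1) * Fintype.card k
          = Fintype.card k ^ Module.finrank k l := by
        rw [← pow_succ]; congr 1; omega
      have h4 : 1 ≤ Fintype.card k ^ (Module.finrank k l - 1) := Nat.one_le_pow _ _ (by omega)
      have h5 : Fintype.card k ^ (Module.finrank k l - 1) * 2 ≤
          Fintype.card k ^ Module.finrank k l := h3 ▸ h2
      have h6 : 2 ≤ Fintype.card k ^ (Module.finrank k l - 1) :=
        le_trans hq2 (Nat.le_self_pow (by omega) _)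
      omega
    have := hu.eq_of_lt_of_lt (hlt b) (hlt b')
    exact Fin.ext (Nat.pow_right_injective hq2 this)
  have := (linearIndependent_monoidHom l l).comp _ hinj
  exact this

lemma no_low_ann {g : k[X]} (hg : g ≠ 0) (hdeg : g.natDegree < Module.finrank k l) :
    aeval (frobT k l) g ≠ 0 := by
  intro h0
  have hx : ∀ x : l, ∑ b : Fin (Module.finrank k l),
      (algebraMap k l (g.coeff b)) * x ^ (Fintype.card k) ^ (b : ℕ) = 0 := by
    intro x
    have h1 : (aeval (frobT k l) g) x = 0 := by rw [h0]; rfl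
    rw [aeval_eq_sum_range' hdeg] at h1
    rw [← Fin.sum_univ_eq_sum_range (fun i => g.coeff i • frobT k l ^ i)] at h1
    rw [LinearMap.sum_apply] at h1
    simpa [frobT_pow, Algebra.smul_def] using h1
  have hz := Fintype.linearIndependent_iff.mp (powfun_li (k := k) (l := l))
    (fun b => algebraMap k l (g.coeff b)) ?_
  · apply hg
    ext n
    by_cases hn : n < Module.finrank k l
    · have := hz ⟨n, hn⟩
      simpa using (algebraMap k l).injective (by simpa using this)
    · exact coeff_eq_zero_of_natDegree_lt (show g.natDegree < n by omega)
  · funext x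
    simpa only [Finset.sum_apply, Pi.smul_apply, smul_eq_mul, Pi.zero_apply] using hx x

end NB

section CV
variable {k l : Type} [Field k] [Fintype k] [Field l] [Fintype l] [Algebra k l]

open UniqueFactorizationMonoid

/-- The annihilator ideal of a vector under a k-linear endomorphism. -/
def annI (F : Module.End k l) (v : l) : Ideal (Polynomial k) where
  carrier := {g | aeval F g v = 0}
  zero_mem' := by simp
  add_mem' := by
    intro a b ha hb
    simp only [Set.mem_setOf_eq, map_add, LinearMap.add_apply] at *
    rw [ha, hb, add_zero]
  smul_mem' := by
    intro c g hg
    simp only [Set.mem_setOf_eq, smul_eq_mul, map_mul, Module.End.mul_apply] at *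
    rw [hg, map_zero]

lemma mem_annI {F : Module.End k l} {v : l} {g : Polynomial k} :
    g ∈ annI F v ↔ aeval F g v = 0 := Iff.rfl

lemma annI_pow_dvd {F : Module.End k l} {p : Polynomial k} (hp : Prime p) {n : ℕ}
    {y : l} (hn : n ≠ 0) (h1 : p ^ n ∈ annI F y) (h2 : p ^ (n - 1) ∉ annI F y)
    {g : Polynomial k} (hg : g ∈ annI F y) : p ^ n ∣ g := by
  obtain ⟨d, hd⟩ := (Submodule.isPrincipal_iff _).mp (IsPrincipalIdealRing.principal (annI F y))
  have hdvd : d ∣ p ^ n := by rwa [hd, Ideal.submodule_span_eq, Ideal.mem_span_singleton] at h1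
  obtain ⟨i, hi, hassoc⟩ := (dvd_prime_pow hp n).mp hdvd
  have hin : i = n := by
    by_contra hne
    apply h2
    rw [hd, Ideal.submodule_span_eq, Ideal.mem_span_singleton]
    exact hassoc.dvd.trans (pow_dvd_pow p (by omega))
  subst hin
  have hdg : d ∣ g := by rwa [hd, Ideal.submodule_span_eq, Ideal.mem_span_singleton] at hg
  exact hassoc.symm.dvd.trans hdg

theorem exists_normal_basis_vec :
    ∃ α : l, LinearIndependent k
      (fun b : Fin (Module.finrank k l) => α ^ (Fintype.card k) ^ (b : ℕ)) := by
  classical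
  set F := frobT k l with hF
  set fr := Module.finrank k l with hfr
  have hfpos : 0 < fr := Module.finrank_pos
  set m : Polynomial k := Polynomial.X ^ fr - 1 with hm
  have hmonic : m.Monic := by
    have := Polynomial.monic_X_pow_sub_C (1 : k) (by omega : fr ≠ 0)
    simpa [hm] using this
  have hm0 : m ≠ 0 := hmonic.ne_zero
  have hdegm : m.natDegree = fr := by
    have := Polynomial.natDegree_X_pow_sub_C (n := fr) (r := (1 : k))
    simpa [hm] using this
  have hFm : aeval F m = 0 := by
    rw [hm, map_sub, map_pow, aeval_X, map_one, sub_eq_zero]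
    ext x
    rw [Module.End.one_apply, frobT_pow, ← Module.card_eq_pow_finrank, FiniteField.pow_card]
  -- factorization data
  set P := (normalizedFactors m).toFinset with hP
  set E : Polynomial k → ℕ := fun p => (normalizedFactors m).count p with hE
  have hprodP : ∏ p ∈ P, p ^ E p = m := by
    rw [hP, hE, ← Finset.prod_multiset_count]
    refine Polynomial.eq_of_monic_of_associated ?_ hmonic (prod_normalizedFactors hm0)
    have : normalizedFactors m = (normalizedFactors m).map id := by simp
    rw [this]
    exact Polynomial.monic_multiset_prod_of_monic _ _ (fun p hp => by
      have h1 : Prime p := prime_of_normalized_factor p hp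
      have h2 : normalize p = p := normalize_normalized_factor p hp
      simpa [id, h2] using Polynomial.monic_normalize (R := k) h1.ne_zero)
  have hprime : ∀ p ∈ P, Prime p := fun p hp =>
    prime_of_normalized_factor p (Multiset.mem_toFinset.mp hp : p ∈ normalizedFactors m)
  have hEpos : ∀ p ∈ P, 0 < E p := fun p hp =>
    Multiset.count_pos.mpr ((Multiset.mem_toFinset).mp hp)
  -- the complements
  set c : Polynomial k → Polynomial k := fun p => ∏ p' ∈ P.erase p, p' ^ E p' with hc
  have hsplit : ∀ p ∈ P, p ^ E p * c p = m := by
    intro p hp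
    rw [hc, Finset.mul_prod_erase P (fun p' => p' ^ E p') hp, hprodP]
  have hnotdvd : ∀ p ∈ P, ¬ p ∣ c p := by
    intro p hp hdvd
    obtain ⟨p', hp', hdp'⟩ := (hprime p hp).exists_mem_finset_dvd hdvd
    have hpp' : p ∣ p' := (hprime p hp).dvd_of_dvd_pow hdp'
    have hassoc : Associated p p' :=
      ((hprime p hp).irreducible).associated_of_dvd
        ((hprime p' (Finset.mem_of_mem_erase hp')).irreducible) hpp'
    have : p = p' := by
      rw [← normalize_normalized_factor p ((Multiset.mem_toFinset).mp hp),
        ← normalize_normalized_factor p'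
          ((Multiset.mem_toFinset).mp (Finset.mem_of_mem_erase hp'))]
      exact normalize_eq_normalize hassoc.dvd hassoc.symm.dvd
    exact (Finset.ne_of_mem_erase hp') this.symm
  -- choose vectors
  have hstep : ∀ p ∈ P, ∃ x : l, aeval F (c p * p ^ (E p - 1)) x ≠ 0 := by
    intro p hp
    have hne : c p * p ^ (E p - 1) ≠ 0 := by
      apply mul_ne_zero
      · intro h0
        apply hm0
        rw [← hsplit p hp, h0, mul_zero]
      · exact pow_ne_zero _ (hprime p hp).ne_zero
    have hdeg : (c p * p ^ (E p - 1)).natDegree < fr := by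
      have h1 : (p ^ E p).natDegree + (c p).natDegree = fr := by
        rw [← Polynomial.natDegree_mul (pow_ne_zero _ (hprime p hp).ne_zero)
          (fun h0 => hm0 (by rw [← hsplit p hp, h0, mul_zero])), hsplit p hp, hdegm]
      have h2 : (p ^ E p).natDegree = E p * p.natDegree := Polynomial.natDegree_pow _ _
      have h3 : (c p * p ^ (E p - 1)).natDegree = (c p).natDegree + (E p - 1) * p.natDegree := by
        rw [Polynomial.natDegree_mul (fun h0 => hm0 (by rw [← hsplit p hp, h0, mul_zero]))
          (pow_ne_zero _ (hprime p hp).ne_zero), Polynomial.natDegree_pow]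
      have h4 : 0 < p.natDegree := (hprime p hp).irreducible.natDegree_pos
      have h5 := hEpos p hp
      have h6 : (E p - 1) * p.natDegree + p.natDegree = E p * p.natDegree := by
        have h7 : p.natDegree ≤ E p * p.natDegree := Nat.le_mul_of_pos_left _ h5
        rw [Nat.sub_one_mul]
        omega
      omega
    by_contra hall
    push_neg at hall
    exact no_low_ann hne hdeg (LinearMap.ext hall)
  choose x hx using hstep
  set y : (p : Polynomial k) → p ∈ P → l := fun p hp => aeval F (c p) (x p hp) with hy
  have h1y : ∀ p (hp : p ∈ P), aeval F (p ^ E p) (y p hp) = 0 := by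
    intro p hp
    rw [hy]
    have : aeval F (p ^ E p) (aeval F (c p) (x p hp))
        = aeval F (p ^ E p * c p) (x p hp) := by
      rw [map_mul, Module.End.mul_apply]
    rw [this, hsplit p hp, hFm, LinearMap.zero_apply]
  have h2y : ∀ p (hp : p ∈ P), aeval F (p ^ (E p - 1)) (y p hp) ≠ 0 := by
    intro p hp
    rw [hy]
    have hcomm : aeval F (c p * p ^ (E p - 1)) (x p hp)
        = aeval F (p ^ (E p - 1)) (aeval F (c p) (x p hp)) := by
      rw [mul_comm (c p), map_mul, Module.End.mul_apply]
    rw [← hcomm]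
    exact hx p hp
  -- distinctness helper
  have hdist : ∀ p ∈ P, ∀ p' ∈ P, p ∣ p' → p = p' := by
    intro p hp p' hp' hdd
    have hassoc : Associated p p' :=
      ((hprime p hp).irreducible).associated_of_dvd ((hprime p' hp').irreducible) hdd
    rw [← normalize_normalized_factor p (Multiset.mem_toFinset.mp hp : p ∈ normalizedFactors m),
      ← normalize_normalized_factor p' (Multiset.mem_toFinset.mp hp' : p' ∈ normalizedFactors m)]
    exact normalize_eq_normalize hassoc.dvd hassoc.symm.dvd
  -- the normal basis vector
  set v : l := ∑ p ∈ P.attach, y p.1 p.2 with hv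
  have hkey : ∀ g : Polynomial k, aeval F g v = 0 → m ∣ g := by
    intro g hgv
    have hdvd : ∀ p ∈ P, p ^ E p ∣ g := by
      intro p hp
      have hann : aeval F (g * c p) (y p hp) = 0 := by
        have hsum : aeval F (g * c p) v = ∑ p' ∈ P.attach, aeval F (g * c p) (y p'.1 p'.2) := by
          rw [hv, map_sum]
        have hzero : ∀ p' ∈ P.attach, p' ≠ (⟨p, hp⟩ : {x // x ∈ P}) →
            aeval F (g * c p) (y p'.1 p'.2) = 0 := by
          intro p' _ hne
          have hne' : p'.1 ∈ P.erase p :=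
            Finset.mem_erase.mpr ⟨fun h => hne (Subtype.ext h), p'.2⟩
          have hdd : p'.1 ^ E p'.1 ∣ g * c p :=
            Dvd.dvd.mul_left (Finset.dvd_prod_of_mem (fun q => q ^ E q) hne') g
          obtain ⟨w, hw⟩ := hdd
          rw [hw, mul_comm (p'.1 ^ E p'.1) w, map_mul, Module.End.mul_apply,
            h1y p'.1 p'.2, map_zero]
        have hleft : aeval F (g * c p) v = 0 := by
          rw [mul_comm g (c p), map_mul, Module.End.mul_apply, hgv, map_zero]
        have := Finset.sum_eq_single_of_mem (⟨p, hp⟩ : {x // x ∈ P})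
          (Finset.mem_attach _ _) hzero
        rw [hsum, this] at hleft
        exact hleft
      have hgcp : p ^ E p ∣ g * c p :=
        annI_pow_dvd (hprime p hp) (hEpos p hp).ne'
          (mem_annI.mpr (h1y p hp)) (fun hmem => h2y p hp (mem_annI.mp hmem))
          (mem_annI.mpr hann)
      exact (hprime p hp).pow_dvd_of_dvd_mul_right _ (hnotdvd p hp) hgcp
    rw [← hprodP]
    refine Finset.prod_dvd_of_coprime ?_ hdvd
    intro p hp p' hp' hne
    have hnd : ¬ p ∣ p' := fun hdd => hne (hdist p (Finset.mem_coe.mp hp) p' (Finset.mem_coe.mp hp') hdd)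
    exact ((hprime p (Finset.mem_coe.mp hp)).coprime_iff_not_dvd.mpr hnd).pow
  -- conclude
  refine ⟨v, ?_⟩
  rw [Fintype.linearIndependent_iff]
  intro cf hcf
  set g : Polynomial k := ∑ b : Fin fr, Polynomial.C (cf b) * Polynomial.X ^ (b : ℕ) with hg
  have hEnd : aeval F g = ∑ b : Fin fr, cf b • (F ^ (b : ℕ)) := by
    rw [hg, map_sum]
    refine Finset.sum_congr rfl fun b _ => ?_
    rw [map_mul, Polynomial.aeval_C, map_pow, Polynomial.aeval_X,
      Algebra.algebraMap_eq_smul_one, smul_mul_assoc, one_mul]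
  have hgv : aeval F g v = 0 := by
    rw [hEnd]
    have happ : ((∑ b : Fin fr, cf b • (F ^ (b : ℕ))) : l →ₗ[k] l) v
        = ∑ b : Fin fr, (cf b • (F ^ (b : ℕ)) : l →ₗ[k] l) v := LinearMap.sum_apply _ _ _
    rw [happ, ← hcf]
    refine Finset.sum_congr rfl fun b _ => ?_
    rw [LinearMap.smul_apply, frobT_pow]
  have hg0 : g = 0 := by
    by_contra hne
    have h1 := Polynomial.natDegree_le_of_dvd (hkey g hgv) hne
    have h2 : g.natDegree ≤ fr - 1 := by
      rw [hg]
      refine Polynomial.natDegree_sum_le_of_forall_le _ _ (fun b _ => ?_)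
      refine le_trans (Polynomial.natDegree_C_mul_le _ _) ?_
      rw [Polynomial.natDegree_X_pow]
      have := b.isLt
      omega
    omega
  intro b
  have hco := congrArg (fun qq => Polynomial.coeff qq (b : ℕ)) hg0
  simp only [hg, Polynomial.finset_sum_coeff, Polynomial.coeff_C_mul,
    Polynomial.coeff_X_pow, Polynomial.coeff_zero] at hco
  rw [Finset.sum_eq_single b] at hco
  · simpa using hco
  · intro b' _ hne
    rw [if_neg (fun h => hne (Fin.ext h.symm)), mul_zero]
  · intro h; exact absurd (Finset.mem_univ b) h

end CV

section GroupPart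
variable {G : Type} [Group G]

lemma comm_pow {σg τg : G} {q : ℕ} (hrel : σg * τg * σg⁻¹ = τg ^ q) :
    ∀ b a : ℕ, σg ^ b * τg ^ a = τg ^ (a * q ^ b) * σg ^ b := by
  have h1 : σg * τg = τg ^ q * σg := by rw [← hrel]; group
  have h2 : ∀ a : ℕ, σg * τg ^ a = τg ^ (a * q) * σg := by
    intro a
    induction a with
    | zero => simp
    | succ a ih =>
      rw [pow_succ, ← mul_assoc, ih, mul_assoc, h1, ← mul_assoc, ← pow_add]
      ring_nf
  intro b
  induction b with
  | zero => intro a; simp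
  | succ b ih =>
    intro a
    rw [pow_succ', mul_assoc, ih a, ← mul_assoc, h2, mul_assoc, ← pow_succ',
      show a * q ^ b * q = a * q ^ (b + 1) by ring]

lemma gen_surj [Fintype G] {σg τg : G} {q e f : ℕ}
    (he : 0 < e) (hf : 0 < f)
    (hσ : orderOf σg = f) (hτ : orderOf τg = e)
    (hrel : σg * τg * σg⁻¹ = τg ^ q)
    (hgen : Subgroup.closure ({σg, τg} : Set G) = ⊤) :
    ∀ g : G, ∃ a b : ℕ, g = τg ^ a * σg ^ b := by
  obtain ⟨e', rfl⟩ : ∃ e', e = e' + 1 := ⟨e - 1, by omega⟩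
  obtain ⟨f', rfl⟩ : ∃ f', f = f' + 1 := ⟨f - 1, by omega⟩
  have hcomm := comm_pow hrel
  have hτ1 : τg ^ (e' + 1) = 1 := by rw [← hτ]; exact pow_orderOf_eq_one τg
  have hσ1 : σg ^ (f' + 1) = 1 := by rw [← hσ]; exact pow_orderOf_eq_one σg
  let S : Subgroup G :=
  { carrier := {g | ∃ a b : ℕ, g = τg ^ a * σg ^ b}
    one_mem' := ⟨0, 0, by simp⟩
    mul_mem' := by
      rintro x y ⟨a, b, rfl⟩ ⟨c, d, rfl⟩
      refine ⟨a + c * q ^ b, b + d, ?_⟩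
      calc τg ^ a * σg ^ b * (τg ^ c * σg ^ d)
          = τg ^ a * (σg ^ b * τg ^ c) * σg ^ d := by group
        _ = τg ^ a * (τg ^ (c * q ^ b) * σg ^ b) * σg ^ d := by rw [hcomm]
        _ = τg ^ (a + c * q ^ b) * σg ^ (b + d) := by rw [pow_add, pow_add]; group
    inv_mem' := by
      rintro x ⟨a, b, rfl⟩
      set A := a * e' + e' with hA
      set B := b * f' + f' with hB
      have hmul : (σg ^ (B + 1) * τg ^ (A + 1)) * (τg ^ a * σg ^ b) = 1 := by
        have h1 : τg ^ (A + 1) * τg ^ a = 1 := by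
          rw [← pow_add, show A + 1 + a = (e' + 1) * (a + 1) by rw [hA]; ring,
            pow_mul, hτ1, one_pow]
        have h2 : σg ^ (B + 1) * σg ^ b = 1 := by
          rw [← pow_add, show B + 1 + b = (f' + 1) * (b + 1) by rw [hB]; ring,
            pow_mul, hσ1, one_pow]
        calc (σg ^ (B + 1) * τg ^ (A + 1)) * (τg ^ a * σg ^ b)
            = σg ^ (B + 1) * (τg ^ (A + 1) * τg ^ a) * σg ^ b := by group
          _ = σg ^ (B + 1) * σg ^ b := by rw [h1, mul_one]
          _ = 1 := h2
      have hinv : (τg ^ a * σg ^ b)⁻¹ = σg ^ (B + 1) * τg ^ (A + 1) :=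
        inv_eq_of_mul_eq_one_left hmul
      exact ⟨(A + 1) * q ^ (B + 1), B + 1, by rw [hinv, hcomm (B + 1) (A + 1)]⟩ }
  have hS : (⊤ : Subgroup G) ≤ S := by
    rw [← hgen]
    refine (Subgroup.closure_le S).mpr ?_
    intro g hg
    rcases hg with h | h
    · exact ⟨0, 1, by simp [h]⟩
    · exact ⟨1, 0, by simp [Set.mem_singleton_iff.mp h]⟩
  intro g
  exact hS (Subgroup.mem_top g)

end GroupPart

section VDM

/-- The obvious equivalence between `ZMod n` and `Fin n` for `n ≠ 0`. -/
def myZF (n : ℕ) [NeZero n] : ZMod n ≃ Fin n where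
  toFun z := ⟨z.val, ZMod.val_lt z⟩
  invFun i := ((i : ℕ) : ZMod n)
  left_inv z := ZMod.natCast_rightInverse z
  right_inv i := Fin.ext (ZMod.val_cast_of_lt i.isLt)

lemma myZF_val {n : ℕ} [NeZero n] (z : ZMod n) : ((myZF n z : Fin n) : ℕ) = z.val := rfl

lemma myZF_symm_val {n : ℕ} [NeZero n] (i : Fin n) : ((myZF n).symm i).val = (i : ℕ) :=
  ZMod.val_cast_of_lt i.isLt

lemma vdm_zero {l : Type} [Field l] {e : ℕ} [NeZero e] {ηl : l} (hord : orderOf ηl = e)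
    {u : ZMod e → l} (hu : ∀ j : ZMod e, ∑ a : ZMod e, ηl ^ (j.val * a.val) * u a = 0) :
    u = 0 := by
  have hinj : Function.Injective (fun i : Fin e => ηl ^ (i : ℕ)) := by
    intro i i' hii
    refine Fin.ext (pow_injOn_Iio_orderOf ?_ ?_ hii)
    · exact Set.mem_Iio.mpr (hord ▸ i.isLt)
    · exact Set.mem_Iio.mpr (hord ▸ i'.isLt)
  have hv := Matrix.eq_zero_of_forall_pow_sum_mul_pow_eq_zero (R := l) hinj
    (v := fun j : Fin e => u ((myZF e).symm j)) ?_
  · funext z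
    have := congrFun hv (myZF e z)
    simpa [Equiv.symm_apply_apply] using this
  · intro i
    have h := hu ((myZF e).symm i)
    rw [← Equiv.sum_comp (myZF e).symm (fun a => ηl ^ (((myZF e).symm i).val * a.val) * u a)] at h
    calc ∑ j : Fin e, u ((myZF e).symm j) * (ηl ^ (j : ℕ)) ^ (i : ℕ)
        = ∑ j : Fin e, ηl ^ (((myZF e).symm i).val * ((myZF e).symm j).val) * u ((myZF e).symm j) := by
          refine Finset.sum_congr rfl fun j _ => ?_
          rw [myZF_symm_val, myZF_symm_val, ← pow_mul, mul_comm (i : ℕ) (j : ℕ), mul_comm]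
      _ = 0 := h

end VDM

open DirectSum

/-- With `G = T ⋊ Σ` presented by `σ, τ` with `σ^f = 1`, `τ^e = 1`, `στσ⁻¹ = τ^q`
(`q = |k|`, `f = [l:k]`, `e = ord(η)` for `η = θ(τ)` a root of unity of order `e`),
and `l(r)` the `k[G]`-module with underlying `k`-space `l`, `σ` acting by `x ↦ x^q`
and `τ` by multiplication by `η^r`, the direct sum `⊕_{i ∈ ℤ/eℤ} l(i)` is a free
`k[G]`-module of rank `1`. -/
theorem stmt_7 (p : ℕ) (hp : p.Prime)
    (k l : Type) [Field k] [Fintype k] [CharP k p] [Field l] [Fintype l] [Algebra k l]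
    (q e f : ℕ) (hq : q = Fintype.card k) (hf : f = Module.finrank k l) (he : 0 < e)
    (G : Type) [Group G] [Fintype G] (σg τg : G)
    (hσ : orderOf σg = f) (hτ : orderOf τg = e)
    (hrel : σg * τg * σg⁻¹ = τg ^ q)
    (hgen : Subgroup.closure ({σg, τg} : Set G) = ⊤)
    (hcard : Nat.card G = e * f)
    (η : lˣ) (hη : orderOf η = e)
    (ρ : ℤ → Representation k G l)
    (hρσ : ∀ (r : ℤ) (x : l), ρ r σg x = x ^ q)
    (hρτ : ∀ (r : ℤ) (x : l), ρ r τg x = ((η ^ r : lˣ) : l) * x) :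
    Nonempty ((⨁ i : ZMod e, (ρ (i.val : ℤ)).asModule)
      ≃ₗ[MonoidAlgebra k G] MonoidAlgebra k G) := by
  classical
  subst hq hf
  haveI : NeZero e := ⟨he.ne'⟩
  have hf0 : 0 < Module.finrank k l := Module.finrank_pos
  haveI : NeZero (Module.finrank k l) := ⟨hf0.ne'⟩
  obtain ⟨α, hα⟩ := exists_normal_basis_vec (k := k) (l := l)
  -- normal basis independence, indexed by `ZMod f`
  have hNB : ∀ cc : ZMod (Module.finrank k l) → k,
      (∑ b, cc b • α ^ Fintype.card k ^ b.val) = 0 → ∀ b, cc b = 0 := by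
    intro cc hsum b
    have hLI := Fintype.linearIndependent_iff.mp hα
    have h2 : ∑ i : Fin (Module.finrank k l),
        cc ((myZF _).symm i) • α ^ Fintype.card k ^ (i : ℕ) = 0 := by
      rw [← Equiv.sum_comp (myZF (Module.finrank k l)).symm
        (fun b => cc b • α ^ Fintype.card k ^ b.val)] at hsum
      rw [← hsum]
      exact Finset.sum_congr rfl fun i _ => by rw [myZF_symm_val]
    have := hLI _ h2 (myZF _ b)
    simpa using this
  -- the group is covered by the monomials τ^a σ^b
  have hsur := gen_surj he hf0 hσ hτ hrel hgen
  set Φ : ZMod e × ZMod (Module.finrank k l) → G :=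
    fun ab => τg ^ (ab.1.val) * σg ^ (ab.2.val) with hΦ
  have hΦsurj : Function.Surjective Φ := by
    intro g
    obtain ⟨a, b, rfl⟩ := hsur g
    refine ⟨((a : ZMod e), (b : ZMod (Module.finrank k l))), ?_⟩
    show τg ^ ((a : ZMod e)).val * σg ^ ((b : ZMod (Module.finrank k l))).val = _
    rw [ZMod.val_natCast, ZMod.val_natCast, ← hτ, ← hσ, pow_mod_orderOf, pow_mod_orderOf]
  have hcards : Fintype.card (ZMod e × ZMod (Module.finrank k l)) = Fintype.card G := by
    rw [Fintype.card_prod, ZMod.card, ZMod.card, ← Nat.card_eq_fintype_card, hcard]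
  have hΦbij : Function.Bijective Φ :=
    (Fintype.bijective_iff_surjective_and_card Φ).mpr ⟨hΦsurj, hcards⟩
  set ΦE : (ZMod e × ZMod (Module.finrank k l)) ≃ G := Equiv.ofBijective Φ hΦbij with hΦE
  -- action formulas
  have hρσpow : ∀ (r : ℤ) (b : ℕ) (x : l),
      ((ρ r) σg ^ b) x = x ^ Fintype.card k ^ b := by
    intro r b x
    induction b generalizing x with
    | zero => simp
    | succ b ih =>
      rw [pow_succ', Module.End.mul_apply, ih, hρσ, ← pow_mul, ← pow_succ]
  have hρτpow : ∀ (n a : ℕ) (x : l),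
      ((ρ (n : ℤ)) τg ^ a) x = (η : l) ^ (n * a) * x := by
    intro n a x
    induction a generalizing x with
    | zero => simp
    | succ a ih =>
      rw [pow_succ, Module.End.mul_apply, hρτ,
        show ((η ^ ((n : ℕ) : ℤ) : lˣ) : l) = (η : l) ^ n by
          rw [zpow_natCast]; exact Units.val_pow_eq_pow_val η n,
        ih, ← mul_assoc, ← pow_add, show n * a + n = n * (a + 1) by ring]
  have hact : ∀ (j a : ZMod e) (b : ZMod (Module.finrank k l)) (x : l),
      (ρ ((j.val : ℕ) : ℤ)) (Φ (a, b)) x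
        = (η : l) ^ (j.val * a.val) * x ^ Fintype.card k ^ b.val := by
    intro j a b x
    show (ρ ((j.val : ℕ) : ℤ)) (τg ^ a.val * σg ^ b.val) x = _
    rw [map_mul, map_pow, map_pow, Module.End.mul_apply, hρσpow, hρτpow]
  -- the module and the cyclic vector
  set Mfam : ZMod e → Type := fun i : ZMod e => (ρ (i.val : ℤ)).asModule with hMfam
  set m₀ : ⨁ i, Mfam i := ∑ i, DirectSum.of Mfam i (α : Mfam i) with hm₀
  have hm₀j : ∀ j : ZMod e, m₀ j = (α : Mfam j) := by
    intro j
    rw [hm₀, DFinsupp.finset_sum_apply]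
    rw [Finset.sum_eq_single j]
    · exact DirectSum.of_eq_same j _
    · intro i _ hne
      exact DirectSum.of_eq_of_ne i j _ hne.symm
    · intro h; exact absurd (Finset.mem_univ j) h
  have hsingle : ∀ (n : ℤ) (g : G) (c : k) (x : (ρ n).asModule),
      (MonoidAlgebra.single g c : MonoidAlgebra k G) • x = c • ((ρ n) g x) := by
    intro n g c x
    show ((ρ n).asAlgebraHom (MonoidAlgebra.single g c)) x = c • ((ρ n) g x)
    rw [Representation.asAlgebraHom_single]
    rfl
  have hkA : ∀ (c : k) (r : MonoidAlgebra k G) (u : ⨁ i, Mfam i),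
      (c • r) • u = c • (r • u) := by
    intro c r u
    refine DFunLike.ext _ _ fun j => ?_
    rw [DFinsupp.smul_apply, DFinsupp.smul_apply, DFinsupp.smul_apply]
    show ((ρ (j.val : ℤ)).asAlgebraHom (c • r)) (u j) = c • ((ρ (j.val : ℤ)).asAlgebraHom r) (u j)
    rw [map_smul]
    rfl
  -- the two maps
  set φ : MonoidAlgebra k G →ₗ[MonoidAlgebra k G] (⨁ i, Mfam i) :=
    LinearMap.toSpanSingleton (MonoidAlgebra k G) _ m₀ with hφ
  set v0 : G → (⨁ i, Mfam i) := fun g => (MonoidAlgebra.single g 1 : MonoidAlgebra k G) • m₀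
    with hv0
  set Lk : (G →₀ k) →ₗ[k] (⨁ i, Mfam i) := Finsupp.linearCombination k v0 with hLk
  have hφk : ∀ x : G →₀ k, φ (MonoidAlgebra.ofCoeff x) = Lk x := by
    have hφk' : ((⟨⟨fun x : G →₀ k => φ (MonoidAlgebra.ofCoeff x), fun a b => map_add φ (MonoidAlgebra.ofCoeff a) (MonoidAlgebra.ofCoeff b)⟩,
        fun c x => by
          show φ (MonoidAlgebra.ofCoeff (c • x)) = c • φ (MonoidAlgebra.ofCoeff x)
          rw [hφ, LinearMap.toSpanSingleton_apply, LinearMap.toSpanSingleton_apply]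
          exact hkA c (MonoidAlgebra.ofCoeff x) m₀⟩ : (G →₀ k) →ₗ[k] (⨁ i, Mfam i)) : (G →₀ k) →ₗ[k] _) = Lk := by
      refine Finsupp.lhom_ext fun g c => ?_
      show φ (MonoidAlgebra.ofCoeff (Finsupp.single g c)) = Lk (Finsupp.single g c)
      rw [hLk, Finsupp.linearCombination_single, hφ, LinearMap.toSpanSingleton_apply, hv0]
      have hsc : (MonoidAlgebra.ofCoeff (Finsupp.single g c) : MonoidAlgebra k G)
          = c • (MonoidAlgebra.single g 1 : MonoidAlgebra k G) := by
        rw [MonoidAlgebra.ofCoeff_single, MonoidAlgebra.smul_single, smul_eq_mul, mul_one]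
      rw [hsc, hkA]
    intro x
    exact DFunLike.congr_fun hφk' x
  -- componentwise formula
  have hLkapp : ∀ (x : G →₀ k) (j : ZMod e),
      Lk x j = ∑ g : G, x g • ((ρ ((j.val : ℕ) : ℤ)) g α) := by
    intro x j
    rw [hLk, Finsupp.linearCombination_apply, Finsupp.sum_fintype _ _ (fun g => by simp)]
    rw [DFinsupp.finset_sum_apply]
    refine Finset.sum_congr rfl fun g _ => ?_
    rw [DFinsupp.smul_apply, DFinsupp.smul_apply, hm₀j]
    congr 1
    exact (hsingle _ g 1 α).trans (one_smul _ _)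
  -- injectivity
  have hinj : Function.Injective Lk := by
    refine (injective_iff_map_eq_zero Lk).mpr ?_
    intro x hx
    set u : ZMod e → l := fun a => ∑ b : ZMod (Module.finrank k l),
      x (Φ (a, b)) • α ^ Fintype.card k ^ b.val with hu
    have hu0 : u = 0 := by
      refine vdm_zero (ηl := (η : l)) (by rw [orderOf_units]; exact hη) ?_
      intro j
      have hcomp : (0 : l) = Lk x j := by rw [hx]; rfl
      rw [hLkapp] at hcomp
      rw [← Equiv.sum_comp ΦE (fun g => x g • ((ρ ((j.val : ℕ) : ℤ)) g α))] at hcomp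
      rw [Fintype.sum_prod_type] at hcomp
      rw [hcomp]
      refine Finset.sum_congr rfl fun a _ => ?_
      rw [hu, Finset.mul_sum]
      refine Finset.sum_congr rfl fun b _ => ?_
      have hΦEab : ΦE (a, b) = Φ (a, b) := rfl
      rw [hΦEab, hact, mul_smul_comm]
    have hxa : ∀ a b, x (Φ (a, b)) = 0 := by
      intro a b
      have h0 := congrFun hu0 a
      rw [hu, Pi.zero_apply] at h0
      exact hNB _ h0 b
    refine Finsupp.ext fun g => ?_
    obtain ⟨ab, rfl⟩ := ΦE.surjective g
    show x (Φ (ab.1, ab.2)) = 0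
    exact hxa ab.1 ab.2
  -- surjectivity via dimension count
  haveI : FiniteDimensional k (G →₀ k) :=
    Module.Finite.equiv (Finsupp.linearEquivFunOnFinite k k G).symm
  have asmE : (i : ZMod e) → (Mfam i ≃ₗ[k] l) := fun i =>
    { Representation.asModuleEquiv (ρ (i.val : ℤ)) with map_smul' := fun c x => rfl }
  set EM : (⨁ i, Mfam i) ≃ₗ[k] ((i : ZMod e) → l) :=
    (DirectSum.linearEquivFunOnFintype k (ZMod e) Mfam).trans
      (LinearEquiv.piCongrRight asmE) with hEM
  haveI : FiniteDimensional k (⨁ i, Mfam i) := Module.Finite.equiv EM.symm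
  have hfrM : Module.finrank k (⨁ i, Mfam i) = e * Module.finrank k l := by
    rw [EM.finrank_eq, Module.finrank_pi_fintype, Finset.sum_const, Finset.card_univ,
      ZMod.card, smul_eq_mul]
  have hfrD : Module.finrank k (G →₀ k) = e * Module.finrank k l := by
    rw [Module.finrank_finsupp_self, ← Nat.card_eq_fintype_card, hcard]
  have hsurL : Function.Surjective Lk := by
    have hinj' : Function.Injective (EM.toLinearMap ∘ₗ Lk) := EM.injective.comp hinj
    have hrange := LinearMap.finrank_range_of_inj hinj'
    have hrt : LinearMap.range (EM.toLinearMap ∘ₗ Lk) = ⊤ :=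
      Submodule.eq_top_of_finrank_eq (by rw [hrange, hfrD, ← EM.finrank_eq, hfrM])
    intro y
    obtain ⟨x, hx⟩ := LinearMap.range_eq_top.mp hrt (EM y)
    exact ⟨x, EM.injective hx⟩
  have hφbij : Function.Bijective φ := by
    have hco : ⇑φ ∘ MonoidAlgebra.ofCoeff = ⇑Lk := funext hφk
    show Function.Bijective ⇑φ
    rw [← Function.Bijective.of_comp_iff _ (g := MonoidAlgebra.ofCoeff)
      MonoidAlgebra.coeffEquiv.symm.bijective, hco]
    exact ⟨hinj, hsurL⟩
  exact ⟨(LinearEquiv.ofBijective φ hφbij).symm⟩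
end

section
/- With notation as above, the base change l(r) ⊗_{𝔽_p[G]} l[G] is isomorphic as an l[G]-module to the direct sum ⊕_{j ∈ ℤ/gℤ} L_j where L_j is an l-line on which T acts via the character θ^{r p^j}, and σ permutes the lines by (x_j) ↦ (x_{j+a}), where a = [k : 𝔽_p] and g = a·f. -/
open scoped TensorProduct



/-- A `G`-equivariant `k`-linear equivalence induces a `MonoidAlgebra k G`-linear
equivalence of the associated modules. -/
noncomputable def Representation.equivAsModule {k G V W : Type*} [CommSemiring k] [Monoid G]
    [AddCommMonoid V] [Module k V] [AddCommMonoid W] [Module k W]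
    (ρ : Representation k G V) (ρ' : Representation k G W)
    (e : V ≃ₗ[k] W) (h : ∀ g v, e (ρ g v) = ρ' g (e v)) :
    ρ.asModule ≃ₗ[MonoidAlgebra k G] ρ'.asModule where
  toFun x := ρ'.asModuleEquiv.symm (e (ρ.asModuleEquiv x))
  invFun y := ρ.asModuleEquiv.symm (e.symm (ρ'.asModuleEquiv y))
  left_inv x := by simp
  right_inv y := by simp
  map_add' x y := by simp [map_add]
  map_smul' r x := by
    have key : ∀ (r : MonoidAlgebra k G) (v : V),
        e (ρ.asAlgebraHom r v) = ρ'.asAlgebraHom r (e v) := by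
      intro r
      induction r using MonoidAlgebra.induction_linear with
      | zero => intro v; simp
      | add f g hf hg => intro v; simp [map_add, LinearMap.add_apply, hf, hg]
      | single g c =>
        intro v
        rw [Representation.asAlgebraHom_single, Representation.asAlgebraHom_single]
        simp [map_smul, h]
    apply ρ'.asModuleEquiv.injective
    simp only [RingHom.id_apply, Representation.asModuleEquiv_map_smul,
      AddEquiv.apply_symm_apply]
    exact key r _

variable (p : ℕ) [Fact p.Prime] (l : Type) [Field l] [CharP l p] [Algebra (ZMod p) l]

/-- `x ↦ x ^ p ^ n` as a `ZMod p`-linear map. -/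
noncomputable def psiLM (n : ℕ) : l →ₗ[ZMod p] l where
  toFun x := x ^ p ^ n
  map_add' x y := add_pow_char_pow x y p n
  map_smul' z x := by
    simp only [RingHom.id_apply, Algebra.smul_def, mul_pow, ← map_pow,
      ZMod.pow_card_pow]

@[simp] lemma psiLM_apply (n : ℕ) (x : l) : psiLM p l n x = x ^ p ^ n := rfl

variable (g : ℕ)

/-- The base-change comparison map `l ⊗[𝔽_p] l → (ZMod g → l)`,
`c ⊗ x ↦ (c * x ^ p ^ j)_j`. -/
noncomputable def PhiLM : l ⊗[ZMod p] l →ₗ[l] (ZMod g → l) :=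
  TensorProduct.AlgebraTensorModule.lift
    (LinearMap.toSpanSingleton l _ (LinearMap.pi fun j : ZMod g => psiLM p l j.val))

@[simp] lemma PhiLM_tmul (c x : l) (j : ZMod g) :
    PhiLM p l g (c ⊗ₜ[ZMod p] x) j = c * x ^ p ^ j.val := by
  simp [PhiLM, LinearMap.toSpanSingleton_apply, smul_eq_mul]

/-- The base change `l(r) ⊗_{𝔽_p[G]} l[G]` (realised as `l ⊗_{𝔽_p} l(r)` with `G`
acting on the second factor and `l` on the first) is `l[G]`-isomorphic to
`⊕_{j ∈ ℤ/gℤ} L_j`, where `L_j` is an `l`-line on which `T` acts via `θ^{r p^j}`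
and `σ` permutes the lines by `(x_j) ↦ (x_{j+a})`, `a = [k : 𝔽_p]`, `g = a·f`. -/
theorem stmt_9 (p : ℕ) (hp : p.Prime)
    (k l : Type) [Field k] [Fintype k] [CharP k p] [Field l] [Fintype l] [Algebra k l]
    [Algebra (ZMod p) l]
    (q e f a g : ℕ) (hq : q = Fintype.card k) (ha : Fintype.card k = p ^ a)
    (hf : f = Module.finrank k l) (hg : g = a * f) (he : 0 < e)
    (G : Type) [Group G] [Fintype G] (σg τg : G)
    (hσ : orderOf σg = f) (hτ : orderOf τg = e)
    (hrel : σg * τg * σg⁻¹ = τg ^ q)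
    (hgen : Subgroup.closure ({σg, τg} : Set G) = ⊤)
    (hcard : Nat.card G = e * f)
    (η : lˣ) (hη : orderOf η = e)
    (r : ℤ)
    (ρp : Representation (ZMod p) G l)
    (hρσ : ∀ x : l, ρp σg x = x ^ q)
    (hρτ : ∀ x : l, ρp τg x = ((η ^ r : lˣ) : l) * x)
    (ρbar : Representation l G (l ⊗[ZMod p] l))
    (hbar : ∀ (g₀ : G) (c x : l), ρbar g₀ (c ⊗ₜ[ZMod p] x) = c ⊗ₜ[ZMod p] (ρp g₀ x))
    (ρ' : Representation l G (ZMod g → l))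
    (hσ' : ∀ (x : ZMod g → l) (j : ZMod g), ρ' σg x j = x (j + (a : ZMod g)))
    (hτ' : ∀ (x : ZMod g → l) (j : ZMod g),
      ρ' τg x j = ((η ^ (r * (p : ℤ) ^ j.val) : lˣ) : l) * x j) :
    Nonempty (ρbar.asModule ≃ₗ[MonoidAlgebra l G] ρ'.asModule) := by
  haveI : Fact p.Prime := ⟨hp⟩
  haveI : DecidableEq l := Classical.decEq l
  haveI : CharP l p := charP_of_injective_algebraMap (algebraMap (ZMod p) l).injective p
  -- basic numerology
  have ha1 : 0 < a := by
    have hk2 : 1 < Fintype.card k := Fintype.one_lt_card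
    rcases Nat.eq_zero_or_pos a with h0 | h
    · rw [h0, pow_zero] at ha; omega
    · exact h
  have hf1 : 0 < f := by
    rw [hf]; exact Module.finrank_pos
  have hg0 : 0 < g := by rw [hg]; positivity
  haveI : NeZero g := ⟨hg0.ne'⟩
  have hcardl : Fintype.card l = p ^ g := by
    have h1 : Fintype.card l = Fintype.card k ^ Module.finrank k l :=
      Module.card_eq_pow_finrank (K := k) (V := l)
    rw [h1, ha, ← hf, ← pow_mul, ← hg]
  have hfr : Module.finrank (ZMod p) l = g := by
    have h2 : Fintype.card l = p ^ Module.finrank (ZMod p) l := by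
      have := Module.card_eq_pow_finrank (K := ZMod p) (V := l)
      rwa [ZMod.card p] at this
    exact Nat.pow_right_injective hp.two_le (h2.symm.trans hcardl)
  have hpowg : ∀ x : l, x ^ p ^ g = x := fun x => by
    rw [← hcardl]; exact FiniteField.pow_card x
  -- Frobenius exponent is periodic mod g
  have hkey : ∀ (s t : ℕ) (x : l), x ^ p ^ (g * s + t) = x ^ p ^ t := by
    intro s
    induction s with
    | zero => simp
    | succ n ih =>
      intro t x
      have h3 : g * (n + 1) + t = g + (g * n + t) := by ring
      rw [h3, pow_add, pow_mul, hpowg, ih]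
  have hmod : ∀ (x : l) (m : ℕ), x ^ p ^ m = x ^ p ^ (m % g) := by
    intro x m
    conv_lhs => rw [← Nat.div_add_mod m g]
    exact hkey _ _ x
  -- basis of l over ZMod p indexed by ZMod g
  haveI : Module.Finite (ZMod p) l := Module.finite_of_finrank_pos (by rw [hfr]; exact hg0)
  let eidx : Fin (Module.finrank (ZMod p) l) ≃ ZMod g :=
    Fintype.equivOfCardEq (by simp [hfr, ZMod.card])
  let B : Module.Basis (ZMod g) (ZMod p) l := (Module.finBasis (ZMod p) l).reindex eidx
  -- the Frobenius-power monoid homs are pairwise distinct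
  obtain ⟨ξ, hξ⟩ := IsCyclic.exists_generator (α := lˣ)
  have hordξ : orderOf ξ = p ^ g - 1 := by
    rw [orderOf_eq_card_of_forall_mem_zpowers hξ, Nat.card_eq_fintype_card, Fintype.card_units, hcardl]
  have hFinj : Function.Injective fun j : ZMod g => (powMonoidHom (p ^ j.val) : l →* l) := by
    rcases Nat.lt_or_ge g 2 with hg1 | hg2
    · intro j1 j2 _
      have : g = 1 := by omega
      subst this
      exact Subsingleton.elim j1 j2
    · intro j1 j2 hEq
      have hvlt : ∀ j : ZMod g, p ^ (j : ZMod g).val < p ^ g - 1 := by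
        intro j
        have h1 : p ^ j.val ≤ p ^ (g - 1) :=
          Nat.pow_le_pow_right hp.pos (by have := ZMod.val_lt j; omega)
        have h2 : p ^ (g - 1) < p ^ g - 1 := by
          have h3 : 2 ≤ p ^ (g - 1) := by
            calc 2 ≤ p := hp.two_le
            _ ≤ p ^ (g - 1) := Nat.le_self_pow (by omega) p
          have h4 : p ^ g = p * p ^ (g - 1) := by
            conv_lhs => rw [show g = 1 + (g - 1) by omega, pow_add, pow_one]
          have h5 : 2 * p ^ (g - 1) ≤ p * p ^ (g - 1) :=
            Nat.mul_le_mul_right _ hp.two_le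
          omega
        omega
      have hx : (ξ : l) ^ p ^ j1.val = (ξ : l) ^ p ^ j2.val := by
        have := DFunLike.congr_fun hEq (ξ : l)
        simpa [powMonoidHom] using this
      have hu : ξ ^ p ^ j1.val = ξ ^ p ^ j2.val := by
        ext; push_cast; exact hx
      have hpe : p ^ j1.val = p ^ j2.val :=
        pow_injOn_Iio_orderOf (x := ξ)
          (by simp only [Set.mem_Iio, hordξ]; exact hvlt j1)
          (by simp only [Set.mem_Iio, hordξ]; exact hvlt j2) hu
      have hval : j1.val = j2.val := Nat.pow_right_injective hp.two_le hpe
      exact ZMod.val_injective g hval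
  -- the Moore matrix and independence of its rows
  let A : Matrix (ZMod g) (ZMod g) l := Matrix.of fun j i => (B i) ^ p ^ j.val
  have hrows : LinearIndependent l (fun j => A j) := by
    have hchar := (linearIndependent_monoidHom l l).comp _ hFinj
    rw [Fintype.linearIndependent_iff] at hchar ⊢
    intro d hd
    apply hchar d
    funext x
    have hx : ∀ n : ℕ, x ^ p ^ n = ∑ i, B.repr x i • (B i ^ p ^ n) := by
      intro n
      have h6 : (psiLM p l n) x = ∑ i, B.repr x i • (psiLM p l n) (B i) := by
        conv_lhs => rw [← B.sum_repr x]
        rw [map_sum]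
        simp [map_smul]
      simpa using h6
    have hdi : ∀ i, ∑ j, d j * A j i = 0 := fun i => by
      simpa using congrFun hd i
    simp only [Finset.sum_apply, Pi.smul_apply, Function.comp_apply, powMonoidHom_apply,
      smul_eq_mul, Pi.zero_apply]
    calc ∑ j, d j * x ^ p ^ (j : ZMod g).val
        = ∑ j, ∑ i, B.repr x i • (d j * A j i) := by
          refine Finset.sum_congr rfl fun j _ => ?_
          rw [hx j.val, Finset.mul_sum]
          refine Finset.sum_congr rfl fun i _ => ?_
          simp only [A, Matrix.of_apply]
          exact mul_smul_comm _ _ _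
      _ = ∑ i, B.repr x i • ∑ j, d j * A j i := by
          rw [Finset.sum_comm]
          exact Finset.sum_congr rfl fun i _ => (Finset.smul_sum).symm
      _ = 0 := by simp [hdi]
  have hAunit : IsUnit A := Matrix.linearIndependent_rows_iff_isUnit.mp hrows
  have hAinj : Function.Injective A.mulVec := Matrix.mulVec_injective_iff_isUnit.mpr hAunit
  -- the comparison map and its bijectivity
  set Φ : l ⊗[ZMod p] l →ₗ[l] (ZMod g → l) := PhiLM p l g with hΦdef
  let TB : Module.Basis (ZMod g) l (l ⊗[ZMod p] l) := Algebra.TensorProduct.basis l B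
  have hΦTB : ∀ i j : ZMod g, Φ (TB i) j = A j i := by
    intro i j
    rw [show TB i = (1 : l) ⊗ₜ[ZMod p] B i from Algebra.TensorProduct.basis_apply B i]
    simp [hΦdef, A]
  have hinj : Function.Injective Φ := by
    rw [← LinearMap.ker_eq_bot, LinearMap.ker_eq_bot']
    intro t ht
    have hc : A.mulVec (fun i => TB.repr t i) = 0 := by
      funext j
      have h7 : Φ t j = 0 := by rw [ht]; rfl
      calc A.mulVec (fun i => TB.repr t i) j
          = ∑ i, A j i * TB.repr t i := by
            simp [Matrix.mulVec, dotProduct]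
        _ = Φ t j := by
            conv_rhs => rw [← TB.sum_repr t]
            rw [map_sum, Finset.sum_apply]
            refine Finset.sum_congr rfl fun i _ => ?_
            rw [map_smul, Pi.smul_apply, hΦTB, smul_eq_mul, mul_comm]
        _ = 0 := h7
    have hc0 : (fun i => TB.repr t i) = 0 := hAinj (by rw [hc, Matrix.mulVec_zero])
    have h9 : TB.repr t = 0 := Finsupp.ext fun i => congrFun hc0 i
    have h10 : TB.repr t = TB.repr 0 := by rw [h9, map_zero]
    exact TB.repr.injective h10
  haveI : FiniteDimensional l (l ⊗[ZMod p] l) :=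
    Module.finite_of_finrank_pos (by rw [Module.finrank_baseChange, hfr]; exact hg0)
  have hfreq : Module.finrank l (l ⊗[ZMod p] l) = Module.finrank l (ZMod g → l) := by
    rw [Module.finrank_baseChange, hfr, Module.finrank_pi, ZMod.card]
  have hbij : Function.Bijective Φ :=
    ⟨hinj, (LinearMap.injective_iff_surjective_of_finrank_eq_finrank hfreq).mp hinj⟩
  let E : (l ⊗[ZMod p] l) ≃ₗ[l] (ZMod g → l) := LinearEquiv.ofBijective Φ hbij
  -- equivariance
  have hΦtmul : ∀ (c x : l) (j : ZMod g), Φ (c ⊗ₜ[ZMod p] x) j = c * x ^ p ^ j.val := by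
    intro c x j; rw [hΦdef]; exact PhiLM_tmul p l g c x j
  have hσcase : ∀ t, Φ (ρbar σg t) = ρ' σg (Φ t) := by
    intro t
    induction t using TensorProduct.induction_on with
    | zero => simp
    | tmul c x =>
      rw [hbar]
      funext j
      rw [hΦtmul, hσ' (Φ (c ⊗ₜ[ZMod p] x)) j, hΦtmul, hρσ]
      have hv : (j + (a : ZMod g)).val = (a + j.val) % g := by
        rw [ZMod.val_add, ZMod.val_natCast]
        conv_rhs => rw [Nat.add_mod, Nat.mod_eq_of_lt (ZMod.val_lt j)]
        rw [Nat.add_comm]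
      rw [hv, ← hmod x (a + j.val), ← pow_mul, pow_add, hq, ha]
    | add t1 t2 h1 h2 => simp only [map_add, h1, h2]
  have hτcase : ∀ t, Φ (ρbar τg t) = ρ' τg (Φ t) := by
    intro t
    induction t using TensorProduct.induction_on with
    | zero => simp
    | tmul c x =>
      rw [hbar]
      funext j
      rw [hΦtmul, hτ' (Φ (c ⊗ₜ[ZMod p] x)) j, hΦtmul, hρτ]
      have hu : ((η ^ (r * (p : ℤ) ^ j.val) : lˣ) : l) = ((η ^ r : lˣ) : l) ^ p ^ j.val := by
        have : η ^ (r * (p : ℤ) ^ j.val) = (η ^ r) ^ (p ^ j.val : ℕ) := by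
          rw [zpow_mul]
          norm_cast
        rw [this, Units.val_pow_eq_pow_val]
      rw [hu, mul_pow]
      ring
    | add t1 t2 h1 h2 => simp only [map_add, h1, h2]
  have hcomm : ∀ (g₀ : G) (t : l ⊗[ZMod p] l), Φ (ρbar g₀ t) = ρ' g₀ (Φ t) := by
    intro g₀
    have hmem : g₀ ∈ Subgroup.closure ({σg, τg} : Set G) := by
      rw [hgen]; exact Subgroup.mem_top g₀
    refine Subgroup.closure_induction
      (p := fun x _ => ∀ t, Φ (ρbar x t) = ρ' x (Φ t)) ?_ ?_ ?_ ?_ hmem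
    · intro x hx
      rcases hx with h | h
      · subst h; exact hσcase
      · rw [Set.mem_singleton_iff] at h; subst h; exact hτcase
    · intro t; rw [map_one, map_one]; rfl
    · intro x y _ _ hx hy t
      rw [map_mul, map_mul]
      simp only [Module.End.mul_apply]
      rw [hx, hy]
    · intro x _ hx t
      have h1 : Φ (ρbar x (ρbar x⁻¹ t)) = ρ' x (Φ (ρbar x⁻¹ t)) := hx _
      have h2 : ρbar x (ρbar x⁻¹ t) = t := by
        rw [← Module.End.mul_apply, ← map_mul, mul_inv_cancel, map_one]; rfl
      rw [h2] at h1
      have h3 : ρ' x⁻¹ (ρ' x (Φ (ρbar x⁻¹ t))) = Φ (ρbar x⁻¹ t) := by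
        rw [← Module.End.mul_apply, ← map_mul, inv_mul_cancel, map_one]; rfl
      rw [← h3, h1]
  exact ⟨Representation.equivAsModule ρbar ρ' E fun g₀ v => hcomm g₀ v⟩
end

section
/- With notation as above, the 𝔽_p[G]-modules l(r) and l(s) are isomorphic if and only if the characters θ^r and θ^s of T lie in the same orbit under the p-power Frobenius, i.e., if and only if s ≡ r·p^j (mod e) for some integer j. -/
open Polynomial

/-- Module isos over the monoid algebra correspond to intertwining linear equivs. -/
lemma rep_iso_iff {k G V W : Type} [CommSemiring k] [Monoid G] [AddCommMonoid V] [AddCommMonoid W]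
    [Module k V] [Module k W] (ρ : Representation k G V) (ρ' : Representation k G W) :
    Nonempty (ρ.asModule ≃ₗ[MonoidAlgebra k G] ρ'.asModule) ↔
      ∃ e : V ≃ₗ[k] W, ∀ g v, e (ρ g v) = ρ' g (e v) := by
  constructor
  · rintro ⟨F⟩
    refine ⟨{ (ρ.asModuleEquiv.symm.toAddEquiv.trans (F.toAddEquiv.trans ρ'.asModuleEquiv.toAddEquiv)) with
              map_smul' := ?_ }, ?_⟩
    · intro c v
      show ρ'.asModuleEquiv (F (ρ.asModuleEquiv.symm (c • v)))
          = c • ρ'.asModuleEquiv (F (ρ.asModuleEquiv.symm v))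
      rw [ρ.asModuleEquiv_symm_map_smul, F.map_smul, ρ'.asModuleEquiv_map_smul,
        AlgHom.commutes, Module.algebraMap_end_apply]
    · intro g v
      show ρ'.asModuleEquiv (F (ρ.asModuleEquiv.symm (ρ g v)))
          = ρ' g (ρ'.asModuleEquiv (F (ρ.asModuleEquiv.symm v)))
      rw [ρ.asModuleEquiv_symm_map_rho, F.map_smul, ρ'.asModuleEquiv_map_smul,
        Representation.asAlgebraHom_of]
  · rintro ⟨e, he⟩
    have key : ∀ (m : MonoidAlgebra k G) (v : V),
        e (ρ.asAlgebraHom m v) = ρ'.asAlgebraHom m (e v) := by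
      intro m
      induction m using MonoidAlgebra.induction_on with
      | of g => intro v; rw [Representation.asAlgebraHom_of, Representation.asAlgebraHom_of, he]
      | add f g hf hg => intro v; simp only [map_add, LinearMap.add_apply, hf, hg, e.map_add]
      | smul r f hf => intro v
                       simp only [map_smul, LinearMap.smul_apply, e.map_smul, hf]
    exact ⟨{ toFun := fun x => ρ'.asModuleEquiv.symm (e (ρ.asModuleEquiv x))
             invFun := fun x => ρ.asModuleEquiv.symm (e.symm (ρ'.asModuleEquiv x))
             left_inv := fun x => by simp
             right_inv := fun x => by simp
             map_add' := fun x y => by simp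
             map_smul' := fun m x => by
               refine ρ'.asModuleEquiv.injective ?_
               rw [RingHom.id_apply, ρ'.asModuleEquiv_map_smul,
                 ρ'.asModuleEquiv.apply_symm_apply, ρ'.asModuleEquiv.apply_symm_apply,
                 ρ.asModuleEquiv_map_smul, key] }⟩

/-- In a finite field, any root of the minimal polynomial of `ζ` over `𝔽_p` is a
Frobenius iterate of `ζ`. -/
lemma root_minpoly_finite_field {p : ℕ} [Fact p.Prime] {l : Type} [Field l] [Fintype l]
    [Algebra (ZMod p) l] {ζ ξ : l} (h : (Polynomial.aeval ξ) (minpoly (ZMod p) ζ) = 0) :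
    ∃ j : ℕ, ξ = ζ ^ p ^ j := by
  classical
  haveI : CharP l p := charP_of_injective_algebraMap (algebraMap (ZMod p) l).injective p
  have hp1 : 1 < p := (Fact.out : p.Prime).one_lt
  have hζ : IsIntegral (ZMod p) ζ := IsIntegral.of_finite (ZMod p) ζ
  set P : (ZMod p)[X] := minpoly (ZMod p) ζ with hP
  set d : ℕ := P.natDegree with hd
  have hdpos : 0 < d := minpoly.natDegree_pos hζ
  -- frobenius iterates as algebra maps
  have hfrob : ∀ m : ℕ, ∃ ψ : l →ₐ[ZMod p] l, ∀ x, ψ x = x ^ p ^ m := by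
    intro m
    refine ⟨AlgHom.mk' (iterateFrobenius l p m) fun c x => ?_, fun x => rfl⟩
    rw [Algebra.smul_def, Algebra.smul_def, map_mul]
    congr 1
    exact RingHom.congr_fun
      (RingHom.ext_zmod ((iterateFrobenius l p m).comp (algebraMap (ZMod p) l))
        (algebraMap (ZMod p) l)) c
  have step1 : ∀ m : ℕ, (Polynomial.aeval (ζ ^ p ^ m)) P = 0 := by
    intro m
    obtain ⟨ψ, hψ⟩ := hfrob m
    rw [← hψ, Polynomial.aeval_algHom_apply, minpoly.aeval, map_zero]
  -- injectivity of j ↦ ζ ^ p ^ j on range d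
  have aux : ∀ i j : ℕ, i ≤ j → j < d → ζ ^ p ^ i = ζ ^ p ^ j → i = j := by
    intro i j hij hjd heq
    by_contra hne
    set m : ℕ := j - i with hm
    have hmpos : 0 < m := Nat.sub_pos_of_lt (lt_of_le_of_ne hij hne)
    have hmlt : m < d := lt_of_le_of_lt (Nat.sub_le j i) hjd
    have hζm : ζ ^ p ^ m = ζ := by
      have : (ζ ^ p ^ m) ^ p ^ i = ζ ^ p ^ i := by
        rw [← pow_mul, ← pow_add, hm, Nat.sub_add_cancel hij, ← heq]
      exact (iterateFrobenius l p i).injective (by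
        rw [iterateFrobenius_def, iterateFrobenius_def]; exact this)
    -- every element of 𝔽_p(ζ) satisfies x ^ p ^ m = x
    have hmem : ∀ x ∈ IntermediateField.adjoin (ZMod p) {ζ}, x ^ p ^ m = x := by
      intro x hx
      induction hx using IntermediateField.adjoin_induction with
      | mem x hx => rw [Set.mem_singleton_iff] at hx; rw [hx]; exact hζm
      | algebraMap c =>
          obtain ⟨ψ, hψ⟩ := hfrob m
          rw [← hψ]; exact ψ.commutes c
      | add x y hx hy hx' hy' =>
          rw [add_pow_char_pow, hx', hy']
      | inv x hx hx' => rw [inv_pow, hx']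
      | mul x y hx hy hx' hy' => rw [mul_pow, hx', hy']
    -- cardinality comparison
    set K := IntermediateField.adjoin (ZMod p) {ζ} with hK
    haveI : Fintype K := Fintype.ofFinite K
    have hcardK : Fintype.card K = p ^ d := by
      rw [Module.card_eq_pow_finrank (K := ZMod p) (V := K), ZMod.card,
        IntermediateField.adjoin.finrank hζ]
    set Q : l[X] := X ^ p ^ m - X with hQ
    have hQdeg : Q.natDegree = p ^ m := by
      rw [hQ, natDegree_sub_eq_left_of_natDegree_lt] <;>
        simp [Nat.one_lt_pow hmpos.ne' hp1]
    have hQne : Q ≠ 0 := by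
      intro h0
      rw [h0, natDegree_zero] at hQdeg
      have := Nat.one_lt_pow hmpos.ne' hp1
      omega
    have hroot : ∀ x : K, (x : l) ∈ Q.roots.toFinset := by
      intro x
      rw [Multiset.mem_toFinset, mem_roots hQne]
      show Q.eval (x : l) = 0
      rw [hQ]
      simp only [eval_sub, eval_pow, eval_X]
      rw [sub_eq_zero]
      exact hmem x.1 x.2
    have hinj2 : Function.Injective (fun x : K => (⟨(x : l), hroot x⟩ :
        {y // y ∈ Q.roots.toFinset})) := by
      intro a b hab
      exact Subtype.ext (by simpa using congrArg Subtype.val hab)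
    have hle : Fintype.card K ≤ p ^ m := by
      calc Fintype.card K ≤ Fintype.card {y // y ∈ Q.roots.toFinset} :=
            Fintype.card_le_of_injective _ hinj2
        _ = Q.roots.toFinset.card := Fintype.card_coe _
        _ ≤ Multiset.card Q.roots := Multiset.toFinset_card_le _
        _ ≤ Q.natDegree := Polynomial.card_roots' Q
        _ = p ^ m := hQdeg
    rw [hcardK] at hle
    have : d ≤ m := (Nat.pow_le_pow_iff_right hp1).mp hle
    omega
  -- the d distinct Frobenius iterates are all the roots
  set Pl : l[X] := P.map (algebraMap (ZMod p) l) with hPl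
  have hPlne : Pl ≠ 0 := by
    simpa [hPl] using (Polynomial.map_ne_zero_iff (algebraMap (ZMod p) l).injective).mpr
      (minpoly.ne_zero hζ)
  have hmemroots : ∀ x : l, (Polynomial.aeval x) P = 0 → x ∈ Pl.roots.toFinset := by
    intro x hx
    rw [Multiset.mem_toFinset, mem_roots hPlne]
    show Pl.eval x = 0
    rw [hPl, Polynomial.eval_map, ← Polynomial.aeval_def]
    exact hx
  set S : Finset l := (Finset.range d).image (fun j => ζ ^ p ^ j) with hS
  have hScard : S.card = d := by
    rw [hS, Finset.card_image_of_injOn, Finset.card_range]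
    intro i hi j hj hij
    rw [Finset.mem_coe, Finset.mem_range] at hi hj
    rcases le_total i j with hle | hle
    · exact aux i j hle hj hij
    · exact (aux j i hle hi hij.symm).symm
  have hsub : S ⊆ Pl.roots.toFinset := by
    intro x hx
    rw [hS, Finset.mem_image] at hx
    obtain ⟨j, _, rfl⟩ := hx
    exact hmemroots _ (step1 j)
  have hcards : Pl.roots.toFinset.card ≤ S.card := by
    rw [hScard]
    calc Pl.roots.toFinset.card ≤ Multiset.card Pl.roots := Multiset.toFinset_card_le _
      _ ≤ Pl.natDegree := Polynomial.card_roots' Pl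
      _ = d := by rw [hPl, Polynomial.natDegree_map]
  have hSeq : S = Pl.roots.toFinset := Finset.eq_of_subset_of_card_le hsub hcards
  have hxiS : ξ ∈ S := by rw [hSeq]; exact hmemroots ξ h
  rw [hS, Finset.mem_image] at hxiS
  obtain ⟨j, _, hj⟩ := hxiS
  exact ⟨j, hj.symm⟩
/-- The `𝔽_p[G]`-modules `l(r)` and `l(s)` are isomorphic iff the characters
`θ^r` and `θ^s` are in the same Frobenius orbit, i.e. iff `s ≡ r·p^j (mod e)`
for some `j`. -/
theorem stmt_10 (p : ℕ) (hp : p.Prime)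
    (k l : Type) [Field k] [Fintype k] [CharP k p] [Field l] [Fintype l] [Algebra k l]
    [Algebra (ZMod p) l]
    (q e f : ℕ) (hq : q = Fintype.card k) (hf : f = Module.finrank k l) (he : 0 < e)
    (G : Type) [Group G] [Fintype G] (σg τg : G)
    (hσ : orderOf σg = f) (hτ : orderOf τg = e)
    (hrel : σg * τg * σg⁻¹ = τg ^ q)
    (hgen : Subgroup.closure ({σg, τg} : Set G) = ⊤)
    (hcard : Nat.card G = e * f)
    (η : lˣ) (hη : orderOf η = e)
    (ρp : ℤ → Representation (ZMod p) G l)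
    (hρσ : ∀ (r : ℤ) (x : l), ρp r σg x = x ^ q)
    (hρτ : ∀ (r : ℤ) (x : l), ρp r τg x = ((η ^ r : lˣ) : l) * x) :
    ∀ r s : ℤ,
      Nonempty ((ρp r).asModule ≃ₗ[MonoidAlgebra (ZMod p) G] (ρp s).asModule) ↔
      ∃ j : ℕ, s ≡ r * (p : ℤ) ^ j [ZMOD (e : ℤ)] := by
  intro r s
  haveI : Fact p.Prime := ⟨hp⟩
  haveI hCl : CharP l p := charP_of_injective_algebraMap (algebraMap (ZMod p) l).injective p
  rw [rep_iso_iff]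
  constructor
  · rintro ⟨E, hE⟩
    set ζ : l := ((η ^ r : lˣ) : l) with hζdef
    set ξ : l := ((η ^ s : lˣ) : l) with hξdef
    have hcomm : ∀ x : l, E (ζ * x) = ξ * E x := by
      intro x
      have h1 := hE τg x
      rwa [hρτ, hρτ] at h1
    have hpow : ∀ (n : ℕ) (x : l), E (ζ ^ n * x) = ξ ^ n * E x := by
      intro n
      induction n with
      | zero => intro x; simp
      | succ n ih =>
          intro x
          rw [pow_succ, mul_assoc, ih (ζ * x), hcomm, pow_succ, mul_assoc]
    have hpoly : ∀ (P : Polynomial (ZMod p)) (x : l),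
        E ((Polynomial.aeval ζ) P * x) = (Polynomial.aeval ξ) P * E x := by
      intro P x
      rw [Polynomial.aeval_eq_sum_range, Polynomial.aeval_eq_sum_range, Finset.sum_mul,
        Finset.sum_mul, map_sum]
      refine Finset.sum_congr rfl fun i _ => ?_
      rw [smul_mul_assoc, E.map_smul, hpow, smul_mul_assoc]
    have h0 : (Polynomial.aeval ξ) (minpoly (ZMod p) ζ) = 0 := by
      have h1 := hpoly (minpoly (ZMod p) ζ) (E.symm 1)
      rw [minpoly.aeval, zero_mul, map_zero, E.apply_symm_apply, mul_one] at h1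
      exact h1.symm
    obtain ⟨j, hj⟩ := root_minpoly_finite_field h0
    refine ⟨j, ?_⟩
    have h2 : η ^ s = (η ^ r) ^ (p ^ j : ℕ) := by
      refine Units.ext ?_
      rw [Units.val_pow_eq_pow_val]
      exact hj
    have hu : η ^ s = η ^ (r * (p : ℤ) ^ j) := by
      rw [h2, ← zpow_natCast, ← zpow_mul]
      congr 1
    have h3 := zpow_eq_zpow_iff_modEq.mp hu
    rwa [hη] at h3
  · rintro ⟨j, hj⟩
    have hsmul : ∀ (c : ZMod p) (x : l),
        iterateFrobeniusEquiv l p j (c • x) = c • iterateFrobeniusEquiv l p j x := by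
      intro c x
      rw [Algebra.smul_def, Algebra.smul_def, map_mul]
      congr 1
      exact RingHom.congr_fun
        (RingHom.ext_zmod
          (((iterateFrobeniusEquiv l p j : l ≃+* l) : l →+* l).comp (algebraMap (ZMod p) l))
          (algebraMap (ZMod p) l)) c
    set E : l ≃ₗ[ZMod p] l :=
      { (iterateFrobeniusEquiv l p j).toAddEquiv with
        map_smul' := fun c x => hsmul c x } with hEdef
    have hEapp : ∀ x : l, E x = x ^ p ^ j := fun x => rfl
    have hη' : ((η ^ r : lˣ) : l) ^ p ^ j = ((η ^ s : lˣ) : l) := by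
      have h2 : (η ^ r) ^ (p ^ j : ℕ) = η ^ s := by
        rw [← zpow_natCast, ← zpow_mul]
        refine zpow_eq_zpow_iff_modEq.mpr ?_
        rw [hη]
        have : (r * ((p ^ j : ℕ) : ℤ)) = r * (p : ℤ) ^ j := by push_cast; ring
        rw [this]
        exact hj.symm
      rw [← Units.val_pow_eq_pow_val, h2]
    have hcommτ : ∀ x, E ((ρp r) τg x) = (ρp s) τg (E x) := by
      intro x
      rw [hρτ, hρτ, hEapp, hEapp, mul_pow, hη']
    have hcommσ : ∀ x, E ((ρp r) σg x) = (ρp s) σg (E x) := by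
      intro x
      rw [hρσ, hρσ, hEapp, hEapp, ← pow_mul, ← pow_mul, mul_comm]
    have hall : ∀ g (x : l), E ((ρp r) g x) = (ρp s) g (E x) := by
      intro g
      have hg : g ∈ Subgroup.closure ({σg, τg} : Set G) := hgen ▸ Subgroup.mem_top g
      refine Subgroup.closure_induction ?_ ?_ ?_ ?_ hg
      · intro g' hg'
        simp only [Set.mem_insert_iff, Set.mem_singleton_iff] at hg'
        rcases hg' with rfl | rfl
        · exact hcommσ
        · exact hcommτ
      · intro x
        rw [map_one, map_one, Module.End.one_apply, Module.End.one_apply]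
      · intro a b ha hb iha ihb x
        rw [map_mul, map_mul, Module.End.mul_apply, Module.End.mul_apply, iha, ihb]
      · intro a ha iha x
        have cancel1 : ∀ (t : Representation (ZMod p) G l) (y : l), t a (t a⁻¹ y) = y := by
          intro t y
          rw [← Module.End.mul_apply, ← map_mul, mul_inv_cancel, map_one, Module.End.one_apply]
        have cancel2 : ∀ (t : Representation (ZMod p) G l) (y : l), t a⁻¹ (t a y) = y := by
          intro t y
          rw [← Module.End.mul_apply, ← map_mul, inv_mul_cancel, map_one, Module.End.one_apply]
        calc E ((ρp r) a⁻¹ x)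
            = (ρp s) a⁻¹ ((ρp s) a (E ((ρp r) a⁻¹ x))) := (cancel2 _ _).symm
          _ = (ρp s) a⁻¹ (E x) := by rw [← iha, cancel1]
    exact ⟨E, hall⟩
end

section
/- With notation as above, let n be a positive common multiple of p-1 and e, write n = d·e, and let b(i) = i + ⌊(i-1)/(p-1)⌋. Then the 𝔽_p[G]-module ⊕_{i=1}^{n} l(b(i)) is isomorphic to k[G]^d (the free k[G]-module of rank d, viewed as an 𝔽_p[G]-module). -/
open DirectSum
open Polynomial


section SmulHelpers

variable {kk G V : Type} [CommSemiring kk] [Group G] [AddCommMonoid V] [Module kk V]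

theorem rep_smul_def (ρ : Representation kk G V) (c : MonoidAlgebra kk G) (x : ρ.asModule) :
    c • x = ρ.asAlgebraHom c x := rfl

theorem rep_single_one_smul (ρ : Representation kk G V) (z : kk) (x : ρ.asModule) :
    (MonoidAlgebra.single (1 : G) z) • x = z • (x : V) := by
  rw [rep_smul_def, Representation.asAlgebraHom_single]
  erw [LinearMap.smul_apply]
  congr 1
  rw [map_one]
  erw [Module.End.one_apply]

theorem rep_of_smul (ρ : Representation kk G V) (g : G) (x : ρ.asModule) :
    (MonoidAlgebra.of kk G g) • x = ρ g x := by
  rw [rep_smul_def, Representation.asAlgebraHom_of]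

end SmulHelpers

section Builder

variable {p : ℕ} {G : Type} [Group G]
  {M N : Type} [AddCommMonoid M] [AddCommMonoid N]
  [Module (MonoidAlgebra (ZMod p) G) M] [Module (MonoidAlgebra (ZMod p) G) N]

/-- Extend commutation with generators to all of the monoid algebra. -/
theorem smul_comm_extend (σg τg : G) (hgen : Subgroup.closure ({σg, τg} : Set G) = ⊤)
    (F : M →+ N)
    (hr : ∀ (r : ZMod p) (x : M),
      F ((MonoidAlgebra.single (1 : G) r) • x) = (MonoidAlgebra.single (1 : G) r) • F x)
    (hσ : ∀ x, F (MonoidAlgebra.of (ZMod p) G σg • x) = MonoidAlgebra.of (ZMod p) G σg • F x)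
    (hτ : ∀ x, F (MonoidAlgebra.of (ZMod p) G τg • x) = MonoidAlgebra.of (ZMod p) G τg • F x) :
    ∀ (c : MonoidAlgebra (ZMod p) G) (x : M), F (c • x) = c • F x := by
  have hof : ∀ g : G, ∀ x, F (MonoidAlgebra.of (ZMod p) G g • x)
      = MonoidAlgebra.of (ZMod p) G g • F x := by
    let S : Subgroup G :=
      { carrier := {g | ∀ x, F (MonoidAlgebra.of (ZMod p) G g • x)
          = MonoidAlgebra.of (ZMod p) G g • F x}
        one_mem' := by
          intro x
          simp only [map_one, one_smul]
        mul_mem' := by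
          intro a b ha hb x
          rw [map_mul, mul_smul, mul_smul, ha _, hb x]
        inv_mem' := by
          intro g hg x
          have h1 := hg (MonoidAlgebra.of (ZMod p) G g⁻¹ • x)
          rw [← mul_smul, ← map_mul, mul_inv_cancel, map_one, one_smul] at h1
          rw [h1, ← mul_smul, ← map_mul, inv_mul_cancel, map_one, one_smul] }
    have hle : Subgroup.closure ({σg, τg} : Set G) ≤ S := by
      rw [Subgroup.closure_le]
      rintro g (rfl | rfl)
      · exact hσ
      · exact hτ
    rw [hgen] at hle
    exact fun g => hle (Subgroup.mem_top g)
  intro c x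
  induction c using MonoidAlgebra.induction_on with
  | of g => exact hof g x
  | add f g hf hg => rw [add_smul, add_smul, map_add, hf, hg]
  | smul r f hf =>
      have hrs : (r • f : MonoidAlgebra (ZMod p) G) = MonoidAlgebra.single (1 : G) r * f := by
        rw [Algebra.smul_def, MonoidAlgebra.coe_algebraMap]
        rfl
      rw [hrs, mul_smul, mul_smul, hr, hf]

end Builder
section Grp

variable {G : Type} [Group G]

theorem conj_pow_lemma {σg τg : G} {q : ℕ} (hrel : σg * τg * σg⁻¹ = τg ^ q) :
    ∀ (m c : ℕ), σg ^ m * τg ^ c = τg ^ (c * q ^ m) * σg ^ m := by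
  have base : ∀ c : ℕ, σg * τg ^ c = τg ^ (c * q) * σg := by
    intro c
    have h1 : σg * τg ^ c * σg⁻¹ = (σg * τg * σg⁻¹) ^ c := by
      rw [conj_pow]
    rw [hrel, ← pow_mul, mul_comm q c] at h1
    have := congrArg (· * σg) h1
    simpa [mul_assoc] using this
  intro m
  induction m with
  | zero => simp
  | succ m ih =>
      intro c
      have h0 : σg ^ (m + 1) * τg ^ c = σg ^ m * (σg * τg ^ c) := by
        rw [pow_succ]
        group
      rw [h0, base c, ← mul_assoc, ih (c * q), mul_assoc, ← pow_succ]
      congr 1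
      rw [pow_succ]
      ring

theorem decomp_lemma [Fintype G] {σg τg : G} {q e f : ℕ}
    (hσ : orderOf σg = f) (hτ : orderOf τg = e)
    (hrel : σg * τg * σg⁻¹ = τg ^ q)
    (hgen : Subgroup.closure ({σg, τg} : Set G) = ⊤)
    (he : 0 < e) (hf : 0 < f) :
    ∀ g : G, ∃ jm : Fin e × Fin f, g = τg ^ (jm.1 : ℕ) * σg ^ (jm.2 : ℕ) := by
  have hτe : ∀ c : ℕ, τg ^ (e * c) = 1 := by
    intro c; rw [pow_mul, ← hτ, pow_orderOf_eq_one, one_pow]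
  have hσf : ∀ c : ℕ, σg ^ (f * c) = 1 := by
    intro c; rw [pow_mul, ← hσ, pow_orderOf_eq_one, one_pow]
  have key : ∀ g : G, ∃ j m : ℕ, g = τg ^ j * σg ^ m := by
    let S : Subgroup G :=
      { carrier := {g | ∃ j m : ℕ, g = τg ^ j * σg ^ m}
        one_mem' := ⟨0, 0, by simp⟩
        mul_mem' := by
          rintro a b ⟨j, m, rfl⟩ ⟨j', m', rfl⟩
          refine ⟨j + j' * q ^ m, m + m', ?_⟩
          rw [mul_assoc, ← mul_assoc (σg ^ m), conj_pow_lemma hrel, pow_add, pow_add]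
          group
        inv_mem' := by
          rintro g ⟨j, m, rfl⟩
          refine ⟨j * (e - 1) * q ^ (m * (f - 1)), m * (f - 1), ?_⟩
          rw [eq_comm, eq_inv_iff_mul_eq_one]
          have he1 : j * (e - 1) + j = e * j := by
            cases e with
            | zero => omega
            | succ e' => simp [Nat.succ_sub_one]; ring
          have hf1 : m * (f - 1) + m = f * m := by
            cases f with
            | zero => omega
            | succ f' => simp [Nat.succ_sub_one]; ring
          calc τg ^ (j * (e - 1) * q ^ (m * (f - 1))) * σg ^ (m * (f - 1)) * (τg ^ j * σg ^ m)
              = τg ^ (j * (e - 1) * q ^ (m * (f - 1))) * (σg ^ (m * (f - 1)) * τg ^ j) * σg ^ m := by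
                group
            _ = τg ^ (j * (e - 1) * q ^ (m * (f - 1))) * (τg ^ (j * q ^ (m * (f - 1))) * σg ^ (m * (f - 1))) * σg ^ m := by
                rw [conj_pow_lemma hrel]
            _ = (τg ^ (j * (e - 1) * q ^ (m * (f - 1))) * τg ^ (j * q ^ (m * (f - 1)))) * (σg ^ (m * (f - 1)) * σg ^ m) := by
                group
            _ = 1 := by
                rw [← pow_add, ← pow_add, ← add_mul, he1, mul_assoc, hτe, hf1, hσf, one_mul] }
    have hle : Subgroup.closure ({σg, τg} : Set G) ≤ S := by
      rw [Subgroup.closure_le]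
      rintro g (rfl | rfl)
      · exact ⟨0, 1, by simp⟩
      · exact ⟨1, 0, by simp⟩
    rw [hgen] at hle
    exact fun g => hle (Subgroup.mem_top g)
  intro g
  obtain ⟨j, m, rfl⟩ := key g
  refine ⟨(⟨j % e, Nat.mod_lt _ he⟩, ⟨m % f, Nat.mod_lt _ hf⟩), ?_⟩
  simp only
  rw [← hτ, ← hσ, pow_mod_orderOf, pow_mod_orderOf]

/-- The parametrization `(j, m) ↦ τ^j σ^m` is bijective. -/
theorem psi_bijective [Fintype G] {σg τg : G} {q e f : ℕ}
    (hσ : orderOf σg = f) (hτ : orderOf τg = e)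
    (hrel : σg * τg * σg⁻¹ = τg ^ q)
    (hgen : Subgroup.closure ({σg, τg} : Set G) = ⊤)
    (hcard : Nat.card G = e * f) (he : 0 < e) (hf : 0 < f) :
    Function.Bijective (fun jm : Fin e × Fin f => τg ^ (jm.1 : ℕ) * σg ^ (jm.2 : ℕ)) := by
  rw [Fintype.bijective_iff_surjective_and_card]
  constructor
  · intro g
    obtain ⟨jm, h⟩ := decomp_lemma hσ hτ hrel hgen he hf g
    exact ⟨jm, h.symm⟩
  · rw [Fintype.card_prod, Fintype.card_fin, Fintype.card_fin, ← Nat.card_eq_fintype_card, hcard]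

end Grp

section NB

variable {p : ℕ} {k l : Type} [Field k] [Fintype k] [Field l] [Fintype l] [Algebra k l]

theorem exists_normal_basis (hp : p.Prime) [CharP k p] {q f : ℕ} (hq : q = Fintype.card k)
    (hf : f = Module.finrank k l) :
    ∃ α : l, LinearIndependent k (fun m : Fin f => α ^ q ^ (m : ℕ)) := by
  haveI := Fact.mk hp
  haveI : CharP l p := charP_of_injective_algebraMap (algebraMap k l).injective p
  haveI : Module.Finite k l := Module.Finite.of_finite
  obtain ⟨a, -, hqa⟩ := FiniteField.card k p
  rw [← hq] at hqa
  have hq2 : 2 ≤ q := hq ▸ Fintype.one_lt_card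
  have hf0 : 0 < f := hf ▸ Module.finrank_pos
  have hcl : Fintype.card l = q ^ f := by rw [hq, hf]; exact Module.card_eq_pow_finrank
  have xqf : ∀ x : l, x ^ q ^ f = x := fun x => by rw [← hcl]; exact FiniteField.pow_card x
  -- the Frobenius as a k-linear endomorphism
  set φ : l →ₗ[k] l :=
    { toFun := fun x => x ^ q
      map_add' := fun x y => by simp only [hqa, add_pow_char_pow]
      map_smul' := fun c x => by
        simp only [Algebra.smul_def, mul_pow, ← map_pow, RingHom.id_apply]
        rw [hq, FiniteField.pow_card] } with hφ
  have phi_apply : ∀ x : l, φ x = x ^ q := fun x => rfl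
  have phi_pow : ∀ (m : ℕ) (x : l), (φ ^ m) x = x ^ q ^ m := by
    intro m
    induction m with
    | zero => intro x; simp
    | succ m ih =>
        intro x
        rw [pow_succ, Module.End.mul_apply, ih, phi_apply, ← pow_mul, ← pow_succ']
  have hXf : (X ^ f - 1 : k[X]) ≠ 0 := by
    have : ((X ^ f - 1 : k[X])).natDegree = f := by
      rw [← C_1, natDegree_X_pow_sub_C]
    intro h
    rw [h] at this
    simp only [natDegree_zero] at this
    omega
  -- every element is killed by X^f - 1
  have hXfkill : ∀ x : Module.AEval' φ, (X ^ f - 1 : k[X]) • x = 0 := by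
    intro x
    apply (Module.AEval.of k l φ).symm.injective
    rw [Module.AEval.of_symm_smul, map_zero]
    rw [map_sub, map_pow, aeval_X, map_one]
    rw [sub_smul, one_smul]
    show (φ ^ f) ((Module.AEval.of k l φ).symm x) - _ = 0
    rw [phi_pow, xqf, sub_self]
  have htor : Module.IsTorsion k[X] (Module.AEval' φ) := fun x =>
    ⟨⟨X ^ f - 1, mem_nonZeroDivisors_of_ne_zero hXf⟩, hXfkill x⟩
  -- root counting: annihilating polynomials have degree ≥ f
  have hdeg : ∀ gP : k[X], gP ≠ 0 → (∀ y : l, aeval φ gP y = 0) → f ≤ gP.natDegree := by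
    intro gP hne hz
    by_contra hlt
    push_neg at hlt
    set P : Polynomial l := ∑ i ∈ gP.support, C (algebraMap k l (gP.coeff i)) * X ^ (q ^ i)
      with hP
    have hPeval : ∀ y : l, P.eval y = aeval φ gP y := by
      intro y
      rw [aeval_endomorphism, hP, eval_finset_sum, Polynomial.sum]
      apply Finset.sum_congr rfl
      intro i _
      rw [eval_mul, eval_C, eval_pow, eval_X, phi_pow, Algebra.smul_def]
    have hP0 : P = 0 := by
      apply eq_zero_of_natDegree_lt_card_of_eval_eq_zero P (f := (id : l → l))
        Function.injective_id
      · intro y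
        rw [hPeval]; exact hz y
      · have h1 : P.natDegree ≤ q ^ gP.natDegree := by
          apply natDegree_sum_le_of_forall_le
          intro i hi
          refine (natDegree_mul_le).trans ?_
          rw [natDegree_C, natDegree_X_pow, zero_add]
          exact Nat.pow_le_pow_right (by omega) (le_natDegree_of_mem_supp i hi)
        calc P.natDegree ≤ q ^ gP.natDegree := h1
          _ < q ^ f := Nat.pow_lt_pow_right (by omega) hlt
          _ = Fintype.card l := hcl.symm
    have hc : P.coeff (q ^ gP.natDegree) = algebraMap k l (gP.coeff gP.natDegree) := by
      rw [hP, finset_sum_coeff]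
      rw [Finset.sum_eq_single gP.natDegree]
      · rw [coeff_C_mul, coeff_X_pow, if_pos rfl, mul_one]
      · intro i _ hine
        rw [coeff_C_mul, coeff_X_pow, if_neg, mul_zero]
        exact fun h => hine (Nat.pow_right_injective hq2 h.symm)
      · intro hns
        exact absurd (natDegree_mem_support_of_nonzero hne) hns
    rw [hP0, coeff_zero] at hc
    have : gP.coeff gP.natDegree = 0 :=
      (algebraMap k l).injective (by rw [map_zero, ← hc])
    exact (mt leadingCoeff_eq_zero.mp hne) this
  -- structure theorem
  obtain ⟨ι, hι, pr, hpr, er, ⟨E⟩⟩ :=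
    Module.equiv_directSum_of_isTorsion (R := k[X]) (M := Module.AEval' φ) htor
  haveI := hι
  classical
  set u : ⨁ i : ι, k[X] ⧸ (k[X] ∙ pr i ^ er i) :=
    ∑ i, DirectSum.of (fun i => k[X] ⧸ (k[X] ∙ pr i ^ er i)) i (Submodule.Quotient.mk 1)
    with hu
  have hui : ∀ i, u i = Submodule.Quotient.mk 1 := by
    intro i
    rw [hu, DFinsupp.finset_sum_apply]
    rw [Finset.sum_eq_single i]
    · rw [DirectSum.of_eq_same]
    · intro j _ hj; exact DirectSum.of_eq_of_ne _ _ _ (Ne.symm hj)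
    · intro h; exact absurd (Finset.mem_univ i) h
  set α0 : Module.AEval' φ := E.symm u with hα0
  have hann : ∀ gP : k[X], gP • α0 = 0 → ∀ i, pr i ^ er i ∣ gP := by
    intro gP h i
    have h2 : gP • u = 0 := by
      rw [← E.apply_symm_apply u, ← map_smul, ← hα0, h, map_zero]
    have h3 : gP • u i = 0 := by
      have := congrArg (fun w => w i) h2
      rw [← DFinsupp.smul_apply]
      exact this
    rw [hui i] at h3
    rw [← Submodule.Quotient.mk_smul, Submodule.Quotient.mk_eq_zero] at h3
    rw [smul_eq_mul, mul_one] at h3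
    obtain ⟨c, hc⟩ := Submodule.mem_span_singleton.mp h3
    exact ⟨c, by rw [← hc, smul_eq_mul, mul_comm]⟩
  set L : k[X] := Finset.univ.lcm fun i => pr i ^ er i with hL
  have hqdvd : ∀ i, pr i ^ er i ∣ (X ^ f - 1 : k[X]) := fun i => hann _ (hXfkill α0) i
  have hLdvd : L ∣ (X ^ f - 1 : k[X]) := Finset.lcm_dvd fun i _ => hqdvd i
  have hLne : L ≠ 0 := ne_zero_of_dvd_ne_zero hXf hLdvd
  have hLkill : ∀ x : Module.AEval' φ, L • x = 0 := by
    intro x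
    apply E.injective
    rw [map_smul, map_zero]
    refine DFinsupp.ext fun i => ?_
    rw [DFinsupp.smul_apply, DFinsupp.zero_apply]
    obtain ⟨h, hh⟩ := Submodule.Quotient.mk_surjective _ (E x i)
    rw [← hh, ← Submodule.Quotient.mk_smul, smul_eq_mul]
    rw [Submodule.Quotient.mk_eq_zero]
    obtain ⟨c, hc⟩ := Finset.dvd_lcm (f := fun i => pr i ^ er i) (Finset.mem_univ i)
    rw [Submodule.mem_span_singleton]
    exact ⟨c * h, by
      rw [smul_eq_mul]
      have hLc : L = pr i ^ er i * c := hL.trans hc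
      rw [hLc]; ring⟩
  have hfL : f ≤ L.natDegree := by
    apply hdeg L hLne
    intro y
    have := hLkill (Module.AEval.of k l φ y)
    apply_fun (Module.AEval.of k l φ).symm at this
    rw [Module.AEval.of_symm_smul, map_zero, LinearEquiv.symm_apply_apply] at this
    exact this
  set α : l := (Module.AEval.of k l φ).symm α0 with hα
  refine ⟨α, ?_⟩
  rw [Fintype.linearIndependent_iff]
  intro c hc
  set gc : k[X] := ∑ m : Fin f, C (c m) * X ^ (m : ℕ) with hgc
  have hgc0 : gc • α0 = 0 := by
    apply (Module.AEval.of k l φ).symm.injective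
    rw [Module.AEval.of_symm_smul, map_zero, ← hα]
    show (aeval φ gc) α = 0
    rw [hgc, map_sum, LinearMap.sum_apply]
    have heach : ∀ m : Fin f, (aeval φ (C (c m) * X ^ (m : ℕ))) α = c m • α ^ q ^ (m : ℕ) := by
      intro m
      rw [map_mul, aeval_C, map_pow, aeval_X, Module.End.mul_apply,
        Module.algebraMap_end_apply, phi_pow]
    rw [Finset.sum_congr rfl fun m _ => heach m]
    exact hc
  have hLgc : L ∣ gc := Finset.lcm_dvd fun i _ => hann gc hgc0 i
  have hgcdeg : gc.natDegree < f := by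
    rw [hgc]
    have : ∀ m : Fin f, (C (c m) * X ^ (m : ℕ)).natDegree ≤ f - 1 := by
      intro m
      refine (natDegree_mul_le).trans ?_
      rw [natDegree_C, natDegree_X_pow, zero_add]
      omega
    exact lt_of_le_of_lt (natDegree_sum_le_of_forall_le _ _ fun m _ => this m) (by omega)
  have hgczero : gc = 0 := by
    by_contra hne
    have := Polynomial.natDegree_le_of_dvd hLgc hne
    omega
  intro m
  have : gc.coeff (m : ℕ) = c m := by
    rw [hgc, finset_sum_coeff]
    rw [Finset.sum_eq_single m]
    · rw [coeff_C_mul, coeff_X_pow, if_pos rfl, mul_one]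
    · intro m' _ hm'
      rw [coeff_C_mul, coeff_X_pow, if_neg, mul_zero]
      exact fun h => hm' (Fin.ext h.symm)
    · intro h; exact absurd (Finset.mem_univ m) h
  rw [hgczero, coeff_zero] at this
  exact this.symm

end NB
section Fourier

theorem fourier_iso
    (p : ℕ) (hp : p.Prime)
    (k l : Type) [Field k] [Fintype k] [CharP k p] [Field l] [Fintype l] [Algebra k l]
    [Algebra (ZMod p) l] [Algebra (ZMod p) k]
    (q e f : ℕ) (hq : q = Fintype.card k) (hf : f = Module.finrank k l) (he : 0 < e)
    (G : Type) [Group G] [Fintype G] (σg τg : G)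
    (hσ : orderOf σg = f) (hτ : orderOf τg = e)
    (hrel : σg * τg * σg⁻¹ = τg ^ q)
    (hgen : Subgroup.closure ({σg, τg} : Set G) = ⊤)
    (hcard : Nat.card G = e * f)
    (η : lˣ) (hη : orderOf η = e)
    (ρp : ℤ → Representation (ZMod p) G l)
    (hρσ : ∀ (r : ℤ) (x : l), ρp r σg x = x ^ q)
    (hρτ : ∀ (r : ℤ) (x : l), ρp r τg x = ((η ^ r : lˣ) : l) * x)
    (κ : Representation (ZMod p) G (G →₀ k))
    (hκ : ∀ (g : G) (x : G →₀ k), κ g x = Finsupp.mapDomain (fun h => g * h) x) :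
    Nonempty (κ.asModule ≃ₗ[MonoidAlgebra (ZMod p) G]
      ⨁ r : Fin e, (ρp ((r : ℕ) : ℤ)).asModule) := by
  classical
  haveI := Fact.mk hp
  haveI : NeZero e := ⟨he.ne'⟩
  haveI : CharP l p := charP_of_injective_algebraMap (algebraMap k l).injective p
  haveI : Module.Finite k l := Module.Finite.of_finite
  have hf0 : 0 < f := hf ▸ Module.finrank_pos
  haveI : NeZero f := ⟨hf0.ne'⟩
  obtain ⟨a, -, hqa⟩ := FiniteField.card k p
  rw [← hq] at hqa
  have hq2 : 2 ≤ q := hq ▸ Fintype.one_lt_card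
  have hcl : Fintype.card l = q ^ f := by rw [hq, hf]; exact Module.card_eq_pow_finrank
  have xqf : ∀ x : l, x ^ q ^ f = x := fun x => by rw [← hcl]; exact FiniteField.pow_card x
  -- p does not divide e
  have hpe : ¬ p ∣ e := by
    intro hdvd
    have h1 : e ∣ Fintype.card lˣ := hη ▸ orderOf_dvd_card
    rw [Fintype.card_units, hcl] at h1
    have h2 : p ∣ q ^ f - 1 := hdvd.trans h1
    have h3 : p ∣ q ^ f := by
      rw [hqa, ← pow_mul]
      exact dvd_pow_self p (by positivity)
    have h4 : p ∣ 1 := by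
      have h5 : q ^ f - (q ^ f - 1) = 1 := by
        have : 1 ≤ q ^ f := Nat.one_le_pow _ _ (by omega)
        omega
      exact h5 ▸ Nat.dvd_sub h3 h2
    exact Nat.Prime.one_lt hp |>.ne' (Nat.dvd_one.mp h4)
  have hel : (e : l) ≠ 0 := fun h0 => hpe ((CharP.cast_eq_zero_iff l p e).mp h0)
  haveI : IsScalarTower (ZMod p) k l := IsScalarTower.of_algebraMap_eq (fun z => by
    have hcmp : algebraMap (ZMod p) l = (algebraMap k l).comp (algebraMap (ZMod p) k) :=
      Subsingleton.elim _ _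
    rw [hcmp]; rfl)
  obtain ⟨α, hα⟩ := exists_normal_basis (k := k) (l := l) hp hq hf
  have hψ := psi_bijective hσ hτ hrel hgen hcard he hf0
  -- notation
  set ηl : l := ((η : lˣ) : l) with hηl
  have hηe : ηl ^ e = 1 := by
    rw [hηl, ← Units.val_pow_eq_pow_val, ← hη, pow_orderOf_eq_one, Units.val_one]
  have hηmod : ∀ s t : ℕ, s % e = t % e → ηl ^ s = ηl ^ t := by
    have h1 : ∀ u : ℕ, ηl ^ u = ηl ^ (u % e) := by
      intro u
      conv_lhs => rw [← Nat.mod_add_div u e]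
      rw [pow_add, pow_mul, hηe, one_pow, mul_one]
    intro s t hst
    rw [h1 s, h1 t, hst]
  have hτmod : ∀ s t : ℕ, s % e = t % e → τg ^ s = τg ^ t := by
    intro s t hst
    rw [← pow_mod_orderOf (x := τg) (n := s), ← pow_mod_orderOf (x := τg) (n := t), hτ, hst]
  have hσmod : ∀ s t : ℕ, s % f = t % f → σg ^ s = σg ^ t := by
    intro s t hst
    rw [← pow_mod_orderOf (x := σg) (n := s), ← pow_mod_orderOf (x := σg) (n := t), hσ, hst]
  have hqff : ∀ (c : ℕ) (y : l), y ^ (q ^ f) ^ c = y := by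
    intro c
    induction c with
    | zero => intro y; simp
    | succ c ih => intro y; rw [pow_succ, pow_mul, ih, xqf]
  have hqpow : ∀ (x : l) (t : ℕ), x ^ q ^ (t % f) = x ^ q ^ t := by
    intro x t
    conv_rhs => rw [← Nat.mod_add_div t f]
    rw [pow_add, pow_mul x, pow_mul q, hqff]
  have hqsum : ∀ {γ : Type} (s : Finset γ) (g : γ → l),
      (∑ i ∈ s, g i) ^ q = ∑ i ∈ s, (g i) ^ q := by
    intro γ s g
    have h1 := map_sum (iterateFrobenius l p (a : ℕ)) g s
    simp only [iterateFrobenius_def] at h1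
    rw [hqa]
    exact h1
  have halgq : ∀ c : k, (algebraMap k l c) ^ q = algebraMap k l c := by
    intro c
    rw [← map_pow, hq, FiniteField.pow_card]
  have hzs : ∀ (z : ZMod p) (c : k), algebraMap k l (z • c) = z • algebraMap k l c := by
    intro z c
    rw [Algebra.smul_def, Algebra.smul_def, map_mul, ← IsScalarTower.algebraMap_apply]
  -- the Fourier transform, valued in functions
  set Y : (G →₀ k) → Fin e → l := fun x j =>
    ∑ m : Fin f, algebraMap k l (x (τg ^ (j : ℕ) * σg ^ (m : ℕ))) * α ^ q ^ (m : ℕ) with hYdef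
  set Flin : (G →₀ k) →ₗ[ZMod p] (Fin e → l) :=
    { toFun := fun x r => ∑ j : Fin e, ηl ^ ((j : ℕ) * (r : ℕ)) * Y x j
      map_add' := by
        intro x y
        funext r
        simp only [hYdef, Finsupp.add_apply, map_add, add_mul, mul_add,
          Finset.sum_add_distrib, Pi.add_apply]
      map_smul' := by
        intro z x
        funext r
        simp only [hYdef, Finsupp.smul_apply, Pi.smul_apply, RingHom.id_apply, hzs,
          smul_mul_assoc, ← Finset.smul_sum, mul_smul_comm] } with hFdef
  have hFl : ∀ (x : G →₀ k) (r : Fin e),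
      Flin x r = ∑ j : Fin e, ηl ^ ((j : ℕ) * (r : ℕ)) * Y x j := fun x r => rfl
  -- the direct sum target and its evaluation
  set Esum := DirectSum.linearEquivFunOnFintype (ZMod p) (Fin e)
      (fun r : Fin e => (ρp ((r : ℕ) : ℤ)).asModule) with hEsum
  have hEs : ∀ (y : Fin e → l) (r : Fin e), (Esum.symm y) r = y r := by
    intro y r
    exact congrFun (Esum.apply_symm_apply y) r
  -- injectivity
  have hker : ∀ x : G →₀ k, Flin x = 0 → x = 0 := by
    intro x hx0
    have hcomp : ∀ r : Fin e, ∑ j : Fin e, ηl ^ ((j : ℕ) * (r : ℕ)) * Y x j = 0 := by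
      intro r
      have h1 : Flin x r = 0 := by rw [hx0]; rfl
      rwa [hFl] at h1
    have hYzero : ∀ j : Fin e, Y x j = 0 := by
      intro j'
      have hgeom : ∀ jj : Fin e,
          (∑ r : Fin e, (((η⁻¹ ^ (j' : ℕ) * η ^ (jj : ℕ) : lˣ) : l)) ^ (r : ℕ))
            = if jj = j' then (e : l) else 0 := by
        intro jj
        by_cases hjj : jj = j'
        · subst hjj
          rw [if_pos rfl]
          have hone : (η⁻¹ ^ (jj : ℕ) * η ^ (jj : ℕ) : lˣ) = 1 := by
            rw [inv_pow, inv_mul_cancel]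
          rw [hone, Units.val_one]
          simp only [one_pow, Finset.sum_const, Finset.card_univ, Fintype.card_fin,
            nsmul_eq_mul, mul_one]
        · rw [if_neg hjj]
          have hηe1 : η ^ e = 1 := by rw [← hη]; exact pow_orderOf_eq_one η
          have hz : (η⁻¹ ^ (j' : ℕ) * η ^ (jj : ℕ) : lˣ) ^ e = 1 := by
            have hz1 : (η⁻¹ ^ (j' : ℕ)) ^ e = 1 := by
              rw [← pow_mul, mul_comm (j' : ℕ) e, pow_mul, inv_pow, hηe1, inv_one, one_pow]
            have hz2 : (η ^ (jj : ℕ)) ^ e = 1 := by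
              rw [← pow_mul, mul_comm (jj : ℕ) e, pow_mul, hηe1, one_pow]
            rw [mul_pow, hz1, hz2, one_mul]
          have hzne : ((η⁻¹ ^ (j' : ℕ) * η ^ (jj : ℕ) : lˣ) : l) ≠ 1 := by
            intro h1
            have h2 : (η⁻¹ ^ (j' : ℕ) * η ^ (jj : ℕ) : lˣ) = 1 := Units.ext h1
            rw [inv_pow, inv_mul_eq_one] at h2
            rw [pow_eq_pow_iff_modEq, hη] at h2
            have h3 : (j' : ℕ) = (jj : ℕ) := by
              have h4 : (j' : ℕ) % e = (jj : ℕ) % e := h2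
              rwa [Nat.mod_eq_of_lt j'.isLt, Nat.mod_eq_of_lt jj.isLt] at h4
            exact hjj (Fin.ext h3.symm)
          have hzpow : ((η⁻¹ ^ (j' : ℕ) * η ^ (jj : ℕ) : lˣ) : l) ^ e = 1 := by
            rw [← Units.val_pow_eq_pow_val, hz, Units.val_one]
          rw [Fin.sum_univ_eq_sum_range
            (fun r => (((η⁻¹ ^ (j' : ℕ) * η ^ (jj : ℕ) : lˣ) : l)) ^ r) e]
          rw [geom_sum_eq hzne e, hzpow, sub_self, zero_div]
      have h0 : (0 : l) = (e : l) * Y x j' := by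
        calc (0 : l)
            = ∑ r : Fin e, ((η⁻¹ ^ (j' : ℕ) : lˣ) : l) ^ (r : ℕ)
                * (∑ j : Fin e, ηl ^ ((j : ℕ) * (r : ℕ)) * Y x j) := by
              simp only [hcomp, mul_zero, Finset.sum_const_zero]
          _ = ∑ r : Fin e, ∑ j : Fin e,
                (((η⁻¹ ^ (j' : ℕ) * η ^ (j : ℕ) : lˣ) : l)) ^ (r : ℕ) * Y x j := by
              apply Finset.sum_congr rfl
              intro r _
              rw [Finset.mul_sum]
              apply Finset.sum_congr rfl
              intro j _
              simp only [hηl, Units.val_mul, mul_pow, Units.val_pow_eq_pow_val, ← pow_mul, mul_assoc]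
          _ = ∑ j : Fin e, (∑ r : Fin e, (((η⁻¹ ^ (j' : ℕ) * η ^ (j : ℕ) : lˣ) : l)) ^ (r : ℕ))
                * Y x j := by
              rw [Finset.sum_comm]
              apply Finset.sum_congr rfl
              intro j _
              rw [Finset.sum_mul]
          _ = (e : l) * Y x j' := by
              rw [Finset.sum_congr rfl (fun j _ => by rw [hgeom j])]
              rw [Finset.sum_eq_single j']
              · rw [if_pos rfl]
              · intro j _ hj
                rw [if_neg hj, zero_mul]
              · intro h
                exact absurd (Finset.mem_univ j') h
      rcases mul_eq_zero.mp h0.symm with h | h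
      · exact absurd h hel
      · exact h
    have hcoef : ∀ jm : Fin e × Fin f, x (τg ^ (jm.1 : ℕ) * σg ^ (jm.2 : ℕ)) = 0 := by
      rintro ⟨j, m⟩
      have h1 := hYzero j
      rw [Fintype.linearIndependent_iff] at hα
      exact hα (fun m => x (τg ^ (j : ℕ) * σg ^ (m : ℕ)))
        (by simpa [Algebra.smul_def] using h1) m
    ext g
    obtain ⟨jm, rfl⟩ := hψ.2 g
    simpa using hcoef jm
  have hinj : Function.Injective Flin := by
    intro x x' h
    have h1 := hker (x - x') (by rw [map_sub, h, sub_self])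
    exact sub_eq_zero.mp h1
  have hbijF : Function.Bijective Flin := by
    rw [Fintype.bijective_iff_injective_and_card]
    refine ⟨hinj, ?_⟩
    have hGcard : Fintype.card G = e * f := by rw [← Nat.card_eq_fintype_card]; exact hcard
    have h1 : Fintype.card (G →₀ k) = q ^ (e * f) := by
      rw [Fintype.card_congr Finsupp.equivFunOnFinite, Fintype.card_fun, hGcard, ← hq]
    have h2 : Fintype.card (Fin e → l) = q ^ (f * e) := by
      rw [Fintype.card_fun, hcl, Fintype.card_fin, ← pow_mul]
    rw [h1, h2, mul_comm e f]
  -- shift/multiplication reindexing bijections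
  have hshiftE : Function.Bijective
      (fun j : Fin e => (⟨((j : ℕ) + 1) % e, Nat.mod_lt _ he⟩ : Fin e)) := by
    rw [← Finite.injective_iff_bijective]
    intro j j' h
    have h1 : ((j : ℕ) + 1) % e = ((j' : ℕ) + 1) % e := congrArg Fin.val h
    have h2 : (j : ℕ) % e = (j' : ℕ) % e := Nat.ModEq.add_right_cancel' 1 h1
    rw [Nat.mod_eq_of_lt j.isLt, Nat.mod_eq_of_lt j'.isLt] at h2
    exact Fin.ext h2
  have hshiftF : Function.Bijective
      (fun m : Fin f => (⟨((m : ℕ) + 1) % f, Nat.mod_lt _ hf0⟩ : Fin f)) := by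
    rw [← Finite.injective_iff_bijective]
    intro j j' h
    have h1 : ((j : ℕ) + 1) % f = ((j' : ℕ) + 1) % f := congrArg Fin.val h
    have h2 : (j : ℕ) % f = (j' : ℕ) % f := Nat.ModEq.add_right_cancel' 1 h1
    rw [Nat.mod_eq_of_lt j.isLt, Nat.mod_eq_of_lt j'.isLt] at h2
    exact Fin.ext h2
  have hmulE : Function.Bijective
      (fun j : Fin e => (⟨((j : ℕ) * q) % e, Nat.mod_lt _ he⟩ : Fin e)) := by
    rw [← Finite.injective_iff_bijective]
    intro j j' h
    have h1 : ((j : ℕ) * q) % e = ((j' : ℕ) * q) % e := congrArg Fin.val h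
    have hcop : Nat.Coprime q e := by
      rw [hqa]; exact Nat.Coprime.pow_left _ ((Nat.Prime.coprime_iff_not_dvd hp).mpr hpe)
    have h2 : (((j : ℕ) : ZMod e) * (q : ZMod e)) = (((j' : ℕ) : ZMod e) * (q : ZMod e)) := by
      have h3 : (((j : ℕ) * q : ℕ) : ZMod e) = (((j' : ℕ) * q : ℕ) : ZMod e) :=
        (ZMod.natCast_eq_natCast_iff _ _ _).mpr h1
      push_cast at h3
      exact h3
    have hu : IsUnit ((q : ℕ) : ZMod e) := by
      rw [← ZMod.coe_unitOfCoprime q hcop]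
      exact (ZMod.unitOfCoprime q hcop).isUnit
    have h3 : ((j : ℕ) : ZMod e) = ((j' : ℕ) : ZMod e) := hu.mul_right_cancel h2
    have h4 := congrArg ZMod.val h3
    rw [ZMod.val_cast_of_lt j.isLt, ZMod.val_cast_of_lt j'.isLt] at h4
    exact Fin.ext h4
  set shiftE : Fin e ≃ Fin e := Equiv.ofBijective _ hshiftE with hsE
  set shiftF : Fin f ≃ Fin f := Equiv.ofBijective _ hshiftF with hsF
  set mulE : Fin e ≃ Fin e := Equiv.ofBijective _ hmulE with hmE
  -- mapDomain evaluation
  have hval : ∀ (g0 : G) (x : G →₀ k) (gg : G),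
      (Finsupp.mapDomain (fun h => g0 * h) x) gg = x (g0⁻¹ * gg) := by
    intro g0 x gg
    have h1 : gg = g0 * (g0⁻¹ * gg) := by group
    conv_lhs => rw [h1]
    rw [Finsupp.mapDomain_apply (mul_right_injective g0)]
  -- τ-equivariance of the Fourier transform
  have keyτ : ∀ (x : G →₀ k) (r : Fin e),
      Flin (κ τg x) r = ηl ^ (r : ℕ) * Flin x r := by
    intro x r
    rw [hFl, hFl, Finset.mul_sum, hκ]
    refine (Fintype.sum_equiv shiftE _ _ ?_).symm
    intro j
    have hYv : Y (Finsupp.mapDomain (fun h => τg * h) x) (shiftE j) = Y x j := by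
      simp only [hYdef]
      apply Finset.sum_congr rfl
      intro m _
      congr 2
      rw [hval]
      have hsv : ((shiftE j : Fin e) : ℕ) = ((j : ℕ) + 1) % e := rfl
      rw [hsv, hτmod (((j : ℕ) + 1) % e) ((j : ℕ) + 1) (Nat.mod_mod_of_dvd _ dvd_rfl),
        pow_succ']
      group
    have hexp : ηl ^ (((shiftE j : Fin e) : ℕ) * (r : ℕ))
        = ηl ^ ((j : ℕ) * (r : ℕ)) * ηl ^ (r : ℕ) := by
      have hsv : ((shiftE j : Fin e) : ℕ) = ((j : ℕ) + 1) % e := rfl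
      rw [hsv, hηmod ((((j : ℕ) + 1) % e) * (r : ℕ)) (((j : ℕ) + 1) * (r : ℕ))
        (Nat.ModEq.mul_right _ (Nat.mod_modEq _ _)), add_mul, one_mul, pow_add]
    rw [hYv, hexp]
    ring
  -- σ-equivariance of the Fourier transform
  have keyσ : ∀ (x : G →₀ k) (r : Fin e),
      Flin (κ σg x) r = (Flin x r) ^ q := by
    intro x r
    rw [hFl, hFl, hqsum, hκ]
    have hRHS : ∀ j : Fin e, (ηl ^ ((j : ℕ) * (r : ℕ)) * Y x j) ^ q
        = ηl ^ ((j : ℕ) * q * (r : ℕ))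
          * ∑ m : Fin f, algebraMap k l (x (τg ^ (j : ℕ) * σg ^ (m : ℕ)))
              * α ^ q ^ ((m : ℕ) + 1) := by
      intro j
      rw [mul_pow, ← pow_mul]
      congr 1
      · congr 1
        ring
      · simp only [hYdef]
        rw [hqsum]
        apply Finset.sum_congr rfl
        intro m _
        rw [mul_pow, halgq, ← pow_mul, ← pow_succ]
    rw [Finset.sum_congr rfl (fun j _ => hRHS j)]
    refine (Fintype.sum_equiv mulE _ _ ?_).symm
    intro j
    have hmv : ((mulE j : Fin e) : ℕ) = ((j : ℕ) * q) % e := rfl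
    have hexp : ηl ^ (((mulE j : Fin e) : ℕ) * (r : ℕ)) = ηl ^ ((j : ℕ) * q * (r : ℕ)) := by
      rw [hmv]
      exact hηmod _ _ (Nat.ModEq.mul_right _ (Nat.mod_modEq _ _))
    have hYv : Y (Finsupp.mapDomain (fun h => σg * h) x) (mulE j)
        = ∑ m : Fin f, algebraMap k l (x (τg ^ (j : ℕ) * σg ^ (m : ℕ)))
            * α ^ q ^ ((m : ℕ) + 1) := by
      simp only [hYdef]
      refine (Fintype.sum_equiv shiftF _ _ ?_).symm
      intro m
      have hfv : ((shiftF m : Fin f) : ℕ) = ((m : ℕ) + 1) % f := rfl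
      rw [hval, hmv, hfv]
      have hgrp : σg⁻¹ * (τg ^ (((j : ℕ) * q) % e) * σg ^ (((m : ℕ) + 1) % f))
          = τg ^ (j : ℕ) * σg ^ (m : ℕ) := by
        rw [hτmod (((j : ℕ) * q) % e) ((j : ℕ) * q) (Nat.mod_mod_of_dvd _ dvd_rfl),
          hσmod (((m : ℕ) + 1) % f) ((m : ℕ) + 1) (Nat.mod_mod_of_dvd _ dvd_rfl)]
        have hc1 := conj_pow_lemma hrel 1 (j : ℕ)
        rw [pow_one, pow_one] at hc1
        have hconj : σg * τg ^ (j : ℕ) * σg⁻¹ = τg ^ ((j : ℕ) * q) := by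
          rw [hc1]; group
        rw [← hconj, pow_succ']
        group
      rw [hgrp]
      congr 1
      exact (hqpow α ((m : ℕ) + 1)).symm
    rw [hYv, hexp]
  -- assemble
  have hbijΦ : Function.Bijective (fun x : κ.asModule =>
      (Esum.symm (Flin x) : ⨁ r : Fin e, (ρp ((r : ℕ) : ℤ)).asModule)) :=
    Function.Bijective.comp Esum.symm.bijective hbijF
  set Φeq : κ.asModule ≃+ (⨁ r : Fin e, (ρp ((r : ℕ) : ℤ)).asModule) :=
    { Equiv.ofBijective _ hbijΦ with
      map_add' := by
        intro x y
        show Esum.symm (Flin (x + y)) = Esum.symm (Flin x) + Esum.symm (Flin y)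
        exact (congrArg Esum.symm (map_add Flin x y)).trans (map_add Esum.symm _ _) } with hΦeq
  have hΦapp : ∀ x, Φeq x = Esum.symm (Flin x) := fun x => rfl
  have hsmulr : ∀ (z : ZMod p) (x : κ.asModule),
      Φeq ((MonoidAlgebra.single (1 : G) z) • x) = (MonoidAlgebra.single (1 : G) z) • Φeq x := by
    intro z x
    rw [rep_single_one_smul κ z x, hΦapp, hΦapp]
    refine DFinsupp.ext fun r => ?_
    rw [DFinsupp.smul_apply, rep_single_one_smul, hEs, hEs]
    exact congrFun (map_smul Flin z x) r
  have hsmulσ : ∀ x : κ.asModule,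
      Φeq ((MonoidAlgebra.of (ZMod p) G σg) • x) = (MonoidAlgebra.of (ZMod p) G σg) • Φeq x := by
    intro x
    rw [hΦapp, hΦapp, rep_of_smul κ σg x]
    refine DFinsupp.ext fun r => ?_
    rw [DFinsupp.smul_apply, rep_of_smul, hEs, hEs, hρσ]
    exact keyσ x r
  have hsmulτ : ∀ x : κ.asModule,
      Φeq ((MonoidAlgebra.of (ZMod p) G τg) • x) = (MonoidAlgebra.of (ZMod p) G τg) • Φeq x := by
    intro x
    rw [hΦapp, hΦapp, rep_of_smul κ τg x]
    refine DFinsupp.ext fun r => ?_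
    have hu2 : ((η ^ (((r : ℕ) : ℤ)) : lˣ) : l) = ηl ^ (r : ℕ) := by
      rw [zpow_natCast, Units.val_pow_eq_pow_val, hηl]
    rw [DFinsupp.smul_apply, rep_of_smul, hEs, hEs, hρτ, hu2]
    exact keyτ x r
  have hsmul := smul_comm_extend σg τg hgen Φeq.toAddMonoidHom hsmulr hsmulσ hsmulτ
  exact ⟨{ Φeq with map_smul' := fun c x => hsmul c x }⟩



end Fourier
section Twist

variable {p : ℕ} {l : Type} [Field l] [Finite l] [Algebra (ZMod p) l]
  {G : Type} [Group G] {σg τg : G} {q e : ℕ}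

theorem rep_eq_of_modeq
    (hgen : Subgroup.closure ({σg, τg} : Set G) = ⊤)
    (η : lˣ) (hη : orderOf η = e)
    (ρp : ℤ → Representation (ZMod p) G l)
    (hρσ : ∀ (r : ℤ) (x : l), ρp r σg x = x ^ q)
    (hρτ : ∀ (r : ℤ) (x : l), ρp r τg x = ((η ^ r : lˣ) : l) * x)
    (s t : ℤ) (hst : (e : ℤ) ∣ s - t) : ρp s = ρp t := by
  have hη' : η ^ s = η ^ t := by
    obtain ⟨c, hc⟩ := hst
    have h1 : s = t + (e : ℤ) * c := by linarith
    rw [h1, zpow_add, zpow_mul, zpow_natCast, ← hη, pow_orderOf_eq_one, one_zpow, mul_one]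
  have key : ∀ g : G, ρp s g = ρp t g := by
    let S : Subgroup G :=
      { carrier := {g | ρp s g = ρp t g}
        one_mem' := by simp only [Set.mem_setOf_eq, map_one]
        mul_mem' := by
          intro a b ha hb
          simp only [Set.mem_setOf_eq, map_mul] at *
          rw [ha, hb]
        inv_mem' := by
          intro g hg
          simp only [Set.mem_setOf_eq] at *
          have h1 : ρp s g⁻¹ * ρp s g = 1 := by rw [← map_mul, inv_mul_cancel, map_one]
          have h2 : ρp t g * ρp t g⁻¹ = 1 := by rw [← map_mul, mul_inv_cancel, map_one]
          calc ρp s g⁻¹ = ρp s g⁻¹ * (ρp t g * ρp t g⁻¹) := by rw [h2, mul_one]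
            _ = (ρp s g⁻¹ * ρp s g) * ρp t g⁻¹ := by rw [← hg, mul_assoc]
            _ = ρp t g⁻¹ := by rw [h1, one_mul] }
    have hle : Subgroup.closure ({σg, τg} : Set G) ≤ S := by
      rw [Subgroup.closure_le]
      intro g hg
      simp only [Set.mem_insert_iff, Set.mem_singleton_iff] at hg
      rcases hg with h | h
      · subst h
        show ρp s g = ρp t g
        apply LinearMap.ext
        intro x
        rw [hρσ, hρσ]
      · subst h
        show ρp s g = ρp t g
        apply LinearMap.ext
        intro x
        rw [hρτ, hρτ, hη']
    rw [hgen] at hle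
    exact fun g => hle (Subgroup.mem_top g)
  exact MonoidHom.ext key

theorem frob_twist [CharP l p] (hp : p.Prime)
    (hgen : Subgroup.closure ({σg, τg} : Set G) = ⊤)
    (η : lˣ)
    (ρp : ℤ → Representation (ZMod p) G l)
    (hρσ : ∀ (r : ℤ) (x : l), ρp r σg x = x ^ q)
    (hρτ : ∀ (r : ℤ) (x : l), ρp r τg x = ((η ^ r : lˣ) : l) * x)
    (s : ℤ) :
    Nonempty ((ρp s).asModule ≃ₗ[MonoidAlgebra (ZMod p) G]
      (ρp (s * (p : ℤ))).asModule) := by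
  haveI := Fact.mk hp
  have hbij : Function.Bijective (frobenius l p) :=
    Finite.injective_iff_bijective.mp (frobenius l p).injective
  set F : (ρp s).asModule ≃+ (ρp (s * (p : ℤ))).asModule :=
    { Equiv.ofBijective (fun x : (ρp s).asModule =>
        ((frobenius l p) (x : l) : (ρp (s * (p : ℤ))).asModule)) hbij with
      map_add' := fun x y => map_add (frobenius l p) x y } with hF
  have hFapp : ∀ x : (ρp s).asModule, F x = (frobenius l p) (x : l) := fun _ => rfl
  have hr : ∀ (z : ZMod p) (x : (ρp s).asModule),
      F (MonoidAlgebra.single (1 : G) z • x) = MonoidAlgebra.single (1 : G) z • F x := by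
    intro z x
    rw [rep_single_one_smul, rep_single_one_smul, hFapp, hFapp]
    have hfz : ∀ (z : ZMod p) (y : l), (frobenius l p) (z • y) = z • (frobenius l p) y := by
      intro z y
      rw [Algebra.smul_def, Algebra.smul_def, map_mul]
      congr 1
      rw [frobenius_def, ← map_pow, ZMod.pow_card]
    exact hfz z x
  have hσ' : ∀ x, F (MonoidAlgebra.of (ZMod p) G σg • x)
      = MonoidAlgebra.of (ZMod p) G σg • F x := by
    intro x
    rw [rep_of_smul, rep_of_smul]
    show (frobenius l p) ((ρp s) σg (x : l)) = (ρp (s * (p : ℤ))) σg ((frobenius l p) (x : l))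
    obtain ⟨y, rfl⟩ : ∃ y : l, y = x := ⟨x, rfl⟩
    erw [hρσ, hρσ]
    rw [frobenius_def, frobenius_def, ← pow_mul, ← pow_mul, mul_comm q p]
  have hτ' : ∀ x, F (MonoidAlgebra.of (ZMod p) G τg • x)
      = MonoidAlgebra.of (ZMod p) G τg • F x := by
    intro x
    rw [rep_of_smul, rep_of_smul]
    show (frobenius l p) ((ρp s) τg (x : l)) = (ρp (s * (p : ℤ))) τg ((frobenius l p) (x : l))
    obtain ⟨y, rfl⟩ : ∃ y : l, y = x := ⟨x, rfl⟩
    erw [hρτ, hρτ]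
    rw [map_mul]
    congr 1
    rw [frobenius_def, ← Units.val_pow_eq_pow_val, ← zpow_natCast (η ^ s), ← zpow_mul]
  have hsmul := smul_comm_extend σg τg hgen F.toAddMonoidHom hr hσ' hτ'
  exact ⟨{ F with map_smul' := fun c x => hsmul c x }⟩

theorem frob_twist_iter [CharP l p] (hp : p.Prime)
    (hgen : Subgroup.closure ({σg, τg} : Set G) = ⊤)
    (η : lˣ)
    (ρp : ℤ → Representation (ZMod p) G l)
    (hρσ : ∀ (r : ℤ) (x : l), ρp r σg x = x ^ q)
    (hρτ : ∀ (r : ℤ) (x : l), ρp r τg x = ((η ^ r : lˣ) : l) * x)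
    (s : ℤ) (m : ℕ) :
    Nonempty ((ρp s).asModule ≃ₗ[MonoidAlgebra (ZMod p) G]
      (ρp (s * (p : ℤ) ^ m)).asModule) := by
  induction m with
  | zero =>
      have h1 : s * (p : ℤ) ^ 0 = s := by ring
      rw [h1]
      exact ⟨LinearEquiv.refl _ _⟩
  | succ m ih =>
      obtain ⟨E1⟩ := ih
      obtain ⟨E2⟩ := frob_twist (q := q) hp hgen η ρp hρσ hρτ (s * (p : ℤ) ^ m)
      have h1 : s * (p : ℤ) ^ m * (p : ℤ) = s * (p : ℤ) ^ (m + 1) := by ring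
      rw [h1] at E2
      exact ⟨E1.trans E2⟩

theorem piece_equiv [CharP l p] (hp : p.Prime) (he : 0 < e)
    (hgen : Subgroup.closure ({σg, τg} : Set G) = ⊤)
    (η : lˣ) (hη : orderOf η = e)
    (ρp : ℤ → Representation (ZMod p) G l)
    (hρσ : ∀ (r : ℤ) (x : l), ρp r σg x = x ^ q)
    (hρτ : ∀ (r : ℤ) (x : l), ρp r τg x = ((η ^ r : lˣ) : l) * x)
    (s t : ℤ) (h : ∃ m : ℕ, ((s * (p : ℤ) ^ m : ℤ) : ZMod e) = ((t : ℤ) : ZMod e)) :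
    Nonempty ((ρp s).asModule ≃ₗ[MonoidAlgebra (ZMod p) G] (ρp t).asModule) := by
  obtain ⟨m, hm⟩ := h
  obtain ⟨E1⟩ := frob_twist_iter (q := q) hp hgen η ρp hρσ hρτ s m
  have h3 : ((s * (p : ℤ) ^ m - t : ℤ) : ZMod e) = 0 := by
    push_cast
    push_cast at hm
    rw [hm, sub_self]
  have h4 : (e : ℤ) ∣ s * (p : ℤ) ^ m - t :=
    (ZMod.intCast_zmod_eq_zero_iff_dvd _ e).mp h3
  have h2 : ρp (s * (p : ℤ) ^ m) = ρp t :=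
    rep_eq_of_modeq (q := q) hgen η hη ρp hρσ hρτ _ _ h4
  rw [h2] at E1
  exact ⟨E1⟩

end Twist
section Comb

theorem exists_matching (p e n d : ℕ) (hp : p.Prime) (he : 0 < e) (hn : 0 < n)
    (hdvd : (p - 1) ∣ n) (hnd : n = d * e) (hpe : ¬ p ∣ e) :
    ∃ β : Fin n ≃ Fin d × Fin e, ∀ i : Fin n,
      ∃ m : ℕ, ((((i : ℕ) + 1 + ((i : ℕ) + 1 - 1) / (p - 1)) : ℕ) : ZMod e)
          * (p : ZMod e) ^ m = (((β i).2 : ℕ) : ZMod e) := by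
  classical
  haveI : NeZero e := ⟨he.ne'⟩
  have hp2 : 2 ≤ p := hp.two_le
  have hcop : Nat.Coprime p e := (Nat.Prime.coprime_iff_not_dvd hp).mpr hpe
  set U : (ZMod e)ˣ := ZMod.unitOfCoprime p hcop with hU
  have hUval : (U : ZMod e) = (p : ZMod e) := ZMod.coe_unitOfCoprime p hcop
  have hPT : ∀ m : ℕ, (p : ZMod e) ^ (m * orderOf U) = 1 := by
    intro m
    rw [← hUval, ← Units.val_pow_eq_pow_val, mul_comm m (orderOf U), pow_mul, pow_orderOf_eq_one, one_pow, Units.val_one]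
  letI sd : Setoid (ZMod e) :=
    { r := fun x y => ∃ m : ℕ, y = x * (p : ZMod e) ^ m
      iseqv := by
        constructor
        · intro x; exact ⟨0, by simp⟩
        · rintro x y ⟨m, rfl⟩
          have hT : 1 ≤ orderOf U := orderOf_pos U
          refine ⟨m * (orderOf U - 1), ?_⟩
          rw [mul_assoc, ← pow_add]
          have h1 : m + m * (orderOf U - 1) = m * orderOf U := by
            obtain ⟨T', hT'⟩ := Nat.exists_eq_add_of_le hT
            rw [hT', Nat.add_sub_cancel_left]
            ring
          rw [h1, hPT, mul_one]
        · rintro x y z ⟨m, rfl⟩ ⟨m', rfl⟩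
          exact ⟨m + m', by rw [pow_add, mul_assoc]⟩ }
  set S : Quotient sd → Finset (ZMod e) :=
    fun c => Finset.univ.filter (fun x => (⟦x⟧ : Quotient sd) = c) with hS
  have hinv : ∀ mm : ℕ, (⟦((p * mm : ℕ) : ZMod e)⟧ : Quotient sd) = ⟦((mm : ℕ) : ZMod e)⟧ := by
    intro mm
    apply Quotient.sound
    apply sd.symm
    exact ⟨1, by push_cast; ring⟩
  set bfn : ℕ → ℕ := fun i => i + (i - 1) / (p - 1) with hbfn
  set u : Fin n → Quotient sd := fun i => ⟦((bfn ((i : ℕ) + 1) : ℕ) : ZMod e)⟧ with hu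
  set v : Fin d × Fin e → Quotient sd := fun jr => ⟦(((jr.2 : ℕ) : ℕ) : ZMod e)⟧ with hv
  -- basic arithmetic about bfn
  obtain ⟨n1, hn1⟩ := hdvd
  have hn1pos : 1 ≤ n1 := by
    rcases Nat.eq_zero_or_pos n1 with h | h
    · rw [h, mul_zero] at hn1; omega
    · exact h
  have hbsplit : ∀ i : ℕ, 1 ≤ i → bfn i = p * ((i - 1) / (p - 1)) + ((i - 1) % (p - 1) + 1) := by
    intro i hi
    have h1 := Nat.div_add_mod (i - 1) (p - 1)
    show i + (i - 1) / (p - 1) = _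
    have hmul : p * ((i - 1) / (p - 1))
        = (p - 1) * ((i - 1) / (p - 1)) + ((i - 1) / (p - 1)) := by
      calc p * ((i - 1) / (p - 1)) = ((p - 1) + 1) * ((i - 1) / (p - 1)) := by
            rw [Nat.sub_add_cancel (by omega : 1 ≤ p)]
        _ = (p - 1) * ((i - 1) / (p - 1)) + ((i - 1) / (p - 1)) := by ring
    rw [hmul]
    generalize h2 : (p - 1) * ((i - 1) / (p - 1)) = w at h1 ⊢
    omega
  have hbmem : ∀ i : ℕ, 1 ≤ i → i ≤ n → 1 ≤ bfn i ∧ bfn i < p * n1 ∧ ¬ p ∣ bfn i := by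
    intro i h1 h2
    have hsp := hbsplit i h1
    have hsslt : (i - 1) % (p - 1) < p - 1 := Nat.mod_lt _ (by omega)
    have hdm := Nat.div_add_mod (i - 1) (p - 1)
    have hqlt : (i - 1) / (p - 1) < n1 := by
      by_contra hq
      push_neg at hq
      have h3 : (p - 1) * n1 ≤ (p - 1) * ((i - 1) / (p - 1)) := Nat.mul_le_mul_left _ hq
      rw [← hn1] at h3
      omega
    refine ⟨by omega, ?_, ?_⟩
    · rw [hsp]
      have h3 : p * ((i - 1) / (p - 1) + 1) ≤ p * n1 := Nat.mul_le_mul_left _ (by omega)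
      have h4 : p * ((i - 1) / (p - 1) + 1) = p * ((i - 1) / (p - 1)) + p := by ring
      omega
    · rw [hsp]
      intro hdvd2
      have h5 : p ∣ (i - 1) % (p - 1) + 1 :=
        (Nat.dvd_add_right (Dvd.intro _ rfl)).mp hdvd2
      have h6 := Nat.le_of_dvd (by omega) h5
      omega
  have hbsurj : ∀ mm : ℕ, 1 ≤ mm → mm < p * n1 → ¬ p ∣ mm →
      ∃ i : ℕ, 1 ≤ i ∧ i ≤ n ∧ bfn i = mm := by
    intro mm h1 h2 h3
    have hdm := Nat.div_add_mod mm p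
    have hr1 : 1 ≤ mm % p := by
      rcases Nat.eq_zero_or_pos (mm % p) with h | h
      · exact absurd (Nat.dvd_of_mod_eq_zero h) h3
      · exact h
    have hrlt : mm % p < p := Nat.mod_lt _ (by omega)
    have hqlt : mm / p < n1 := by
      rw [Nat.div_lt_iff_lt_mul (by omega : 0 < p)]
      rw [mul_comm]
      exact h2
    refine ⟨(p - 1) * (mm / p) + mm % p, by omega, ?_, ?_⟩
    · have h4 : mm / p + 1 ≤ n1 := by omega
      have h5 : (p - 1) * (mm / p + 1) ≤ (p - 1) * n1 := Nat.mul_le_mul_left _ h4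
      rw [← hn1] at h5
      have h6 : (p - 1) * (mm / p + 1) = (p - 1) * (mm / p) + (p - 1) := by ring
      omega
    · have hi1 : 1 ≤ (p - 1) * (mm / p) + mm % p := by omega
      rw [hbsplit _ hi1]
      have h7 : (p - 1) * (mm / p) + mm % p - 1 = (p - 1) * (mm / p) + (mm % p - 1) := by
        omega
      rw [h7, Nat.mul_add_div (by omega : 0 < p - 1), Nat.mul_add_mod,
        Nat.div_eq_of_lt (show mm % p - 1 < p - 1 by omega),
        Nat.mod_eq_of_lt (show mm % p - 1 < p - 1 by omega), add_zero]
      omega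
  -- counting residues in an interval of length e
  have hsingle : ∀ (c : Quotient sd) (a2 : ℕ),
      ((Finset.Ico a2 (a2 + e)).filter
        (fun mm : ℕ => (⟦((mm : ℕ) : ZMod e)⟧ : Quotient sd) = c)).card = (S c).card := by
    intro c a2
    rw [hS]
    apply Finset.card_bij (fun mm _ => ((mm : ℕ) : ZMod e))
    · intro mm hmm
      simp only [Finset.mem_filter, Finset.mem_Ico, Finset.mem_univ, true_and] at hmm ⊢
      exact hmm.2
    · intro mm hmm mm' hmm' hcast
      simp only [Finset.mem_filter, Finset.mem_Ico] at hmm hmm'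
      have h1 : mm % e = mm' % e := (ZMod.natCast_eq_natCast_iff _ _ _).mp hcast
      have h2 : (e : ℤ) ∣ (mm' : ℤ) - mm := Nat.ModEq.dvd h1
      have h3 : ((mm' : ℤ) - mm) = 0 := by
        apply Int.eq_zero_of_abs_lt_dvd h2
        rw [abs_sub_lt_iff]
        constructor <;> [skip; skip] <;> push_cast <;> omega
      omega
    · intro x hx
      simp only [Finset.mem_filter, Finset.mem_univ, true_and] at hx
      have hle : a2 % e ≤ a2 := Nat.mod_le _ _
      have hlt : a2 % e < e := Nat.mod_lt _ he
      set mm := a2 + ((x.val + e - a2 % e) % e) with hmmdef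
      have hmlt : mm < a2 + e := by
        have h4 := Nat.mod_lt (x.val + e - a2 % e) he
        omega
      have hmod : mm ≡ x.val [MOD e] := by
        have step1 : mm ≡ a2 + (x.val + e - a2 % e) [MOD e] :=
          Nat.ModEq.add_left a2 (Nat.mod_modEq _ _)
        have step2 : a2 + (x.val + e - a2 % e) = (a2 - a2 % e) + x.val + e := by omega
        have step3 : a2 - a2 % e = e * (a2 / e) := by
          have h5 := Nat.mod_add_div a2 e
          omega
        have step4 : (e * (a2 / e)) + x.val + e = x.val + e * (a2 / e + 1) := by ring
        have step5 : x.val + e * (a2 / e + 1) ≡ x.val [MOD e] := by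
          symm
          apply (Nat.modEq_iff_dvd' (Nat.le_add_right _ _)).mpr
          refine ⟨a2 / e + 1, by omega⟩
        exact step1.trans (by rw [step2, step3, step4]; exact step5)
      have hcast : ((mm : ℕ) : ZMod e) = x := by
        have h4 : ((mm : ℕ) : ZMod e) = ((x.val : ℕ) : ZMod e) :=
          (ZMod.natCast_eq_natCast_iff _ _ _).mpr hmod
        rw [h4]
        exact ZMod.natCast_rightInverse x
      refine ⟨mm, ?_, hcast⟩
      simp only [Finset.mem_filter, Finset.mem_Ico]
      exact ⟨⟨Nat.le_add_right _ _, hmlt⟩, by rw [hcast]; exact hx⟩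
  have hIco : ∀ (c : Quotient sd) (L a2 : ℕ),
      ((Finset.Ico a2 (a2 + L * e)).filter
        (fun mm : ℕ => (⟦((mm : ℕ) : ZMod e)⟧ : Quotient sd) = c)).card = L * (S c).card := by
    intro c L
    induction L with
    | zero => intro a2; simp
    | succ L ih =>
        intro a2
        have hEq : a2 + (L + 1) * e = (a2 + e) + L * e := by ring
        rw [hEq, ← Finset.Ico_union_Ico_eq_Ico (Nat.le_add_right a2 e) (Nat.le_add_right _ _),
          Finset.filter_union,
          Finset.card_union_of_disjoint
            (Finset.disjoint_filter_filter (Finset.Ico_disjoint_Ico_consecutive _ _ _)),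
          hsingle c a2, ih (a2 + e)]
        ring
  -- fibre cardinalities agree
  have hfib : ∀ c : Quotient sd,
      Fintype.card {i : Fin n // u i = c} = Fintype.card {jr : Fin d × Fin e // v jr = c} := by
    intro c
    -- count of the v-fibre
    have hvcount : Fintype.card {jr : Fin d × Fin e // v jr = c} = d * (S c).card := by
      have e1 : {jr : Fin d × Fin e // v jr = c}
          ≃ Fin d × {r : Fin e // (⟦((r : ℕ) : ZMod e)⟧ : Quotient sd) = c} :=
        { toFun := fun x => (x.1.1, ⟨x.1.2, x.2⟩)
          invFun := fun y => ⟨(y.1, y.2.1), y.2.2⟩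
          left_inv := fun x => rfl
          right_inv := fun y => rfl }
      rw [Fintype.card_congr e1, Fintype.card_prod, Fintype.card_fin]
      congr 1
      have e2 : {r : Fin e // (⟦((r : ℕ) : ZMod e)⟧ : Quotient sd) = c}
          ≃ {x : ZMod e // (⟦x⟧ : Quotient sd) = c} :=
        { toFun := fun r => ⟨((r.1 : ℕ) : ZMod e), r.2⟩
          invFun := fun x => ⟨⟨(x.1).val, ZMod.val_lt x.1⟩, by
            show (⟦(((x.1).val : ℕ) : ZMod e)⟧ : Quotient sd) = c
            rw [ZMod.natCast_rightInverse x.1]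
            exact x.2⟩
          left_inv := fun r => by
            apply Subtype.ext
            apply Fin.ext
            exact ZMod.val_cast_of_lt r.1.isLt
          right_inv := fun x => by
            apply Subtype.ext
            exact ZMod.natCast_rightInverse x.1 }
      rw [Fintype.card_congr e2, Fintype.card_subtype]
    -- count of the u-fibre
    have hucount1 : Fintype.card {i : Fin n // u i = c}
        = ((Finset.Ico 1 (p * n1)).filter
            (fun mm : ℕ => (⟦((mm : ℕ) : ZMod e)⟧ : Quotient sd) = c ∧ ¬ p ∣ mm)).card := by
      rw [Fintype.card_subtype]
      apply Finset.card_bij (fun (i : Fin n) _ => bfn ((i : ℕ) + 1))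
      · intro i hi
        simp only [Finset.mem_filter, Finset.mem_univ, true_and] at hi
        have h1 := hbmem ((i : ℕ) + 1) (by omega) (by have := i.isLt; omega)
        simp only [Finset.mem_filter, Finset.mem_Ico]
        exact ⟨⟨h1.1, h1.2.1⟩, hi, h1.2.2⟩
      · intro i _ i' _ h
        have hmono : ∀ a b : ℕ, a < b → bfn (a + 1) < bfn (b + 1) := by
          intro a b hab
          show a + 1 + (a + 1 - 1) / (p - 1) < b + 1 + (b + 1 - 1) / (p - 1)
          have := Nat.div_le_div_right (c := p - 1) (by omega : a + 1 - 1 ≤ b + 1 - 1)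
          omega
        rcases lt_trichotomy (i : ℕ) (i' : ℕ) with hlt | heq | hgt
        · exact absurd h (by have := hmono _ _ hlt; omega)
        · exact Fin.ext heq
        · exact absurd h (by have := hmono _ _ hgt; omega)
      · intro mm hmm
        simp only [Finset.mem_filter, Finset.mem_Ico] at hmm
        obtain ⟨⟨h1, h2⟩, h4, h3⟩ := hmm
        obtain ⟨i, hi1, hi2, hi3⟩ := hbsurj mm h1 h2 h3
        refine ⟨⟨i - 1, by omega⟩, ?_, ?_⟩
        · simp only [Finset.mem_filter, Finset.mem_univ, true_and]
          show (⟦((bfn ((i - 1) + 1) : ℕ) : ZMod e)⟧ : Quotient sd) = c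
          rw [show (i - 1) + 1 = i from by omega, hi3]
          exact h4
        · show bfn ((i - 1) + 1) = mm
          rw [show (i - 1) + 1 = i from by omega, hi3]
    have hsplitcard := Finset.card_filter_add_card_filter_not
      (s := (Finset.Ico 1 (p * n1)).filter
        (fun mm : ℕ => (⟦((mm : ℕ) : ZMod e)⟧ : Quotient sd) = c)) (p := fun mm => p ∣ mm)
    have hff1 : (((Finset.Ico 1 (p * n1)).filter
          (fun mm : ℕ => (⟦((mm : ℕ) : ZMod e)⟧ : Quotient sd) = c)).filter
            (fun mm => ¬ p ∣ mm))
        = ((Finset.Ico 1 (p * n1)).filter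
            (fun mm : ℕ => (⟦((mm : ℕ) : ZMod e)⟧ : Quotient sd) = c ∧ ¬ p ∣ mm)) := by
      rw [Finset.filter_filter]
    have hdvdpart : (((Finset.Ico 1 (p * n1)).filter
          (fun mm : ℕ => (⟦((mm : ℕ) : ZMod e)⟧ : Quotient sd) = c)).filter
            (fun mm => p ∣ mm)).card
        = ((Finset.Ico 1 n1).filter
            (fun mm : ℕ => (⟦((mm : ℕ) : ZMod e)⟧ : Quotient sd) = c)).card := by
      symm
      apply Finset.card_bij (fun mm' _ => p * mm')
      · intro mm' h
        simp only [Finset.mem_filter, Finset.mem_Ico] at h ⊢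
        obtain ⟨⟨ha, hb⟩, hc⟩ := h
        refine ⟨⟨⟨Nat.mul_pos (by omega) (by omega), ?_⟩, ?_⟩, Dvd.intro _ rfl⟩
        · exact mul_lt_mul_of_pos_left hb (by omega)
        · rw [hinv mm']
          exact hc
      · intro a _ b _ hab
        exact Nat.eq_of_mul_eq_mul_left (by omega) hab
      · intro mm h
        simp only [Finset.mem_filter, Finset.mem_Ico] at h
        obtain ⟨⟨⟨h1, h2⟩, h3⟩, c', hc'⟩ := h
        have hc'pos : 1 ≤ c' := by
          rcases Nat.eq_zero_or_pos c' with h' | h'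
          · rw [h', mul_zero] at hc'; omega
          · exact h'
        have hc'lt : c' < n1 := by
          by_contra hcl
          push_neg at hcl
          have : p * n1 ≤ p * c' := Nat.mul_le_mul_left _ hcl
          omega
        refine ⟨c', ?_, hc'.symm⟩
        simp only [Finset.mem_filter, Finset.mem_Ico]
        refine ⟨⟨hc'pos, hc'lt⟩, ?_⟩
        have h5 : (⟦((p * c' : ℕ) : ZMod e)⟧ : Quotient sd) = c := by rw [← hc']; exact h3
        rwa [hinv c'] at h5
    have htot : ((Finset.Ico 1 (p * n1)).filter
          (fun mm : ℕ => (⟦((mm : ℕ) : ZMod e)⟧ : Quotient sd) = c)).card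
        = ((Finset.Ico 1 n1).filter
            (fun mm : ℕ => (⟦((mm : ℕ) : ZMod e)⟧ : Quotient sd) = c)).card
          + d * (S c).card := by
      have hend : p * n1 = n1 + d * e := by
        have h3 : p * n1 = (p - 1) * n1 + n1 := by
          conv_lhs => rw [show p = (p - 1) + 1 from by omega]
          ring
        omega
      have h2 : ((Finset.Ico n1 (p * n1)).filter
          (fun mm : ℕ => (⟦((mm : ℕ) : ZMod e)⟧ : Quotient sd) = c)).card = d * (S c).card := by
        rw [hend, hIco c d n1]
      rw [← h2, ← Finset.card_union_of_disjoint
          (Finset.disjoint_filter_filter (Finset.Ico_disjoint_Ico_consecutive 1 n1 (p * n1))),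
        ← Finset.filter_union,
        Finset.Ico_union_Ico_eq_Ico (by omega : 1 ≤ n1)
          (by
            have h6 : 1 * n1 ≤ p * n1 := Nat.mul_le_mul_right n1 (by omega)
            omega)]
    rw [hucount1, hvcount]
    rw [hff1, hdvdpart] at hsplitcard
    omega
  -- the matching bijection
  set β : Fin n ≃ Fin d × Fin e :=
    Equiv.ofFiberEquiv (f := u) (g := v) (fun c => Fintype.equivOfCardEq (hfib c)) with hβ
  have hβ2 : ∀ i, v (β i) = u i := fun i => Equiv.ofFiberEquiv_map _ i
  refine ⟨β, ?_⟩
  intro i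
  have h1 : (⟦((bfn ((i : ℕ) + 1) : ℕ) : ZMod e)⟧ : Quotient sd)
      = ⟦(((β i).2 : ℕ) : ZMod e)⟧ := (hβ2 i).symm
  obtain ⟨m, hm⟩ := Quotient.exact h1
  refine ⟨m, ?_⟩
  have h3 : (i : ℕ) + 1 - 1 = (i : ℕ) := by omega
  have h4 : bfn ((i : ℕ) + 1) = (i : ℕ) + 1 + ((i : ℕ) + 1 - 1) / (p - 1) := rfl
  rw [← h4] at *
  exact hm.symm

end Comb
/-- For `n` a common multiple of `p-1` and `e`, `n = d·e`, the `𝔽_p[G]`-module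
`⊕_{i=1}^{n} l(b(i))` (with `b(i) = i + ⌊(i-1)/(p-1)⌋`) is isomorphic to `k[G]^d`,
where `k[G]` (the representation `κ` of `G` on `G →₀ k` by left translation) is
viewed as an `𝔽_p[G]`-module. -/
theorem stmt_11 (p : ℕ) (hp : p.Prime)
    (k l : Type) [Field k] [Fintype k] [CharP k p] [Field l] [Fintype l] [Algebra k l]
    [Algebra (ZMod p) l] [Algebra (ZMod p) k]
    (q e f : ℕ) (hq : q = Fintype.card k) (hf : f = Module.finrank k l) (he : 0 < e)
    (G : Type) [Group G] [Fintype G] (σg τg : G)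
    (hσ : orderOf σg = f) (hτ : orderOf τg = e)
    (hrel : σg * τg * σg⁻¹ = τg ^ q)
    (hgen : Subgroup.closure ({σg, τg} : Set G) = ⊤)
    (hcard : Nat.card G = e * f)
    (η : lˣ) (hη : orderOf η = e)
    (ρp : ℤ → Representation (ZMod p) G l)
    (hρσ : ∀ (r : ℤ) (x : l), ρp r σg x = x ^ q)
    (hρτ : ∀ (r : ℤ) (x : l), ρp r τg x = ((η ^ r : lˣ) : l) * x)
    (κ : Representation (ZMod p) G (G →₀ k))
    (hκ : ∀ (g : G) (x : G →₀ k), κ g x = Finsupp.mapDomain (fun h => g * h) x)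
    (n d : ℕ) (hn : 0 < n) (hn1 : (p - 1) ∣ n) (hnd : n = d * e) :
    Nonempty ((⨁ i : Fin n, (ρp (((i:ℕ) + 1 + ((i:ℕ) + 1 - 1) / (p - 1) : ℕ) : ℤ)).asModule)
      ≃ₗ[MonoidAlgebra (ZMod p) G] (⨁ _ : Fin d, κ.asModule)) := by
  classical
  haveI := Fact.mk hp
  haveI : CharP l p := charP_of_injective_algebraMap (algebraMap k l).injective p
  haveI : Module.Finite k l := Module.Finite.of_finite
  have hf0 : 0 < f := hf ▸ Module.finrank_pos
  obtain ⟨a, -, hqa⟩ := FiniteField.card k p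
  rw [← hq] at hqa
  have hcl : Fintype.card l = q ^ f := by rw [hq, hf]; exact Module.card_eq_pow_finrank
  have hpe : ¬ p ∣ e := by
    intro hdvd
    have h1 : e ∣ Fintype.card lˣ := hη ▸ orderOf_dvd_card
    rw [Fintype.card_units, hcl] at h1
    have h2 : p ∣ q ^ f - 1 := hdvd.trans h1
    have h3 : p ∣ q ^ f := by
      rw [hqa, ← pow_mul]
      exact dvd_pow_self p (by positivity)
    have h4 : p ∣ 1 := by
      have h5 : q ^ f - (q ^ f - 1) = 1 := by
        have h6 : 2 ≤ q := hq ▸ Fintype.one_lt_card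
        have : 1 ≤ q ^ f := Nat.one_le_pow _ _ (by omega)
        omega
      exact h5 ▸ Nat.dvd_sub h3 h2
    exact hp.one_lt.ne' (Nat.dvd_one.mp h4)
  obtain ⟨Four⟩ := fourier_iso p hp k l q e f hq hf he G σg τg hσ hτ hrel hgen hcard η hη
    ρp hρσ hρτ κ hκ
  obtain ⟨β, hβ⟩ := exists_matching p e n d hp he hn hn1 hnd hpe
  have hpiece : ∀ i : Fin n,
      Nonempty ((ρp (((i:ℕ) + 1 + ((i:ℕ) + 1 - 1) / (p - 1) : ℕ) : ℤ)).asModule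
        ≃ₗ[MonoidAlgebra (ZMod p) G] (ρp ((((β i).2 : ℕ)) : ℤ)).asModule) := by
    intro i
    obtain ⟨m, hm⟩ := hβ i
    apply piece_equiv (q := q) hp he hgen η hη ρp hρσ hρτ
    refine ⟨m, ?_⟩
    push_cast
    exact_mod_cast hm
  have congrPiece : ∀ (s t : ℤ), s = t →
      ((ρp s).asModule ≃ₗ[MonoidAlgebra (ZMod p) G] (ρp t).asModule) := by
    intro s t h
    subst h
    exact LinearEquiv.refl _ _
  have E1 : (⨁ i : Fin n, (ρp (((i:ℕ) + 1 + ((i:ℕ) + 1 - 1) / (p - 1) : ℕ) : ℤ)).asModule)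
      ≃ₗ[MonoidAlgebra (ZMod p) G]
      ⨁ i : Fin n, (ρp ((((β i).2 : ℕ)) : ℤ)).asModule :=
    DFinsupp.mapRange.linearEquiv (fun i => (hpiece i).some)
  have E2 : (⨁ i : Fin n, (ρp ((((β i).2 : ℕ)) : ℤ)).asModule)
      ≃ₗ[MonoidAlgebra (ZMod p) G]
      ⨁ jr : Fin d × Fin e, (ρp ((((β (β.symm jr)).2 : ℕ)) : ℤ)).asModule :=
    DirectSum.lequivCongrLeft _ β
  have E3 : (⨁ jr : Fin d × Fin e, (ρp ((((β (β.symm jr)).2 : ℕ)) : ℤ)).asModule)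
      ≃ₗ[MonoidAlgebra (ZMod p) G]
      ⨁ jr : Fin d × Fin e, (ρp (((jr.2 : ℕ)) : ℤ)).asModule :=
    DFinsupp.mapRange.linearEquiv (fun jr => congrPiece _ _ (by rw [Equiv.apply_symm_apply]))
  have E4 : (⨁ jr : Fin d × Fin e, (ρp (((jr.2 : ℕ)) : ℤ)).asModule)
      ≃ₗ[MonoidAlgebra (ZMod p) G]
      ⨁ s : (Σ _ : Fin d, Fin e), (ρp (((s.2 : ℕ)) : ℤ)).asModule :=
    DirectSum.lequivCongrLeft _ (Equiv.sigmaEquivProd (Fin d) (Fin e)).symm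
  have E5 : (⨁ s : (Σ _ : Fin d, Fin e), (ρp (((s.2 : ℕ)) : ℤ)).asModule)
      ≃ₗ[MonoidAlgebra (ZMod p) G]
      ⨁ _j : Fin d, ⨁ r : Fin e, (ρp (((r : ℕ)) : ℤ)).asModule :=
    DirectSum.sigmaLcurryEquiv (MonoidAlgebra (ZMod p) G)
      (δ := fun (_ : Fin d) (r : Fin e) => (ρp ((r : ℕ) : ℤ)).asModule)
  have E6 : (⨁ _j : Fin d, ⨁ r : Fin e, (ρp (((r : ℕ)) : ℤ)).asModule)
      ≃ₗ[MonoidAlgebra (ZMod p) G] ⨁ _ : Fin d, κ.asModule :=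
    DFinsupp.mapRange.linearEquiv (fun _ => Four.symm)
  exact ⟨E1.trans (E2.trans (E3.trans (E4.trans (E5.trans E6))))⟩
end

section
/- With notation as above, for every r ∈ ℤ the module l(r) is projective both as a k[G]-module and as an 𝔽_p[G]-module. -/
open Finset TensorProduct

section Higman

variable {k₀ G V : Type} [Field k₀] [Group G] [Fintype G]
  [CommRing V] [Algebra k₀ V]

theorem higman_aux (ρ : Representation k₀ G V) (Φ : G → V → V) (c : V)
    (hconj : ∀ (g : G) (x y : V), ρ g (x * y) = Φ g x * ρ g y)
    (hc : ∑ g : G, Φ g c = 1) :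
    Module.Projective (MonoidAlgebra k₀ G) ρ.asModule := by
  classical
  set A := MonoidAlgebra k₀ G with hA
  set M := ρ.asModule with hM
  have smul_def : ∀ (a : A) (x : M), a • x = ρ.asAlgebraHom a x := fun _ _ => rfl
  haveI : IsScalarTower k₀ A M :=
    ⟨fun s a x => by
      show ρ.asAlgebraHom (s • a) x = s • ρ.asAlgebraHom a x
      rw [map_smul]; rfl⟩
  haveI : SMulCommClass k₀ A M :=
    ⟨fun s a x => by
      show s • ρ.asAlgebraHom a x = ρ.asAlgebraHom a (s • x)
      exact (LinearMap.map_smul _ _ _).symm⟩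
  let ι : V →ₗ[k₀] M :=
    { toFun := fun x => x
      map_add' := fun _ _ => rfl
      map_smul' := fun _ _ => rfl }
  let ι' : M →ₗ[k₀] V :=
    { toFun := fun x => x
      map_add' := fun _ _ => rfl
      map_smul' := fun _ _ => rfl }
  let β : A →ₗ[A] V →ₗ[k₀] M :=
    { toFun := fun a => a • ι
      map_add' := fun a b => add_smul a b ι
      map_smul' := fun a b => mul_smul a b ι }
  let π : (A ⊗[k₀] V) →ₗ[A] M := TensorProduct.AlgebraTensorModule.lift β
  let i₀ : M →ₗ[k₀] A ⊗[k₀] V :=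
    ∑ g : G, (TensorProduct.mk k₀ A V (MonoidAlgebra.of k₀ G g)) ∘ₗ
      (LinearMap.mulLeft k₀ c) ∘ₗ ((ρ g⁻¹) ∘ₗ ι')
  have of_smul : ∀ (g : G) (m : M), (MonoidAlgebra.of k₀ G g) • m = ι (ρ g (ι' m)) := by
    intro g m
    show ρ.asAlgebraHom (MonoidAlgebra.of k₀ G g) m = _
    rw [Representation.asAlgebraHom_of]
    rfl
  have i₀_apply : ∀ m : M, i₀ m =
      ∑ g : G, (MonoidAlgebra.of k₀ G g) ⊗ₜ[k₀] (c * ρ g⁻¹ (ι' m)) := by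
    intro m
    simp [i₀, LinearMap.sum_apply, LinearMap.mulLeft_apply]
  have key : ∀ (g₀ : G) (m : M), i₀ ((MonoidAlgebra.of k₀ G g₀) • m)
      = (MonoidAlgebra.of k₀ G g₀) • i₀ m := by
    intro g₀ m
    rw [i₀_apply, i₀_apply, Finset.smul_sum]
    have hι : ∀ x : V, ι' (ι x) = x := fun _ => rfl
    have lhs : ∀ g : G, (MonoidAlgebra.of k₀ G g) ⊗ₜ[k₀]
        (c * ρ g⁻¹ (ι' ((MonoidAlgebra.of k₀ G g₀) • m)))
        = (MonoidAlgebra.of k₀ G g) ⊗ₜ[k₀] (c * ρ (g⁻¹ * g₀) (ι' m)) := by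
      intro g
      rw [of_smul, hι, ← Module.End.mul_apply, ← map_mul]
    simp only [lhs]
    have rhs : ∀ g : G, (MonoidAlgebra.of k₀ G g₀) • ((MonoidAlgebra.of k₀ G g) ⊗ₜ[k₀]
        (c * ρ g⁻¹ (ι' m)))
        = (MonoidAlgebra.of k₀ G (g₀ * g)) ⊗ₜ[k₀] (c * ρ g⁻¹ (ι' m)) := by
      intro g
      rw [TensorProduct.smul_tmul', smul_eq_mul, ← map_mul]
    simp only [rhs]
    refine (Fintype.sum_equiv (Equiv.mulLeft g₀) _ _ ?_).symm
    intro g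
    have h2 : ((g₀ * g)⁻¹ * g₀ : G) = g⁻¹ := by group
    simp only [Equiv.coe_mulLeft, h2]
  let i : M →ₗ[A] A ⊗[k₀] V :=
    { toFun := i₀
      map_add' := map_add i₀
      map_smul' := by
        intro a m
        show i₀ (a • m) = a • i₀ m
        induction a using MonoidAlgebra.induction_on with
        | of g => exact key g m
        | add a b ha hb => rw [add_smul, add_smul, map_add, ha, hb]
        | smul r a ha => rw [smul_assoc, smul_assoc, map_smul, ha] }
  have Hsplit : π.comp i = LinearMap.id := by
    apply LinearMap.ext
    intro m
    show π (i₀ m) = m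
    rw [i₀_apply, map_sum]
    have step : ∀ g : G, π ((MonoidAlgebra.of k₀ G g) ⊗ₜ[k₀] (c * ρ g⁻¹ (ι' m)))
        = ι (Φ g c * ι' m) := by
      intro g
      have h1 : π ((MonoidAlgebra.of k₀ G g) ⊗ₜ[k₀] (c * ρ g⁻¹ (ι' m)))
          = (MonoidAlgebra.of k₀ G g) • (ι (c * ρ g⁻¹ (ι' m))) := by
        show (β (MonoidAlgebra.of k₀ G g)) (c * ρ g⁻¹ (ι' m)) = _
        rfl
      rw [h1, of_smul]
      congr 1
      have hι : ∀ x : V, ι' (ι x) = x := fun _ => rfl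
      rw [hι, hconj, ← Module.End.mul_apply, ← map_mul, mul_inv_cancel, map_one,
        Module.End.one_apply]
    simp only [step]
    have : ∑ g : G, ι (Φ g c * ι' m) = ι ((∑ g : G, Φ g c) * ι' m) := by
      rw [Finset.sum_mul, map_sum]
    rw [this, hc, one_mul]
    rfl
  exact Module.Projective.of_split i π Hsplit

end Higman

theorem conj_aux {k₀ G l : Type} [CommSemiring k₀] [Group G] [CommRing l] [Module k₀ l]
    (σg τg : G) (hgen : Subgroup.closure ({σg, τg} : Set G) = ⊤) (q : ℕ) (η : lˣ) (r : ℤ)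
    (ρr : Representation k₀ G l)
    (hσ' : ∀ x : l, ρr σg x = x ^ q) (hτ' : ∀ x : l, ρr τg x = ((η ^ r : lˣ) : l) * x)
    (Φ : G → l → l)
    (hΦmul : ∀ (g h : G) (x : l), Φ (g * h) x = Φ g (Φ h x))
    (hΦone : ∀ x : l, Φ 1 x = x)
    (hΦσ : ∀ x : l, Φ σg x = x ^ q) (hΦτ : ∀ x : l, Φ τg x = x) :
    ∀ (g : G) (x y : l), ρr g (x * y) = Φ g x * ρr g y := by
  have hcanc : ∀ (g : G) (z : l), ρr g (ρr g⁻¹ z) = z := by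
    intro g z
    rw [← Module.End.mul_apply, ← map_mul, mul_inv_cancel, map_one, Module.End.one_apply]
  have hcanc' : ∀ (g : G) (z : l), ρr g⁻¹ (ρr g z) = z := by
    intro g z
    rw [← Module.End.mul_apply, ← map_mul, inv_mul_cancel, map_one, Module.End.one_apply]
  let Hsub : Subgroup G :=
    { carrier := {g | ∀ x y : l, ρr g (x * y) = Φ g x * ρr g y}
      one_mem' := by
        intro x y
        rw [show ρr (1 : G) = 1 from map_one ρr, Module.End.one_apply, Module.End.one_apply, hΦone]
      mul_mem' := by
        intro g h hg hh x y
        rw [show ρr (g * h) = ρr g * ρr h from map_mul ρr g h, Module.End.mul_apply,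
          Module.End.mul_apply, hh, hg, ← hΦmul]
      inv_mem' := by
        intro g hg x y
        have hΦcanc : Φ g (Φ g⁻¹ x) = x := by
          rw [← hΦmul, mul_inv_cancel, hΦone]
        have h1 : ρr g (Φ g⁻¹ x * ρr g⁻¹ y) = x * y := by
          rw [hg, hΦcanc, hcanc]
        have := congrArg (ρr g⁻¹) h1
        rw [hcanc'] at this
        rw [← this] }
  have htop : ∀ g : G, g ∈ Hsub := by
    intro g
    have hle : (⊤ : Subgroup G) ≤ Hsub := by
      rw [← hgen]
      apply (Subgroup.closure_le _).mpr
      rintro x (rfl | rfl)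
      · intro a b
        rw [hσ', hσ', hΦσ, mul_pow]
      · intro a b
        rw [hτ', hτ', hΦτ]
        ring
    exact hle trivial
  exact fun g => htop g

open Finset Polynomial

theorem exists_c (p : ℕ) (hp : p.Prime)
    (k l : Type) [Field k] [Fintype k] [CharP k p] [Field l] [Fintype l] [Algebra k l]
    (q e f : ℕ) (hq : q = Fintype.card k) (hf : f = Module.finrank k l)
    (G : Type) [Group G] [Fintype G] (σg τg : G)
    (hσ : orderOf σg = f)
    (hgen : Subgroup.closure ({σg, τg} : Set G) = ⊤)
    (hcard : Nat.card G = e * f)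
    (η : lˣ) (hη : orderOf η = e)
    (ρ0 : Representation k G l)
    (hρσ : ∀ x : l, ρ0 σg x = x ^ q)
    (hρτ : ∀ x : l, ρ0 τg x = x) :
    ∃ c : l, ∑ g : G, ρ0 g c = 1 := by
  classical
  haveI : Fact p.Prime := ⟨hp⟩
  haveI : CharP l p := charP_of_injective_algebraMap (algebraMap k l).injective p
  have hq2 : 2 ≤ q := by rw [hq]; exact Fintype.one_lt_card
  have hf0 : 0 < f := by rw [hf]; exact Module.finrank_pos
  have hcardl : Fintype.card l = q ^ f := by rw [hq, hf]; exact Module.card_eq_pow_finrank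
  -- p does not divide e
  have hpe : ¬ (p ∣ e) := by
    intro hdvd
    have h1 : e ∣ q ^ f - 1 := by
      have := orderOf_dvd_card (x := η)
      rwa [hη, Fintype.card_units, hcardl] at this
    have h2 : p ∣ q ^ f - 1 := hdvd.trans h1
    have h3 : p ∣ q := by
      obtain ⟨n, hpn, hck⟩ := FiniteField.card k p
      rw [hq, hck]
      exact dvd_pow_self p n.ne_zero
    have h4 : p ∣ q ^ f := dvd_pow h3 hf0.ne'
    have h5 : p ∣ 1 := by
      have : q ^ f - (q ^ f - 1) = 1 := by
        have : 1 ≤ q ^ f := Nat.one_le_pow _ _ (by omega)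
        omega
      calc p ∣ q ^ f - (q ^ f - 1) := Nat.dvd_sub h4 h2
        _ = 1 := this
    exact hp.one_lt.ne' (Nat.dvd_one.mp h5)
  have hel : (e : l) ≠ 0 := fun h => hpe ((CharP.cast_eq_zero_iff l p e).mp h)
  -- the group hom to units of endomorphisms
  set Ψ := ρ0.asGroupHom with hΨ
  have hΨcoe : ∀ g : G, ((Ψ g : (l →ₗ[k] l)ˣ) : l →ₗ[k] l) = ρ0 g :=
    fun g => Representation.asGroupHom_apply ρ0 g
  -- iterated Frobenius
  have hpow : ∀ (j : ℕ) (x : l), ((ρ0 σg) ^ j) x = x ^ q ^ j := by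
    intro j
    induction j with
    | zero => intro x; simp
    | succ n ih =>
      intro x
      rw [pow_succ, Module.End.mul_apply, hρσ, ih, ← pow_mul]
      ring_nf
  -- order of the Frobenius unit is f
  have horder : orderOf (Ψ σg) = f := by
    have hdvd : orderOf (Ψ σg) ∣ f := hσ ▸ orderOf_map_dvd Ψ σg
    refine le_antisymm (Nat.le_of_dvd hf0 hdvd) ?_
    set j := orderOf (Ψ σg) with hj
    have hfψ : Ψ σg ^ f = 1 := by
      rw [← map_pow, ← hσ, pow_orderOf_eq_one, map_one]
    have hj0 : 0 < j := orderOf_pos_iff.mpr (isOfFinOrder_iff_pow_eq_one.mpr ⟨f, hf0, hfψ⟩)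
    have hend : ((ρ0 σg) ^ j) = (1 : l →ₗ[k] l) := by
      have := pow_orderOf_eq_one (Ψ σg)
      have h2 := congrArg (Units.val) this
      rwa [Units.val_pow_eq_pow_val, hΨcoe, Units.val_one] at h2
    have hfix : ∀ x : l, x ^ q ^ j = x := by
      intro x
      rw [← hpow j x, hend, Module.End.one_apply]
    obtain ⟨ζ, hζ⟩ := IsCyclic.exists_generator (α := lˣ)
    have hζord : orderOf ζ = q ^ f - 1 := by
      rw [orderOf_eq_card_of_forall_mem_zpowers hζ, Nat.card_eq_fintype_card,
        Fintype.card_units, hcardl]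
    have hζpow : ζ ^ (q ^ j - 1) = 1 := by
      have h1 : ζ ^ (q ^ j) = ζ := by
        ext
        rw [Units.val_pow_eq_pow_val]
        exact hfix _
      have h2 : ζ ^ (q ^ j - 1 + 1) = ζ ^ 1 := by
        rw [Nat.sub_add_cancel (Nat.one_le_pow _ _ (by omega)), h1, pow_one]
      have h3 : ζ ^ (q ^ j - 1) * ζ = 1 * ζ := by
        rw [← pow_succ, h2, pow_one, one_mul]
      exact mul_right_cancel h3
    have h4 : q ^ f - 1 ∣ q ^ j - 1 := hζord ▸ orderOf_dvd_of_pow_eq_one hζpow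
    have h2qj : 2 ≤ q ^ j := by
      calc 2 ≤ q := hq2
        _ = q ^ 1 := (pow_one q).symm
        _ ≤ q ^ j := Nat.pow_le_pow_right (by omega) hj0
    have h5 : q ^ f - 1 ≤ q ^ j - 1 := Nat.le_of_dvd (by omega) h4
    have h6 : q ^ f ≤ q ^ j := by
      have : 1 ≤ q ^ f := Nat.one_le_pow _ _ (by omega)
      omega
    exact (Nat.pow_le_pow_iff_right (by omega : 1 < q)).mp h6
  -- τ maps to 1
  have hτ1 : Ψ τg = 1 := by
    ext1
    rw [hΨcoe, Units.val_one]
    exact LinearMap.ext fun x => hρτ x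
  -- range of Ψ
  have hrange : Ψ.range = Subgroup.zpowers (Ψ σg) := by
    rw [MonoidHom.range_eq_map, ← hgen, MonoidHom.map_closure]
    apply le_antisymm
    · apply (Subgroup.closure_le _).mpr
      rintro x ⟨y, hy, rfl⟩
      rcases hy with rfl | rfl
      · exact Subgroup.mem_zpowers _
      · rw [hτ1]; exact Subgroup.one_mem _
    · apply Subgroup.zpowers_le.mpr
      exact Subgroup.subset_closure ⟨σg, Or.inl rfl, rfl⟩
  have hcardrange : Nat.card Ψ.range = f := by
    rw [hrange, Nat.card_zpowers, horder]
  have hcardker : Nat.card Ψ.ker = e := by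
    have h1 := Subgroup.card_eq_card_quotient_mul_card_subgroup Ψ.ker
    rw [hcard, Nat.card_congr (QuotientGroup.quotientKerEquivRange Ψ).toEquiv, hcardrange] at h1
    have h2 : f * Nat.card Ψ.ker = f * e := by rw [← h1, mul_comm]
    exact Nat.eq_of_mul_eq_mul_left hf0 h2
  -- multiplicativity of ρ0 g
  have hmul1 : ∀ g : G, (∀ x y : l, ρ0 g (x * y) = ρ0 g x * ρ0 g y) ∧ ρ0 g 1 = 1 := by
    have hcanc : ∀ (g : G) (z : l), ρ0 g (ρ0 g⁻¹ z) = z := by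
      intro g z
      rw [← Module.End.mul_apply, ← map_mul, mul_inv_cancel, map_one, Module.End.one_apply]
    have hcanc' : ∀ (g : G) (z : l), ρ0 g⁻¹ (ρ0 g z) = z := by
      intro g z
      rw [← Module.End.mul_apply, ← map_mul, inv_mul_cancel, map_one, Module.End.one_apply]
    let Hsub : Subgroup G :=
      { carrier := {g | (∀ x y : l, ρ0 g (x * y) = ρ0 g x * ρ0 g y) ∧ ρ0 g 1 = 1}
        one_mem' := by
          constructor
          · intro x y
            rw [show ρ0 (1 : G) = 1 from map_one ρ0]
            simp
          · rw [show ρ0 (1 : G) = 1 from map_one ρ0]; simp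
        mul_mem' := by
          rintro g h ⟨hg1, hg2⟩ ⟨hh1, hh2⟩
          constructor
          · intro x y
            rw [show ρ0 (g * h) = ρ0 g * ρ0 h from map_mul ρ0 g h, Module.End.mul_apply,
              Module.End.mul_apply, Module.End.mul_apply, hh1, hg1]
          · rw [show ρ0 (g * h) = ρ0 g * ρ0 h from map_mul ρ0 g h, Module.End.mul_apply, hh2, hg2]
        inv_mem' := by
          rintro g ⟨hg1, hg2⟩
          constructor
          · intro x y
            have h1 : ρ0 g (ρ0 g⁻¹ x * ρ0 g⁻¹ y) = x * y := by
              rw [hg1, hcanc, hcanc]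
            have h2 := congrArg (ρ0 g⁻¹) h1
            rw [hcanc'] at h2
            exact h2.symm
          · have h2 := congrArg (ρ0 g⁻¹) hg2
            rw [hcanc'] at h2
            exact h2.symm }
    intro g
    have hle : (⊤ : Subgroup G) ≤ Hsub := by
      rw [← hgen]
      apply (Subgroup.closure_le _).mpr
      rintro x (rfl | rfl)
      · exact ⟨fun a b => by rw [hρσ, hρσ, hρσ, mul_pow], by rw [hρσ, one_pow]⟩
      · exact ⟨fun a b => by rw [hρτ, hρτ, hρτ], by rw [hρτ]⟩
    exact hle trivial
  -- each ρ0 g as a monoid hom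
  let mh : G → (l →* l) := fun g =>
    { toFun := ρ0 g
      map_one' := (hmul1 g).2
      map_mul' := (hmul1 g).1 }
  -- fibers of mh have cardinality e
  have hfiber : ∀ g₀ : G, (univ.filter (fun g => mh g = mh g₀)).card = e := by
    intro g₀
    have hiff : ∀ g : G, mh g = mh g₀ ↔ Ψ g = Ψ g₀ := by
      intro g
      constructor
      · intro h
        ext1
        rw [hΨcoe, hΨcoe]
        exact LinearMap.ext fun x => DFunLike.congr_fun h x
      · intro h
        ext x
        have : ρ0 g = ρ0 g₀ := by rw [← hΨcoe, ← hΨcoe, h]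
        exact DFunLike.congr_fun this x
    rw [Finset.filter_congr (fun g _ => by rw [hiff g])]
    rw [← Fintype.card_subtype]
    have eqv : {g : G // Ψ g = Ψ g₀} ≃ Ψ.ker :=
      { toFun := fun x => ⟨g₀⁻¹ * x.1, by
          rw [MonoidHom.mem_ker, map_mul, map_inv, x.2, inv_mul_cancel]⟩
        invFun := fun y => ⟨g₀ * y.1, by
          rw [map_mul, show Ψ (y : G) = 1 from y.2, mul_one]⟩
        left_inv := fun x => Subtype.ext (by simp)
        right_inv := fun y => Subtype.ext (by simp) }
    rw [Fintype.card_congr eqv, ← Nat.card_eq_fintype_card, hcardker]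
  -- there is c₀ with nonzero "trace"
  have hex : ∃ c₀ : l, ∑ g : G, ρ0 g c₀ ≠ 0 := by
    by_contra hcon
    push_neg at hcon
    have h0 : ∑ g : G, ((mh g : l → l)) = 0 := by
      funext x
      rw [Finset.sum_apply]
      exact hcon x
    rw [Finset.sum_comp (fun χ : l →* l => (χ : l → l)) mh] at h0
    have h1 : ∑ χ ∈ univ.image mh, ((e : l)) • (χ : l → l) = 0 := by
      rw [← h0]
      apply Finset.sum_congr rfl
      intro χ hχ
      obtain ⟨g₀, _, rfl⟩ := Finset.mem_image.mp hχ
      rw [hfiber g₀, Nat.cast_smul_eq_nsmul]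
    have h2 := linearIndependent_iff'.mp (linearIndependent_monoidHom l l)
      (univ.image mh) (fun _ => (e : l)) h1 (mh 1)
      (Finset.mem_image.mpr ⟨1, Finset.mem_univ _, rfl⟩)
    exact hel h2
  obtain ⟨c₀, hc₀⟩ := hex
  set y := ∑ g : G, ρ0 g c₀ with hy
  -- y is fixed by Frobenius
  have hyq : y ^ q = y := by
    have h1 : y ^ q = ρ0 σg y := (hρσ y).symm
    have h2 : ρ0 σg y = ∑ g : G, ρ0 (σg * g) c₀ := by
      rw [hy, map_sum]
      apply Finset.sum_congr rfl
      intro g _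
      rw [show ρ0 (σg * g) = ρ0 σg * ρ0 g from map_mul ρ0 σg g, Module.End.mul_apply]
    rw [h1, h2]
    exact Fintype.sum_equiv (Equiv.mulLeft σg) _ _ (fun g => rfl)
  -- y is in the image of k
  have hmem : ∃ s : k, algebraMap k l s = y := by
    by_contra hcon
    push_neg at hcon
    set Im : Finset l := univ.image (algebraMap k l) with hIm
    have hcardIm : Im.card = q := by
      rw [hIm, Finset.card_image_of_injective _ (algebraMap k l).injective, Finset.card_univ, hq]
    have hP : (X ^ q - X : l[X]) ≠ 0 := FiniteField.X_pow_card_sub_X_ne_zero l (by omega)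
    have hdeg : (X ^ q - X : l[X]).natDegree = q := FiniteField.X_pow_card_sub_X_natDegree_eq l (by omega)
    have hroots : ∀ z : l, z ^ q = z → z ∈ (X ^ q - X : l[X]).roots.toFinset := by
      intro z hz
      rw [Multiset.mem_toFinset, mem_roots hP]
      simp [IsRoot, hz]
    have hins : insert y Im ⊆ (X ^ q - X : l[X]).roots.toFinset := by
      intro z hz
      rcases Finset.mem_insert.mp hz with rfl | hz
      · exact hroots _ hyq
      · obtain ⟨a, _, rfl⟩ := Finset.mem_image.mp hz
        refine hroots _ ?_
        rw [← map_pow, hq, FiniteField.pow_card]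
    have hyIm : y ∉ Im := by
      intro hmem2
      obtain ⟨a, _, ha⟩ := Finset.mem_image.mp hmem2
      exact hcon a ha
    have hcard1 : q + 1 ≤ (X ^ q - X : l[X]).roots.toFinset.card := by
      have := Finset.card_le_card hins
      rwa [Finset.card_insert_of_notMem hyIm, hcardIm] at this
    have hcard2 : (X ^ q - X : l[X]).roots.toFinset.card ≤ q := by
      calc (X ^ q - X : l[X]).roots.toFinset.card ≤ Multiset.card (X ^ q - X : l[X]).roots :=
            Multiset.toFinset_card_le _
        _ ≤ (X ^ q - X : l[X]).natDegree := Polynomial.card_roots' _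
        _ = q := hdeg
    omega
  obtain ⟨s, hs⟩ := hmem
  have hs0 : s ≠ 0 := by
    rintro rfl
    rw [map_zero] at hs
    exact hc₀ (hs ▸ rfl)
  refine ⟨s⁻¹ • c₀, ?_⟩
  have h1 : ∑ g : G, ρ0 g (s⁻¹ • c₀) = s⁻¹ • y := by
    rw [hy, Finset.smul_sum]
    exact Finset.sum_congr rfl fun g _ => map_smul _ _ _
  rw [h1, ← hs, Algebra.smul_def, ← map_mul, inv_mul_cancel₀ hs0, map_one]

/-- For every `r ∈ ℤ`, the module `l(r)` is projective both as a `k[G]`-module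
and as an `𝔽_p[G]`-module. -/
theorem stmt_12 (p : ℕ) (hp : p.Prime)
    (k l : Type) [Field k] [Fintype k] [CharP k p] [Field l] [Fintype l] [Algebra k l]
    [Algebra (ZMod p) l]
    (q e f : ℕ) (hq : q = Fintype.card k) (hf : f = Module.finrank k l) (he : 0 < e)
    (G : Type) [Group G] [Fintype G] (σg τg : G)
    (hσ : orderOf σg = f) (hτ : orderOf τg = e)
    (hrel : σg * τg * σg⁻¹ = τg ^ q)
    (hgen : Subgroup.closure ({σg, τg} : Set G) = ⊤)
    (hcard : Nat.card G = e * f)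
    (η : lˣ) (hη : orderOf η = e)
    (ρ : ℤ → Representation k G l)
    (hρσ : ∀ (r : ℤ) (x : l), ρ r σg x = x ^ q)
    (hρτ : ∀ (r : ℤ) (x : l), ρ r τg x = ((η ^ r : lˣ) : l) * x)
    (ρp : ℤ → Representation (ZMod p) G l)
    (hρpσ : ∀ (r : ℤ) (x : l), ρp r σg x = x ^ q)
    (hρpτ : ∀ (r : ℤ) (x : l), ρp r τg x = ((η ^ r : lˣ) : l) * x) :
    ∀ r : ℤ, Module.Projective (MonoidAlgebra k G) (ρ r).asModule ∧
      Module.Projective (MonoidAlgebra (ZMod p) G) (ρp r).asModule := by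
  haveI : Fact p.Prime := ⟨hp⟩
  -- the twist-0 representation acts by ring homomorphisms; use it as the `Φ` data
  have hρτ0 : ∀ x : l, ρ 0 τg x = x := by
    intro x
    rw [hρτ 0 x, zpow_zero, Units.val_one, one_mul]
  obtain ⟨c, hc⟩ := exists_c p hp k l q e f hq hf G σg τg hσ hgen hcard η hη (ρ 0)
    (hρσ 0) hρτ0
  set Φ : G → l → l := fun g x => ρ 0 g x with hΦ
  have hΦmul : ∀ (g h : G) (x : l), Φ (g * h) x = Φ g (Φ h x) := by
    intro g h x
    show ρ 0 (g * h) x = _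
    rw [show (ρ 0) (g * h) = ρ 0 g * ρ 0 h from map_mul (ρ 0) g h, Module.End.mul_apply]
  have hΦone : ∀ x : l, Φ 1 x = x := by
    intro x
    show ρ 0 (1 : G) x = x
    rw [show (ρ 0) (1 : G) = 1 from map_one (ρ 0), Module.End.one_apply]
  have hΦσ : ∀ x : l, Φ σg x = x ^ q := hρσ 0
  have hΦτ : ∀ x : l, Φ τg x = x := hρτ0
  intro r
  constructor
  · exact higman_aux (ρ r) Φ c
      (conj_aux σg τg hgen q η r (ρ r) (hρσ r) (hρτ r) Φ hΦmul hΦone hΦσ hΦτ) hc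
  · exact higman_aux (ρp r) Φ c
      (conj_aux σg τg hgen q η r (ρp r) (hρpσ r) (hρpτ r) Φ hΦmul hΦone hΦσ hΦτ) hc
end

section
/- Let L be a local field of characteristic p (a Laurent series field over a finite field) with ring of integers 𝔬_L and maximal ideal 𝔭_L, and let ℘(x) = x^p − x. For r ∈ ℤ, let p̄^r denote the image of 𝔭_L^r in L⁺/℘(L⁺). Then p̄^r = {0} for all r > 0, and the image of 𝔬_L in L⁺/℘(L⁺) is isomorphic to 𝔽_p (via the residue map followed by the trace to 𝔽_p). -/
/-- The fractional ideal `𝔭_L^r ⊆ L = l((s))`, as an additive subgroup: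
series with coefficients vanishing in degrees `< r`. -/
def pid (l : Type) [Field l] (r : ℤ) : AddSubgroup (LaurentSeries l) where
  carrier := {x | ∀ n : ℤ, n < r → x.coeff n = 0}
  zero_mem' := by intro n hn; simp
  add_mem' := by intro a b ha hb n hn; simp [HahnSeries.coeff_add, ha n hn, hb n hn]
  neg_mem' := by intro a ha n hn; simp [HahnSeries.coeff_neg, ha n hn]

/-- The Artin–Schreier map `℘(x) = x^p - x` as an additive map on `L = l((s))`
(in characteristic `p`). -/
noncomputable def wp (p : ℕ) (l : Type) [Field l] [CharP l p] (hp : p.Prime) :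
    LaurentSeries l →+ LaurentSeries l where
  toFun x := x ^ p - x
  map_zero' := by simp [zero_pow hp.ne_zero]
  map_add' := by
    intro x y
    haveI : CharP (LaurentSeries l) p :=
      charP_of_injective_ringHom (HahnSeries.C_injective (Γ := ℤ) (R := l)) p
    haveI := Fact.mk hp
    show (x + y) ^ p - (x + y) = (x ^ p - x) + (y ^ p - y)
    rw [add_pow_char]
    ring

open PowerSeries

lemma mem_span_X_pow_iff {R : Type} [CommRing R] (n : ℕ) (f : PowerSeries R) :
    f ∈ (Ideal.span {(PowerSeries.X : PowerSeries R)}) ^ n ↔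
      ∀ m < n, PowerSeries.coeff m f = 0 := by
  rw [Ideal.span_singleton_pow, Ideal.mem_span_singleton]
  exact PowerSeries.X_pow_dvd_iff

lemma ps_adicComplete (R : Type) [CommRing R] :
    IsAdicComplete (Ideal.span {(PowerSeries.X : PowerSeries R)}) (PowerSeries R) where
  haus' := by
    intro x hx
    ext n
    have h := hx (n + 1)
    simp only [← Ideal.one_eq_top, smul_eq_mul, mul_one, SModEq.sub_mem, sub_zero,
      mem_span_X_pow_iff] at h
    simpa using h n (by omega)
  prec' := by
    intro f hf
    refine ⟨PowerSeries.mk fun n => PowerSeries.coeff n (f (n + 1)), fun n => ?_⟩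
    simp only [← Ideal.one_eq_top, smul_eq_mul, mul_one, SModEq.sub_mem,
      mem_span_X_pow_iff] at hf ⊢
    intro m hm
    have h := hf (show m + 1 ≤ n by omega)
    have := h m (by omega)
    rw [map_sub, sub_eq_zero] at this
    rw [map_sub, PowerSeries.coeff_mk, sub_eq_zero]
    exact this.symm

lemma AS_ps (p : ℕ) (hp : p.Prime) (l : Type) [Field l] [CharP l p]
    (x : PowerSeries l) (hx : PowerSeries.constantCoeff x = 0) :
    ∃ y : PowerSeries l, y ^ p - y = x := by
  haveI := ps_adicComplete l
  set I : Ideal (PowerSeries l) := Ideal.span {(X : PowerSeries l)} with hI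
  haveI : HenselianRing (PowerSeries l) I := inferInstance
  have hmem : x ∈ I := by
    rw [hI, Ideal.mem_span_singleton]
    exact X_dvd_iff.mpr hx
  set f : Polynomial (PowerSeries l) :=
    Polynomial.X ^ p - (Polynomial.X + Polynomial.C x) with hf
  have hmonic : f.Monic := by
    apply Polynomial.monic_X_pow_sub
    calc (Polynomial.X + Polynomial.C x).degree ≤ 1 := by
          apply Polynomial.degree_add_le_of_degree_le
          · exact le_of_eq Polynomial.degree_X
          · exact (Polynomial.degree_C_le).trans (by norm_num)
      _ < (p : WithBot ℕ) := by exact_mod_cast Nat.cast_lt.mpr hp.one_lt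
  have heval : f.eval 0 ∈ I := by
    simp only [hf, Polynomial.eval_sub, Polynomial.eval_pow, Polynomial.eval_X,
      Polynomial.eval_add, Polynomial.eval_C, zero_pow hp.ne_zero, zero_add, zero_sub]
    exact I.neg_mem hmem
  have hderiv : IsUnit (Ideal.Quotient.mk I (f.derivative.eval 0)) := by
    have : f.derivative = Polynomial.C (p : PowerSeries l) * Polynomial.X ^ (p - 1) - 1 := by
      simp [hf, Polynomial.derivative_X_pow]
    rw [this]
    have hp0 : (p : PowerSeries l) = 0 := by
      rw [← map_natCast (PowerSeries.C (R := l)) p, CharP.cast_eq_zero l p, map_zero]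
    rw [Polynomial.eval_sub, Polynomial.eval_mul, Polynomial.eval_C, Polynomial.eval_one,
      hp0, zero_mul, zero_sub, map_neg, map_one]
    exact (isUnit_one (M := (PowerSeries l) ⧸ I)).neg
  obtain ⟨a, ha, -⟩ := HenselianRing.is_henselian f hmonic 0 heval hderiv
  refine ⟨a, ?_⟩
  have := ha
  simp only [Polynomial.IsRoot, hf, Polynomial.eval_sub, Polynomial.eval_pow,
    Polynomial.eval_X, Polynomial.eval_add, Polynomial.eval_C] at this
  linear_combination this

lemma mem_range_wp (p : ℕ) (hp : p.Prime) (l : Type) [Field l] [CharP l p]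
    {x : LaurentSeries l} (hx : x ∈ pid l 1) : x ∈ (wp p l hp).range := by
  set g : PowerSeries l := PowerSeries.mk fun n => x.coeff n with hgdef
  have hg : (g : LaurentSeries l) = x := by
    ext m
    rw [PowerSeries.coeff_coe]
    split
    · exact (hx m (by omega)).symm
    · rw [hgdef, PowerSeries.coeff_mk]
      congr 1
      omega
  have hg0 : PowerSeries.constantCoeff g = 0 := by
    rw [hgdef, ← PowerSeries.coeff_zero_eq_constantCoeff_apply, PowerSeries.coeff_mk]
    exact hx 0 (by omega)
  obtain ⟨y, hy⟩ := AS_ps p hp l g hg0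
  refine ⟨(y : LaurentSeries l), ?_⟩
  show (y : LaurentSeries l) ^ p - (y : LaurentSeries l) = x
  rw [← PowerSeries.coe_pow, ← PowerSeries.coe_sub, hy, hg]

lemma pid_mul {l : Type} [Field l] {r t : ℤ} {a b : LaurentSeries l}
    (ha : a ∈ pid l r) (hb : b ∈ pid l t) : a * b ∈ pid l (r + t) := by
  intro n hn
  rw [HahnSeries.coeff_mul]
  apply Finset.sum_eq_zero
  rintro ⟨i, j⟩ hij
  rw [Finset.mem_addAntidiagonal] at hij
  obtain ⟨-, -, hijn⟩ := hij
  by_cases h : i < r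
  · rw [ha i h, zero_mul]
  · rw [hb j (by omega), mul_zero]

lemma pid_pow {l : Type} [Field l] {a : LaurentSeries l} (ha : a ∈ pid l 1) (k : ℕ) :
    a ^ k ∈ pid l (k : ℤ) := by
  induction k with
  | zero =>
      intro n hn
      rw [pow_zero, HahnSeries.coeff_one, if_neg (by omega)]
  | succ k ih =>
      have h2 := pid_mul ih ha
      rw [← pow_succ] at h2
      have hcast : ((k + 1 : ℕ) : ℤ) = (k : ℤ) + 1 := by push_cast; ring
      rw [hcast]
      exact h2

lemma descent (p : ℕ) (hp : p.Prime) (l : Type) [Field l] [CharP l p]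
    {y : LaurentSeries l} {c : l} (h : y ^ p - y = HahnSeries.C c) :
    ∃ a : l, a ^ p - a = c := by
  haveI : CharP (LaurentSeries l) p :=
    charP_of_injective_ringHom (HahnSeries.C_injective (Γ := ℤ) (R := l)) p
  haveI := Fact.mk hp
  -- first: y ∈ pid l 0
  have hy0 : y ∈ pid l 0 := by
    by_contra hc
    simp only [pid, AddSubgroup.mem_mk, AddSubmonoid.mem_mk, AddSubsemigroup.mem_mk, Set.mem_setOf_eq, not_forall] at hc
    obtain ⟨m, hm, hne⟩ := hc
    have hyne : y ≠ 0 := by rintro rfl; simp at hne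
    have hd : y.order ≤ m := HahnSeries.order_le_of_coeff_ne_zero hne
    have hdneg : y.order < 0 := lt_of_le_of_lt hd hm
    have hppow : (y ^ p).order = p • y.order := HahnSeries.order_pow y p
    have hlt : (p : ℤ) * y.order < y.order := by
      have : 2 ≤ (p : ℤ) := by exact_mod_cast hp.two_le
      nlinarith
    have hcoeff : (y ^ p - y).coeff ((p : ℤ) * y.order) ≠ 0 := by
      rw [HahnSeries.coeff_sub]
      have h1 : y.coeff ((p : ℤ) * y.order) = 0 :=
        HahnSeries.coeff_eq_zero_of_lt_order (by rw [HahnSeries.order_of_ne hyne] at hlt ⊢; exact_mod_cast hlt)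
      rw [h1, sub_zero]
      have h2 : (y ^ p).coeff ((y ^ p).order) ≠ 0 :=
        HahnSeries.coeff_order_eq_zero.not.2 (pow_ne_zero p hyne)
      have : (y ^ p).order = (p : ℤ) * y.order := by
        rw [hppow]; push_cast [nsmul_eq_mul]; ring
      rwa [this] at h2
    rw [h] at hcoeff
    apply hcoeff
    rw [HahnSeries.C_apply, HahnSeries.coeff_single_of_ne]
    omega
  set a := y.coeff 0 with hadef
  set z := y - HahnSeries.C a with hzdef
  have hz1 : z ∈ pid l 1 := by
    intro n hn
    rw [hzdef, HahnSeries.coeff_sub, HahnSeries.C_apply]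
    rcases lt_or_eq_of_le (show n ≤ 0 by omega) with hn0 | rfl
    · rw [hy0 n hn0, HahnSeries.coeff_single_of_ne (by omega), sub_zero]
    · rw [HahnSeries.coeff_single_same, hadef, sub_self]
  have hzz : z ^ p - z ∈ pid l 1 := by
    apply AddSubgroup.sub_mem
    · exact fun n hn => pid_pow hz1 p n (by have := hp.two_le; omega)
    · exact hz1
  have key : HahnSeries.C (c - (a ^ p - a)) = z ^ p - z := by
    have hy : y = HahnSeries.C a + z := by rw [hzdef]; ring
    rw [hy, add_pow_char] at h
    rw [map_sub, map_sub, map_pow]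
    linear_combination -h
  refine ⟨a, ?_⟩
  have h0 := hzz 0 (by omega)
  rw [← key, HahnSeries.C_apply, HahnSeries.coeff_single_same] at h0
  linear_combination -h0

noncomputable def asl (p : ℕ) (hp : p.Prime) (l : Type) [Field l] [CharP l p] : l →+ l where
  toFun a := a ^ p - a
  map_zero' := by simp [zero_pow hp.ne_zero]
  map_add' := by
    intro x y
    haveI := Fact.mk hp
    show (x + y) ^ p - (x + y) = (x ^ p - x) + (y ^ p - y)
    rw [add_pow_char]
    ring

lemma card_asl_ker (p : ℕ) (hp : p.Prime) (l : Type) [Field l] [Fintype l] [CharP l p] :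
    Nat.card (asl p hp l).ker = p := by
  haveI := Fact.mk hp
  haveI : DecidableEq l := Classical.decEq l
  apply le_antisymm
  · set P : Polynomial l := Polynomial.X ^ p - Polynomial.X with hP
    have hPm : P.Monic := Polynomial.monic_X_pow_sub
      (by rw [Polynomial.degree_X]; exact_mod_cast hp.one_lt)
    have hroots : ∀ a : l, a ∈ (asl p hp l).ker → a ∈ P.roots.toFinset := by
      intro a ha
      rw [Multiset.mem_toFinset, Polynomial.mem_roots hPm.ne_zero]
      simp only [Polynomial.IsRoot, hP, Polynomial.eval_sub, Polynomial.eval_pow,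
        Polynomial.eval_X]
      exact ha
    have hinj : Function.Injective
        (fun a : (asl p hp l).ker => (⟨a.1, hroots a.1 a.2⟩ : P.roots.toFinset)) := by
      intro a b hab
      rw [Subtype.mk_eq_mk] at hab
      exact Subtype.ext hab
    calc Nat.card (asl p hp l).ker ≤ Nat.card P.roots.toFinset :=
          Nat.card_le_card_of_injective _ hinj
      _ = P.roots.toFinset.card := Nat.card_eq_finsetCard _
      _ ≤ Multiset.card P.roots := Multiset.toFinset_card_le _
      _ ≤ P.natDegree := Polynomial.card_roots' P
      _ = p := by
          rw [hP, Polynomial.natDegree_sub_eq_left_of_natDegree_lt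
            (by rw [Polynomial.natDegree_X_pow, Polynomial.natDegree_X]; exact hp.one_lt),
            Polynomial.natDegree_X_pow]
  · have hmem : ∀ b : ZMod p, (ZMod.castHom (dvd_refl p) l) b ∈ (asl p hp l).ker := by
      intro b
      rw [AddMonoidHom.mem_ker]
      show (ZMod.castHom (dvd_refl p) l) b ^ p - (ZMod.castHom (dvd_refl p) l) b = 0
      rw [← map_pow, ZMod.pow_card b, sub_self]
    have hinj : Function.Injective
        (fun b : ZMod p => (⟨_, hmem b⟩ : (asl p hp l).ker)) := by
      intro a b hab
      rw [Subtype.mk_eq_mk] at hab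
      exact (ZMod.castHom (dvd_refl p) l).injective hab
    have := Nat.card_le_card_of_injective _ hinj
    rwa [Nat.card_zmod] at this

/-- In `L = l((s))` of characteristic `p`, the image of `𝔭_L^r` in `L⁺/℘(L⁺)` is
trivial for every `r > 0`, and the image of `𝔬_L` is isomorphic to `𝔽_p`. -/
theorem stmt_17 (p : ℕ) (hp : p.Prime) (l : Type) [Field l] [Fintype l] [CharP l p] :
    (∀ r : ℤ, 0 < r →
      (pid l r).map (QuotientAddGroup.mk' (wp p l hp).range) = ⊥) ∧
    Nonempty (↥((pid l 0).map (QuotientAddGroup.mk' (wp p l hp).range)) ≃+ ZMod p) := by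
  haveI := Fact.mk hp
  haveI : CharP (LaurentSeries l) p :=
    charP_of_injective_ringHom (HahnSeries.C_injective (Γ := ℤ) (R := l)) p
  set π := QuotientAddGroup.mk' (wp p l hp).range with hπ
  have hpid_le : ∀ r : ℤ, 0 < r → (pid l r : AddSubgroup (LaurentSeries l)) ≤
      (wp p l hp).range := fun r hr x hx =>
    mem_range_wp p hp l (fun n hn => hx n (by omega))
  constructor
  · intro r hr
    rw [AddSubgroup.map_eq_bot_iff, hπ, QuotientAddGroup.ker_mk']
    exact hpid_le r hr
  · have hCmem : ∀ c : l, HahnSeries.C c ∈ pid l 0 := by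
      intro c n hn
      rw [HahnSeries.C_apply, HahnSeries.coeff_single_of_ne (by omega)]
    set G := (pid l 0).map π with hG
    set ψ : l →+ G :=
      { toFun := fun c => ⟨π (HahnSeries.C c),
          AddSubgroup.mem_map.mpr ⟨HahnSeries.C c, hCmem c, rfl⟩⟩
        map_zero' := Subtype.ext (by show π (HahnSeries.C 0) = 0; rw [map_zero, map_zero])
        map_add' := fun c d => Subtype.ext (by
          show π (HahnSeries.C (c + d)) = π (HahnSeries.C c) + π (HahnSeries.C d)
          rw [map_add, map_add]) } with hψ
    have hzero : ∀ z : LaurentSeries l, z ∈ (wp p l hp).range → π z = 0 := by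
      intro z hz
      exact AddMonoidHom.mem_ker.mp (by rw [hπ, QuotientAddGroup.ker_mk']; exact hz)
    have hsurj : Function.Surjective ψ := by
      rintro ⟨g, hg⟩
      obtain ⟨x, hx, rfl⟩ := AddSubgroup.mem_map.mp hg
      refine ⟨x.coeff 0, Subtype.ext ?_⟩
      show π (HahnSeries.C (x.coeff 0)) = π x
      have hdiff : π (x - HahnSeries.C (x.coeff 0)) = 0 := by
        apply hzero
        apply mem_range_wp
        intro n hn
        rw [HahnSeries.coeff_sub, HahnSeries.C_apply]
        rcases lt_or_eq_of_le (show n ≤ 0 by omega) with hn0 | rfl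
        · rw [hx n hn0, HahnSeries.coeff_single_of_ne (by omega), sub_zero]
        · rw [HahnSeries.coeff_single_same, sub_self]
      rw [map_sub] at hdiff
      exact (sub_eq_zero.mp hdiff).symm
    have hker : ψ.ker = (asl p hp l).range := by
      ext c
      simp only [AddMonoidHom.mem_ker, AddMonoidHom.mem_range]
      constructor
      · intro hc
        have h0 : π (HahnSeries.C c) = 0 := congrArg Subtype.val hc
        have hmem : HahnSeries.C c ∈ (wp p l hp).range := by
          have := AddMonoidHom.mem_ker.mpr h0
          rwa [hπ, QuotientAddGroup.ker_mk'] at this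
        obtain ⟨y, hy⟩ := hmem
        exact descent p hp l (hy : y ^ p - y = HahnSeries.C c)
      · rintro ⟨a, rfl⟩
        apply Subtype.ext
        show π (HahnSeries.C (a ^ p - a)) = 0
        apply hzero
        exact ⟨HahnSeries.C a, by
          show HahnSeries.C a ^ p - HahnSeries.C a = HahnSeries.C (a ^ p - a)
          rw [map_sub, map_pow]⟩
    have e1 : l ⧸ ψ.ker ≃+ G := QuotientAddGroup.quotientKerEquivOfSurjective ψ hsurj
    have e2 : l ⧸ (asl p hp l).ker ≃+ (asl p hp l).range :=
      QuotientAddGroup.quotientKerEquivRange (asl p hp l)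
    have hq1 : Nat.card l = Nat.card (l ⧸ ψ.ker) * Nat.card ψ.ker :=
      AddSubgroup.card_eq_card_quotient_mul_card_addSubgroup ψ.ker
    have hq2 : Nat.card l = Nat.card (l ⧸ (asl p hp l).ker) * Nat.card (asl p hp l).ker :=
      AddSubgroup.card_eq_card_quotient_mul_card_addSubgroup (asl p hp l).ker
    have hk : Nat.card ψ.ker = Nat.card (l ⧸ (asl p hp l).ker) := by
      rw [hker, Nat.card_congr e2.toEquiv]
    have hpos : 0 < Nat.card ψ.ker := Nat.card_pos
    have hGcard : Nat.card G = p := by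
      have h3 : Nat.card (l ⧸ ψ.ker) * Nat.card ψ.ker
          = Nat.card (asl p hp l).ker * Nat.card ψ.ker := by
        rw [← hq1, hq2, hk]; ring
      have h4 : Nat.card (l ⧸ ψ.ker) = Nat.card (asl p hp l).ker :=
        Nat.eq_of_mul_eq_mul_right hpos h3
      rw [← Nat.card_congr e1.toEquiv, h4, card_asl_ker p hp l]
    have hcyc : IsAddCyclic G := isAddCyclic_of_prime_card hGcard
    exact ⟨(zmodAddCyclicAddEquiv hcyc).symm.trans (ZMod.ringEquivCongr hGcard).toAddEquiv⟩
end
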